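/- arXiv:2301.06586 — 7 statements merged into one kernel-verified Lean document; each statement's English description precedes it below -/
import Mathlib

section
/- Let F be a field whose characteristic is 0 or strictly larger than n. If there exists a rank-r tensor decomposition of the n × n determinant over F, then there exist scalars c_1,…,c_s ∈ F and linear forms ℓ_1,…,ℓ_s in the n² variables x_{i,j}, with s = 2^{n−1} · r, such that the determinant polynomial det_F^n equals Σ_{k=1}^s c_k · ℓ_k^n. In particular, the Waring rank of det_F^n is at most 2^{n−1} times its tensor rank. -/
/-- A rank-`r` tensor decomposition of the `n × n` determinant over `F`. -/
def IsDetDecomposition (F : Type*) [Field F] (n r : ℕ)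
    (v : Fin n → Fin r → Fin n → F) : Prop :=
  ∀ A : Matrix (Fin n) (Fin n) F,
    A.det = ∑ k : Fin r, ∏ i : Fin n, ∑ j : Fin n, v i k j * A i j

/-- The determinant polynomial in the `n²` variables `x_{i,j}`. -/
noncomputable def detPoly (F : Type*) [Field F] (n : ℕ) :
    MvPolynomial (Fin n × Fin n) F :=
  ∑ σ : Equiv.Perm (Fin n),
    ((Equiv.Perm.sign σ : ℤ) : F) • ∏ i : Fin n, MvPolynomial.X (i, σ i)

namespace WaringAux

open Finset MvPolynomial

/-- The sign `±1` associated to a boolean. -/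
def psgn (R : Type*) [Ring R] (b : Bool) : R := if b then 1 else -1

variable {R : Type*} [CommRing R]

lemma sum_fun_eq_sum_perm {M : Type*} [AddCommMonoid M] {n : ℕ}
    (w : (Fin n → Fin n) → M) (h0 : ∀ f, ¬ Function.Bijective f → w f = 0) :
    ∑ f : Fin n → Fin n, w f = ∑ σ : Equiv.Perm (Fin n), w ⇑σ := by
  classical
  rw [← Finset.sum_image (f := w) (s := (Finset.univ : Finset (Equiv.Perm (Fin n))))
      (g := fun σ : Equiv.Perm (Fin n) => ⇑σ)
      (fun a _ b _ h => Equiv.coe_fn_injective h)]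
  refine (Finset.sum_subset (Finset.subset_univ _) ?_).symm
  intro f _ hf
  refine h0 f fun hb => hf ?_
  exact Finset.mem_image.mpr ⟨Equiv.ofBijective f hb, Finset.mem_univ _, rfl⟩

lemma fiber_card_of_bijective {n : ℕ} {g : Fin n → Fin n}
    (hg : Function.Bijective g) (j : Fin n) :
    (Finset.univ.filter fun t => g t = j).card = 1 := by
  obtain ⟨a, ha, hu⟩ := hg.existsUnique j
  rw [Finset.card_eq_one]
  refine ⟨a, ?_⟩
  ext t
  simp only [Finset.mem_filter, Finset.mem_univ, true_and, Finset.mem_singleton]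
  exact ⟨fun h => hu t h, fun h => h ▸ ha⟩

lemma bijective_of_odd_fibers (m : ℕ) (g : Fin (m + 1) → Fin (m + 1))
    (h : ∀ i : Fin m, Odd (Finset.univ.filter fun t => g t = Fin.castSucc i).card) :
    Function.Bijective g := by
  set c : Fin (m + 1) → ℕ := fun j => (Finset.univ.filter fun t => g t = j).card with hcdef
  have htot : ∑ j, c j = m + 1 := by
    rw [← Finset.card_eq_sum_card_fiberwise (fun x _ => Finset.mem_univ (g x))]
    simp
  rw [Fin.sum_univ_castSucc] at htot
  have h1 : ∀ i : Fin m, 1 ≤ c (Fin.castSucc i) := fun i => (h i).pos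
  have hge : m ≤ ∑ i : Fin m, c (Fin.castSucc i) := by
    calc m = ∑ _i : Fin m, 1 := by simp
    _ ≤ _ := Finset.sum_le_sum fun i _ => h1 i
  have heven : Even (∑ i : Fin m, c (Fin.castSucc i)) ↔ Even m := by
    rw [Finset.even_sum_iff_even_card_odd]
    have : (Finset.univ.filter fun i : Fin m => Odd (c (Fin.castSucc i))) = Finset.univ := by
      refine Finset.filter_true_of_mem fun i _ => h i
    rw [this, Finset.card_univ, Fintype.card_fin]
  have hsum : ∑ i : Fin m, c (Fin.castSucc i) = m := by
    rcases Nat.lt_or_ge (∑ i : Fin m, c (Fin.castSucc i)) (m + 1) with hlt | hge'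
    · omega
    · exfalso
      have hEq : ∑ i : Fin m, c (Fin.castSucc i) = m + 1 := by omega
      rw [hEq] at heven
      rw [Nat.even_iff, Nat.even_iff] at heven
      omega
  have hone : ∀ i : Fin m, c (Fin.castSucc i) = 1 := by
    have := (Finset.sum_eq_sum_iff_of_le (f := fun _ : Fin m => 1)
      (g := fun i : Fin m => c (Fin.castSucc i)) (fun i _ => h1 i)).mp
      (by rw [Finset.sum_const, hsum]; simp)
    exact fun i => (this i (Finset.mem_univ i)).symm
  have hlast : c (Fin.last m) = 1 := by omega
  have hall : ∀ j, c j = 1 := by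
    intro j
    induction j using Fin.lastCases with
    | last => exact hlast
    | cast i => exact hone i
  have hsurj : Function.Surjective g := by
    intro j
    have := hall j
    rw [hcdef] at this
    simp only [Finset.card_eq_one] at this
    obtain ⟨a, ha⟩ := this
    have : a ∈ Finset.univ.filter fun t => g t = j := by rw [ha]; exact Finset.mem_singleton_self a
    exact ⟨a, (Finset.mem_filter.mp this).2⟩
  exact Finite.surjective_iff_bijective.mp hsurj

lemma prod_comp_fiber {n : ℕ} (g : Fin n → Fin n) (h : Fin n → R) :
    ∏ t, h (g t) = ∏ j, h j ^ (Finset.univ.filter fun t => g t = j).card := by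
  rw [Finset.prod_comp]
  refine Finset.prod_subset (Finset.subset_univ _) ?_
  intro j _ hj
  have he : (Finset.univ.filter fun t => g t = j) = ∅ := by
    rw [Finset.filter_eq_empty_iff]
    intro t _
    exact fun hgt => hj (Finset.mem_image.mpr ⟨t, Finset.mem_univ _, hgt⟩)
  rw [he, Finset.card_empty, pow_zero]

lemma waring_prod (m : ℕ) (y : Fin (m + 1) → R) :
    ∑ ε : Fin m → Bool, (∏ i, psgn R (ε i)) *
      (∑ j, (Fin.snoc (fun i => psgn R (ε i)) 1 : Fin (m + 1) → R) j * y j) ^ (m + 1)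
    = (2 ^ m * Nat.factorial (m + 1) : ℕ) * ∏ j, y j := by
  set S : (Fin m → Bool) → Fin (m + 1) → R :=
    fun ε => Fin.snoc (fun i => psgn R (ε i)) 1 with hS
  have hpow : ∀ ε : Fin m → Bool,
      (∑ j, S ε j * y j) ^ (m + 1)
      = ∑ g : Fin (m + 1) → Fin (m + 1), ∏ t, (S ε (g t) * y (g t)) :=
    fun ε => Fintype.sum_pow (fun j => S ε j * y j) (m + 1)
  change ∑ ε : Fin m → Bool, (∏ i, psgn R (ε i)) * (∑ j, S ε j * y j) ^ (m + 1) = _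
  simp_rw [hpow, Finset.mul_sum]
  rw [Finset.sum_comm]
  have hterm : ∀ g : Fin (m + 1) → Fin (m + 1), ∀ ε : Fin m → Bool,
      (∏ i, psgn R (ε i)) * ∏ t, (S ε (g t) * y (g t))
      = ((∏ i, psgn R (ε i)) * ∏ t, S ε (g t)) * ∏ t, y (g t) := by
    intro g ε
    rw [Finset.prod_mul_distrib]
    ring
  simp_rw [hterm, ← Finset.sum_mul]
  have hT : ∀ g : Fin (m + 1) → Fin (m + 1),
      (∑ ε : Fin m → Bool, (∏ i, psgn R (ε i)) * ∏ t, S ε (g t))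
      = if Function.Bijective g then (2 ^ m : R) else 0 := by
    intro g
    set c : Fin (m + 1) → ℕ := fun j => (Finset.univ.filter fun t => g t = j).card with hcdef
    have h1 : ∀ ε : Fin m → Bool,
        (∏ i, psgn R (ε i)) * ∏ t, S ε (g t)
        = ∏ i : Fin m, psgn R (ε i) ^ (c (Fin.castSucc i) + 1) := by
      intro ε
      rw [prod_comp_fiber g (S ε)]
      rw [Fin.prod_univ_castSucc]
      simp only [hS, Fin.snoc_castSucc, Fin.snoc_last, one_pow, mul_one]
      rw [← Finset.prod_mul_distrib]
      exact Finset.prod_congr rfl fun i _ => (pow_succ' _ _).symm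
    simp_rw [h1]
    have h2 : ∑ ε : Fin m → Bool, ∏ i : Fin m, psgn R (ε i) ^ (c (Fin.castSucc i) + 1)
        = ∏ i : Fin m, ∑ b : Bool, psgn R b ^ (c (Fin.castSucc i) + 1) :=
      (Fintype.prod_sum fun i b => psgn R b ^ (c (Fin.castSucc i) + 1)).symm
    rw [h2]
    have h3 : ∀ i : Fin m, ∑ b : Bool, psgn R b ^ (c (Fin.castSucc i) + 1)
        = 1 + (-1 : R) ^ (c (Fin.castSucc i) + 1) := by
      intro i
      rw [Fintype.sum_bool]
      simp [psgn]
    simp_rw [h3]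
    by_cases hg : Function.Bijective g
    · rw [if_pos hg]
      have hcg : ∀ i : Fin m, c (Fin.castSucc i) = 1 :=
        fun i => fiber_card_of_bijective hg _
      calc ∏ i : Fin m, (1 + (-1 : R) ^ (c (Fin.castSucc i) + 1))
          = ∏ _i : Fin m, (2 : R) := Finset.prod_congr rfl fun i _ => by rw [hcg]; norm_num
        _ = 2 ^ m := by simp
    · rw [if_neg hg]
      have hex : ∃ i : Fin m, ¬ Odd (c (Fin.castSucc i)) := by
        by_contra hall
        push_neg at hall
        exact hg (bijective_of_odd_fibers m g hall)
      obtain ⟨i, hi⟩ := hex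
      refine Finset.prod_eq_zero (Finset.mem_univ i) ?_
      rw [Nat.not_odd_iff_even] at hi
      rw [(hi.add_one).neg_one_pow]
      ring
  simp_rw [hT]
  rw [sum_fun_eq_sum_perm
    (w := fun g => (if Function.Bijective g then (2 ^ m : R) else 0) * ∏ t, y (g t))
    (fun f hf => by rw [if_neg hf, zero_mul])]
  have hσ : ∀ σ : Equiv.Perm (Fin (m + 1)),
      (if Function.Bijective ⇑σ then (2 ^ m : R) else 0) * ∏ t, y (σ t)
      = (2 ^ m : R) * ∏ j, y j := by
    intro σ
    rw [if_pos σ.bijective, Equiv.prod_comp σ y]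
  simp_rw [hσ]
  rw [Finset.sum_const, Finset.card_univ, Fintype.card_perm, Fintype.card_fin, nsmul_eq_mul]
  push_cast
  ring

end WaringAux

open WaringAux Finset MvPolynomial

lemma detPoly_eq_sum_prod {F : Type*} [Field F] {n r : ℕ}
    (v : Fin n → Fin r → Fin n → F) (hv : IsDetDecomposition F n r v) :
    detPoly F n = ∑ k : Fin r, ∏ i : Fin n, ∑ j : Fin n,
      MvPolynomial.C (v i k j) * MvPolynomial.X (i, j) := by
  classical
  have expand : ∀ k : Fin r,
      (∏ i : Fin n, ∑ j : Fin n,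
        MvPolynomial.C (v i k j) * (MvPolynomial.X (i, j) : MvPolynomial (Fin n × Fin n) F))
      = ∑ f : Fin n → Fin n, MvPolynomial.C (∏ i, v i k (f i)) * ∏ i, MvPolynomial.X (i, f i) := by
    intro k
    rw [Fintype.prod_sum (f := fun i j =>
      MvPolynomial.C (v i k j) * (MvPolynomial.X (i, j) : MvPolynomial (Fin n × Fin n) F))]
    refine Finset.sum_congr rfl fun f _ => ?_
    rw [Finset.prod_mul_distrib, map_prod]
  simp_rw [expand]
  rw [Finset.sum_comm]
  have hAf : ∀ f : Fin n → Fin n,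
      (∑ k : Fin r, MvPolynomial.C (∏ i, v i k (f i)) *
          ∏ i, (MvPolynomial.X (i, f i) : MvPolynomial (Fin n × Fin n) F))
      = MvPolynomial.C (Matrix.det (Matrix.of fun i j => if j = f i then (1 : F) else 0)) *
          ∏ i, MvPolynomial.X (i, f i) := by
    intro f
    rw [← Finset.sum_mul, ← map_sum]
    congr 2
    rw [hv]
    refine (Finset.sum_congr rfl fun k _ => Finset.prod_congr rfl fun i _ => ?_).symm
    simp [Matrix.of_apply]
  simp_rw [hAf]
  have h0 : ∀ f : Fin n → Fin n, ¬ Function.Bijective f →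
      MvPolynomial.C (Matrix.det (Matrix.of fun i j => if j = f i then (1 : F) else 0)) *
        ∏ i, (MvPolynomial.X (i, f i) : MvPolynomial (Fin n × Fin n) F) = 0 := by
    intro f hf
    have hni : ¬ Function.Injective f := fun hinj => hf hinj.bijective_of_finite
    obtain ⟨a, b, hab, hne⟩ := Function.not_injective_iff.mp hni
    have hrow : (Matrix.of fun i j => if j = f i then (1 : F) else 0) a
        = (Matrix.of fun i j => if j = f i then (1 : F) else 0) b := by
      funext j; simp [hab]
    rw [Matrix.det_zero_of_row_eq hne hrow, map_zero, zero_mul]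
  rw [sum_fun_eq_sum_perm
    (w := fun f => MvPolynomial.C
        (Matrix.det (Matrix.of fun i j => if j = f i then (1 : F) else 0)) *
        ∏ i, (MvPolynomial.X (i, f i) : MvPolynomial (Fin n × Fin n) F))
    h0]
  unfold detPoly
  refine Finset.sum_congr rfl fun σ _ => ?_
  rw [MvPolynomial.smul_eq_C_mul]
  congr 2
  have hmat : (Matrix.of fun i j => if j = σ i then (1 : F) else 0) = σ.permMatrix F := by
    ext i j
    simp [Equiv.Perm.permMatrix, PEquiv.toMatrix_apply, Equiv.toPEquiv_apply, eq_comm]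
  rw [hmat, Matrix.det_permutation]

/-- If the `n × n` determinant over a field `F` of characteristic `0` or larger than `n`
has a rank-`r` tensor decomposition, then its Waring rank is at most `2^(n-1) · r`. -/
theorem wrank_det_le_two_pow_mul_trank (F : Type*) [Field F] (n : ℕ) (hn : 0 < n)
    (p : ℕ) [CharP F p] (hp : p = 0 ∨ n < p)
    (r : ℕ) (v : Fin n → Fin r → Fin n → F) (hv : IsDetDecomposition F n r v) :
    ∃ (c : Fin (2 ^ (n - 1) * r) → F)
      (ℓ : Fin (2 ^ (n - 1) * r) → MvPolynomial (Fin n × Fin n) F),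
      (∀ k, (ℓ k).IsHomogeneous 1) ∧
        detPoly F n = ∑ k, c k • (ℓ k) ^ n := by
  classical
  obtain ⟨m, rfl⟩ : ∃ m, n = m + 1 := ⟨n - 1, (Nat.succ_pred_eq_of_pos hn).symm⟩
  set N : ℕ := 2 ^ m * Nat.factorial (m + 1) with hNdef
  -- N is invertible in F
  have hN : ((N : ℕ) : F) ≠ 0 := by
    rcases hp with hp0 | hplt
    · subst hp0
      haveI : CharZero F := CharP.charP_to_charZero F
      exact Nat.cast_ne_zero.mpr (by positivity)
    · have hpp : Nat.Prime p := (CharP.char_is_prime_or_zero F p).resolve_right (by omega)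
      intro h0
      rw [CharP.cast_eq_zero_iff F p] at h0
      rcases (Nat.Prime.dvd_mul hpp).mp h0 with hd | hd
      · have h2 : p ∣ 2 := hpp.dvd_of_dvd_pow hd
        have hp2 : p ≤ 2 := Nat.le_of_dvd (by norm_num) h2
        have h2p := hpp.two_le
        have hm : m = 0 := by omega
        rw [hm, pow_zero, Nat.dvd_one] at hd
        omega
      · have := (Nat.Prime.dvd_factorial hpp).mp hd
        omega
  set R := MvPolynomial (Fin (m + 1) × Fin (m + 1)) F with hR
  set L : Fin (m + 1) → Fin r → R :=
    fun i k => ∑ j : Fin (m + 1), MvPolynomial.C (v i k j) * MvPolynomial.X (i, j) with hL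
  set Sf : (Fin m → Bool) → Fin (m + 1) → F :=
    fun ε => Fin.snoc (fun i => psgn F (ε i)) 1 with hSf
  -- the linear forms
  set ℓ' : (Fin m → Bool) → Fin r → R :=
    fun ε k => ∑ j : Fin (m + 1), MvPolynomial.C (Sf ε j) * L j k with hℓ'
  have hCpsgn : ∀ b : Bool, (MvPolynomial.C (psgn F b) : R) = psgn R b := by
    intro b; cases b <;> simp [psgn]
  have hCsnoc : ∀ (ε : Fin m → Bool) (j : Fin (m + 1)),
      (MvPolynomial.C (Sf ε j) : R) = (Fin.snoc (fun i => psgn R (ε i)) 1 : Fin (m + 1) → R) j := by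
    intro ε j
    have : (MvPolynomial.C (Sf ε j) : R)
        = ((MvPolynomial.C : F →+* R) ∘ Fin.snoc (fun i => psgn F (ε i)) 1) j := rfl
    rw [this, Fin.comp_snoc]
    induction j using Fin.lastCases with
    | last => simp
    | cast i => simp [Fin.snoc_castSucc, hCpsgn]
  -- waring decomposition of each product
  have hprod : ∀ k : Fin r, ∏ i, L i k
      = ∑ ε : Fin m → Bool,
          (((N : ℕ) : F)⁻¹ * ∏ i, psgn F (ε i)) • (ℓ' ε k) ^ (m + 1) := by
    intro k
    have hw := waring_prod (R := R) m (fun i => L i k)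
    have hℓeq : ∀ ε : Fin m → Bool,
        (∑ j, (Fin.snoc (fun i => psgn R (ε i)) 1 : Fin (m + 1) → R) j * L j k) = ℓ' ε k := by
      intro ε
      refine (Finset.sum_congr rfl fun j _ => ?_).symm
      rw [hCsnoc]
    have hpr : ∀ ε : Fin m → Bool,
        (∏ i, psgn R (ε i)) = MvPolynomial.C (∏ i, psgn F (ε i)) := by
      intro ε
      rw [map_prod]
      exact Finset.prod_congr rfl fun i _ => (hCpsgn (ε i)).symm
    simp_rw [hℓeq, hpr] at hw
    have hNR : ((N : ℕ) : R) = MvPolynomial.C ((N : ℕ) : F) := by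
      rw [map_natCast]
    rw [hNR] at hw
    have := congrArg (fun q => MvPolynomial.C (((N : ℕ) : F)⁻¹) * q) hw
    simp only [Finset.mul_sum, ← mul_assoc, ← map_mul, inv_mul_cancel₀ hN, map_one, one_mul]
      at this
    rw [← this]
    refine Finset.sum_congr rfl fun ε _ => ?_
    rw [MvPolynomial.smul_eq_C_mul, map_mul, mul_assoc]
  -- index juggling
  have hcard : Fintype.card ((Fin m → Bool) × Fin r) = 2 ^ m * r := by
    rw [Fintype.card_prod, Fintype.card_fun, Fintype.card_bool, Fintype.card_fin,
      Fintype.card_fin]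
  set e : Fin (2 ^ m * r) ≃ (Fin m → Bool) × Fin r :=
    (Fintype.equivFinOfCardEq hcard).symm with he
  refine ⟨fun k => ((N : ℕ) : F)⁻¹ * ∏ i, psgn F ((e k).1 i),
    fun k => ℓ' (e k).1 (e k).2, ?_, ?_⟩
  · intro k
    refine MvPolynomial.IsHomogeneous.sum _ _ _ fun j _ => ?_
    refine MvPolynomial.IsHomogeneous.C_mul ?_ _
    exact MvPolynomial.IsHomogeneous.sum _ _ _ fun j' _ =>
      MvPolynomial.isHomogeneous_C_mul_X _ _
  · rw [detPoly_eq_sum_prod v hv]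
    change ∑ k : Fin r, ∏ i, L i k = _
    simp_rw [hprod]
    rw [Finset.sum_comm]
    have hswap : (∑ y : Fin m → Bool, ∑ x : Fin r,
        (((N : ℕ) : F)⁻¹ * ∏ i, psgn F (y i)) • (ℓ' y x) ^ (m + 1))
        = ∑ q : (Fin m → Bool) × Fin r,
        (((N : ℕ) : F)⁻¹ * ∏ i, psgn F (q.1 i)) • (ℓ' q.1 q.2) ^ (m + 1) :=
      Eq.symm (Fintype.sum_prod_type' (f := fun y x =>
        (((N : ℕ) : F)⁻¹ * ∏ i, psgn F (y i)) • (ℓ' y x) ^ (m + 1)))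
    rw [hswap]
    exact (Fintype.sum_equiv e _ _ fun k => rfl).symm
end

section
/- Let F be a field of characteristic p > 0, let n be a positive integer, and let A be an n × n matrix over F. Then det(A) = Σ_{P ∈ PP(n), |P| ≤ p−1} sgn(P) · |P|! · Π_{i=1}^n t_i(P, A), where for each i the factor t_i(P, A) equals Σ_{j : j ∼_P i, j ≠ i} a_{i,j} if i ∼_P i, and equals a_{i,i} + Σ_{j : j ∼_P j} a_{i,j} if i is not related to itself by ∼_P. -/
/-- `i ∼_P j`: some part of the partial partition `P` contains both `i` and `j`. -/
def PPrel {n : ℕ} (P : Finset (Finset (Fin n))) (i j : Fin n) : Prop :=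
  ∃ S ∈ P, i ∈ S ∧ j ∈ S

/-- A partial partition of `[n]`: a set of pairwise disjoint nonempty subsets of `[n]`. -/
def IsPartialPartition {n : ℕ} (P : Finset (Finset (Fin n))) : Prop :=
  (∀ S ∈ P, S.Nonempty) ∧ ∀ S ∈ P, ∀ T ∈ P, S ≠ T → Disjoint S T

open Finset
open scoped Classical

namespace DetPP

variable {n : ℕ} {F : Type*} [Field F]

noncomputable def Jset (P : Finset (Finset (Fin n))) (i : Fin n) : Finset (Fin n) :=
  if PPrel P i i then Finset.univ.filter (fun j => PPrel P j i ∧ j ≠ i)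
  else insert i (Finset.univ.filter (fun j => PPrel P j j))

noncomputable def wt (F : Type*) [Field F] (P : Finset (Finset (Fin n))) : F :=
  (∏ S ∈ P, (-1 : F) ^ (S.card + 1)) * (P.card.factorial : F)

lemma part_unique {P : Finset (Finset (Fin n))} (hP : IsPartialPartition P)
    {S T : Finset (Fin n)} (hS : S ∈ P) (hT : T ∈ P) {i : Fin n}
    (hi : i ∈ S) (hi' : i ∈ T) : S = T := by
  by_contra hne
  exact (Finset.disjoint_left.1 (hP.2 S hS T hT hne) hi) hi'

lemma compat_covered {P : Finset (Finset (Fin n))} {g : Fin n → Fin n}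
    (hc : ∀ i, g i ∈ Jset P i) {i : Fin n} (hi : PPrel P i i) :
    PPrel P (g i) i ∧ g i ≠ i := by
  have := hc i
  rw [Jset, if_pos hi, Finset.mem_filter] at this
  exact this.2

lemma compat_uncovered {P : Finset (Finset (Fin n))} {g : Fin n → Fin n}
    (hc : ∀ i, g i ∈ Jset P i) {i : Fin n} (hi : ¬ PPrel P i i) :
    g i = i ∨ PPrel P (g i) (g i) := by
  have := hc i
  rw [Jset, if_neg hi, Finset.mem_insert] at this
  rcases this with h | h
  · exact Or.inl h
  · exact Or.inr (Finset.mem_filter.1 h).2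

lemma mem_Jset_covered {P : Finset (Finset (Fin n))} {i j : Fin n} (hi : PPrel P i i)
    (h1 : PPrel P j i) (h2 : j ≠ i) : j ∈ Jset P i := by
  rw [Jset, if_pos hi, Finset.mem_filter]
  exact ⟨Finset.mem_univ _, h1, h2⟩

lemma mem_Jset_uncovered {P : Finset (Finset (Fin n))} {i j : Fin n} (hi : ¬ PPrel P i i)
    (h1 : j = i ∨ PPrel P j j) : j ∈ Jset P i := by
  rw [Jset, if_neg hi, Finset.mem_insert]
  rcases h1 with h | h
  · exact Or.inl h
  · exact Or.inr (Finset.mem_filter.2 ⟨Finset.mem_univ _, h⟩)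

lemma compat_part {P : Finset (Finset (Fin n))} (hP : IsPartialPartition P)
    {g : Fin n → Fin n} (hc : ∀ i, g i ∈ Jset P i) {S : Finset (Fin n)} (hS : S ∈ P)
    {i : Fin n} (hi : i ∈ S) : g i ∈ S ∧ g i ≠ i := by
  obtain ⟨⟨T, hT, h1, h2⟩, hne⟩ := compat_covered hc ⟨S, hS, hi, hi⟩
  exact ⟨(part_unique hP hT hS h2 hi) ▸ h1, hne⟩

section Nonbij

variable {g : Fin n → Fin n} {x : Fin n}

/-- The toggle involution used for non-surjective `g` with `x` not in the range. -/
noncomputable def toggle (g : Fin n → Fin n) (x : Fin n) (P : Finset (Finset (Fin n))) :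
    Finset (Finset (Fin n)) :=
  if PPrel P x x then P.image (fun S => S.erase x)
  else P.image (fun S => if g x ∈ S then insert x S else S)

variable {P : Finset (Finset (Fin n))} (hP : IsPartialPartition P)
  (hc : ∀ i, g i ∈ Jset P i) (hx : ∀ y, g y ≠ x)

include hP hc hx

section Covered

variable (hcov : PPrel P x x)
include hcov

lemma cov_injOn : ∀ S ∈ P, ∀ T ∈ P, S.erase x = T.erase x → S = T := by
  intro S hS T hT hST
  by_contra hne
  have hdisj := hP.2 S hS T hT hne
  -- S = {x}
  have hSx : S = {x} := by
    apply Finset.eq_singleton_iff_nonempty_unique_mem.2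
    refine ⟨hP.1 S hS, fun y hy => ?_⟩
    by_contra hyx
    have : y ∈ T := (Finset.mem_of_mem_erase
      (hST ▸ Finset.mem_erase.2 ⟨hyx, hy⟩))
    exact (Finset.disjoint_left.1 hdisj hy) this
  have := compat_part hP hc hS (hSx ▸ Finset.mem_singleton_self x)
  rw [hSx] at this
  exact this.2 (Finset.mem_singleton.1 this.1)

lemma cov_gx_mem : ∀ S ∈ P, x ∈ S → g x ∈ S.erase x := by
  intro S hS hxS
  obtain ⟨h1, h2⟩ := compat_part hP hc hS hxS
  exact Finset.mem_erase.2 ⟨h2, h1⟩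

lemma cov_isPP : IsPartialPartition (P.image (fun S => S.erase x)) := by
  constructor
  · intro T hT
    obtain ⟨S, hS, rfl⟩ := Finset.mem_image.1 hT
    by_cases hxS : x ∈ S
    · exact ⟨g x, cov_gx_mem hP hc hx hcov S hS hxS⟩
    · rw [Finset.erase_eq_self.2 hxS]
      exact hP.1 S hS
  · intro T hT T' hT' hne
    obtain ⟨S, hS, rfl⟩ := Finset.mem_image.1 hT
    obtain ⟨S', hS', rfl⟩ := Finset.mem_image.1 hT'
    have : S ≠ S' := fun h => hne (by rw [h])
    exact Finset.disjoint_of_subset_left (Finset.erase_subset _ _)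
      (Finset.disjoint_of_subset_right (Finset.erase_subset _ _) (hP.2 S hS S' hS' this))

lemma cov_rel {j k : Fin n} :
    PPrel (P.image (fun S => S.erase x)) j k ↔ (PPrel P j k ∧ j ≠ x ∧ k ≠ x) := by
  constructor
  · rintro ⟨T, hT, hj, hk⟩
    obtain ⟨S, hS, rfl⟩ := Finset.mem_image.1 hT
    exact ⟨⟨S, hS, Finset.mem_of_mem_erase hj, Finset.mem_of_mem_erase hk⟩,
      (Finset.mem_erase.1 hj).1, (Finset.mem_erase.1 hk).1⟩
  · rintro ⟨⟨S, hS, hj, hk⟩, hjx, hkx⟩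
    exact ⟨S.erase x, Finset.mem_image_of_mem _ hS,
      Finset.mem_erase.2 ⟨hjx, hj⟩, Finset.mem_erase.2 ⟨hkx, hk⟩⟩

lemma cov_compat : ∀ i, g i ∈ Jset (P.image (fun S => S.erase x)) i := by
  intro i
  by_cases hix : i = x
  · subst hix
    -- i = x : now uncovered; g i is covered in the new partition
    have hunc : ¬ PPrel (P.image (fun S => S.erase i)) i i := by
      rw [cov_rel hP hc hx hcov]; tauto
    refine mem_Jset_uncovered hunc (Or.inr ?_)
    obtain ⟨S, hS, hxS, _⟩ := id hcov
    have hgx := cov_gx_mem hP hc hx hcov S hS hxS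
    exact ⟨S.erase i, Finset.mem_image_of_mem _ hS, hgx, hgx⟩
  · by_cases hicov : PPrel P i i
    · -- i covered in P, stays covered
      obtain ⟨S, hS, hiS, _⟩ := hicov
      obtain ⟨h1, h2⟩ := compat_part hP hc hS hiS
      have hcov' : PPrel (P.image (fun S => S.erase x)) i i :=
        (cov_rel hP hc hx hcov).2 ⟨⟨S, hS, hiS, hiS⟩, hix, hix⟩
      exact mem_Jset_covered hcov' ((cov_rel hP hc hx hcov).2
        ⟨⟨S, hS, h1, hiS⟩, hx i, hix⟩) h2
    · -- i uncovered in P, stays uncovered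
      have hunc' : ¬ PPrel (P.image (fun S => S.erase x)) i i := by
        rw [cov_rel hP hc hx hcov]; tauto
      refine mem_Jset_uncovered hunc' ?_
      rcases compat_uncovered hc hicov with h | h
      · exact Or.inl h
      · refine Or.inr ((cov_rel hP hc hx hcov).2 ⟨h, hx i, hx i⟩)

lemma cov_wt : wt F (P.image (fun S => S.erase x)) = - wt F P := by
  have hinj := cov_injOn hP hc hx hcov
  have hcard : (P.image (fun S => S.erase x)).card = P.card :=
    Finset.card_image_of_injOn (fun S hS T hT => hinj S hS T hT)
  unfold wt
  rw [hcard, Finset.prod_image (fun S hS T hT => hinj S hS T hT)]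
  have hpt : ∀ S ∈ P, ((-1 : F) ^ ((S.erase x).card + 1))
      = (if x ∈ S then (-1 : F) else 1) * (-1 : F) ^ (S.card + 1) := by
    intro S hS
    by_cases hxS : x ∈ S
    · rw [if_pos hxS, Finset.card_erase_of_mem hxS]
      obtain ⟨y, hy⟩ := hP.1 S hS
      have : 1 ≤ S.card := Finset.card_pos.2 ⟨y, hy⟩
      have h1 : S.card - 1 + 1 = S.card := Nat.succ_pred_eq_of_pos this
      rw [h1, pow_succ]
      ring
    · rw [if_neg hxS, Finset.erase_eq_self.2 hxS, one_mul]
  rw [Finset.prod_congr rfl hpt, Finset.prod_mul_distrib]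
  rw [Finset.prod_ite_one P (fun S => x ∈ S)
    (fun S hS T hT hxS hxT => part_unique hP hS hT hxS hxT) (-1 : F)]
  obtain ⟨S, hS, hxS, _⟩ := hcov
  rw [if_pos ⟨S, hS, hxS⟩]
  ring

end Covered


section Uncovered

variable (hunc : ¬ PPrel P x x)
include hunc

lemma unc_x_not_mem : ∀ S ∈ P, x ∉ S := by
  intro S hS hxS
  exact hunc ⟨S, hS, hxS, hxS⟩

lemma unc_exists : ∃ S ∈ P, g x ∈ S := by
  rcases compat_uncovered hc hunc with h | h
  · exact absurd h (hx x)
  · obtain ⟨S, hS, h1, _⟩ := h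
    exact ⟨S, hS, h1⟩

lemma unc_injOn : ∀ S ∈ P, ∀ T ∈ P,
    (if g x ∈ S then insert x S else S) = (if g x ∈ T then insert x T else T) → S = T := by
  intro S hS T hT h
  by_cases h1 : g x ∈ S <;> by_cases h2 : g x ∈ T
  · rw [if_pos h1, if_pos h2] at h
    have e1 : S = (insert x S).erase x :=
      (Finset.erase_insert (unc_x_not_mem hP hc hx hunc S hS)).symm
    have e2 : T = (insert x T).erase x :=
      (Finset.erase_insert (unc_x_not_mem hP hc hx hunc T hT)).symm
    rw [e1, e2, h]
  · rw [if_pos h1, if_neg h2] at h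
    exact absurd (h ▸ Finset.mem_insert_self x S) (unc_x_not_mem hP hc hx hunc T hT)
  · rw [if_neg h1, if_pos h2] at h
    exact absurd (h ▸ Finset.mem_insert_self x T) (unc_x_not_mem hP hc hx hunc S hS)
  · rwa [if_neg h1, if_neg h2] at h

lemma unc_isPP :
    IsPartialPartition (P.image (fun S => if g x ∈ S then insert x S else S)) := by
  constructor
  · intro T hT
    obtain ⟨S, hS, rfl⟩ := Finset.mem_image.1 hT
    by_cases h1 : g x ∈ S
    · rw [if_pos h1]; exact ⟨g x, Finset.mem_insert_of_mem h1⟩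
    · rw [if_neg h1]; exact hP.1 S hS
  · intro T hT T' hT' hne
    obtain ⟨S, hS, rfl⟩ := Finset.mem_image.1 hT
    obtain ⟨S', hS', rfl⟩ := Finset.mem_image.1 hT'
    have hSS : S ≠ S' := fun h => hne (by rw [h])
    have hd := hP.2 S hS S' hS' hSS
    rw [Finset.disjoint_left]
    intro y hy hy'
    by_cases h1 : g x ∈ S <;> by_cases h2 : g x ∈ S'
    · exact (Finset.disjoint_left.1 hd h1) h2
    · rw [if_pos h1] at hy; rw [if_neg h2] at hy'
      rcases Finset.mem_insert.1 hy with rfl | hy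
      · exact (unc_x_not_mem hP hc hx hunc S' hS') hy'
      · exact (Finset.disjoint_left.1 hd hy) hy'
    · rw [if_neg h1] at hy; rw [if_pos h2] at hy'
      rcases Finset.mem_insert.1 hy' with h3 | hy''
      · exact (unc_x_not_mem hP hc hx hunc S hS) (h3 ▸ hy)
      · exact (Finset.disjoint_left.1 hd hy) hy''
    · rw [if_neg h1] at hy; rw [if_neg h2] at hy'
      exact (Finset.disjoint_left.1 hd hy) hy'

lemma unc_rel {j k : Fin n} :
    PPrel (P.image (fun S => if g x ∈ S then insert x S else S)) j k ↔
      (PPrel P j k ∨ (∃ S ∈ P, g x ∈ S ∧ (j = x ∨ j ∈ S) ∧ (k = x ∨ k ∈ S))) := by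
  constructor
  · rintro ⟨T, hT, hj, hk⟩
    obtain ⟨S, hS, rfl⟩ := Finset.mem_image.1 hT
    by_cases h1 : g x ∈ S
    · rw [if_pos h1] at hj hk
      exact Or.inr ⟨S, hS, h1, Finset.mem_insert.1 hj, Finset.mem_insert.1 hk⟩
    · rw [if_neg h1] at hj hk
      exact Or.inl ⟨S, hS, hj, hk⟩
  · rintro (⟨S, hS, hj, hk⟩ | ⟨S, hS, hgS, hj, hk⟩)
    · refine ⟨if g x ∈ S then insert x S else S, Finset.mem_image_of_mem _ hS, ?_, ?_⟩ <;>
        split_ifs with h1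
      · exact Finset.mem_insert_of_mem hj
      · exact hj
      · exact Finset.mem_insert_of_mem hk
      · exact hk
    · refine ⟨insert x S, ?_, ?_, ?_⟩
      · exact Finset.mem_image.2 ⟨S, hS, if_pos hgS⟩
      · rcases hj with rfl | hj
        · exact Finset.mem_insert_self _ _
        · exact Finset.mem_insert_of_mem hj
      · rcases hk with rfl | hk
        · exact Finset.mem_insert_self _ _
        · exact Finset.mem_insert_of_mem hk

lemma unc_compat :
    ∀ i, g i ∈ Jset (P.image (fun S => if g x ∈ S then insert x S else S)) i := by
  intro i
  obtain ⟨S₁, hS₁, hgS₁⟩ := unc_exists hP hc hx hunc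
  by_cases hix : i = x
  · subst hix
    -- i (=x) is now covered, in part insert i S₁; g i ∈ S₁ there, and g i ≠ i
    have hcov' : PPrel (P.image (fun S => if g i ∈ S then insert i S else S)) i i :=
      (unc_rel hP hc hx hunc).2 (Or.inr ⟨S₁, hS₁, hgS₁, Or.inl rfl, Or.inl rfl⟩)
    exact mem_Jset_covered hcov' ((unc_rel hP hc hx hunc).2
      (Or.inr ⟨S₁, hS₁, hgS₁, Or.inr hgS₁, Or.inl rfl⟩)) (hx i)
  · by_cases hicov : PPrel P i i
    · obtain ⟨S, hS, hiS, _⟩ := id hicov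
      obtain ⟨h1, h2⟩ := compat_part hP hc hS hiS
      have hcov' : PPrel (P.image (fun S => if g x ∈ S then insert x S else S)) i i :=
        (unc_rel hP hc hx hunc).2 (Or.inl hicov)
      exact mem_Jset_covered hcov'
        ((unc_rel hP hc hx hunc).2 (Or.inl ⟨S, hS, h1, hiS⟩)) h2
    · have hunc' : ¬ PPrel (P.image (fun S => if g x ∈ S then insert x S else S)) i i := by
        rw [unc_rel hP hc hx hunc]
        rintro (h | ⟨S, hS, hgS, (rfl | hiS), _⟩)
        · exact hicov h
        · exact hix rfl
        · exact hicov ⟨S, hS, hiS, hiS⟩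
      refine mem_Jset_uncovered hunc' ?_
      rcases compat_uncovered hc hicov with h | h
      · exact Or.inl h
      · exact Or.inr ((unc_rel hP hc hx hunc).2 (Or.inl h))

lemma unc_wt : wt F (P.image (fun S => if g x ∈ S then insert x S else S)) = - wt F P := by
  have hinj := unc_injOn hP hc hx hunc
  have hcard : (P.image (fun S => if g x ∈ S then insert x S else S)).card = P.card :=
    Finset.card_image_of_injOn (fun S hS T hT => hinj S hS T hT)
  unfold wt
  rw [hcard, Finset.prod_image (fun S hS T hT => hinj S hS T hT)]
  have hpt : ∀ S ∈ P, ((-1 : F) ^ ((if g x ∈ S then insert x S else S).card + 1))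
      = (if g x ∈ S then (-1 : F) else 1) * (-1 : F) ^ (S.card + 1) := by
    intro S hS
    by_cases h1 : g x ∈ S
    · rw [if_pos h1, if_pos h1,
        Finset.card_insert_of_notMem (unc_x_not_mem hP hc hx hunc S hS), pow_succ]
      ring
    · rw [if_neg h1, if_neg h1, one_mul]
  rw [Finset.prod_congr rfl hpt, Finset.prod_mul_distrib]
  rw [Finset.prod_ite_one P (fun S => g x ∈ S)
    (fun S hS T hT h1 h2 => part_unique hP hS hT h1 h2) (-1 : F)]
  obtain ⟨S₁, hS₁, hgS₁⟩ := unc_exists hP hc hx hunc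
  rw [if_pos ⟨S₁, hS₁, hgS₁⟩]
  ring

end Uncovered

omit hP hc hx in
lemma toggle_pos (hcov : PPrel P x x) : toggle g x P = P.image (fun S => S.erase x) := by
  unfold toggle; rw [if_pos hcov]

omit hP hc hx in
lemma toggle_neg (hunc : ¬ PPrel P x x) :
    toggle g x P = P.image (fun S => if g x ∈ S then insert x S else S) := by
  unfold toggle; rw [if_neg hunc]

lemma toggle_ne : toggle g x P ≠ P := by
  by_cases hcov : PPrel P x x
  · rw [toggle_pos hcov]
    obtain ⟨S, hS, hxS, _⟩ := id hcov
    intro h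
    have hS' : S ∈ P.image (fun S => S.erase x) := h.symm ▸ hS
    obtain ⟨T, _, hTe⟩ := Finset.mem_image.1 hS'
    exact (Finset.notMem_erase x T) (hTe ▸ hxS)
  · rw [toggle_neg hcov]
    obtain ⟨S₁, hS₁, hgS₁⟩ := unc_exists hP hc hx hcov
    intro h
    have : insert x S₁ ∈ P := by
      rw [← h]
      exact Finset.mem_image.2 ⟨S₁, hS₁, if_pos hgS₁⟩
    exact hcov ⟨insert x S₁, this, Finset.mem_insert_self _ _, Finset.mem_insert_self _ _⟩

lemma toggle_toggle : toggle g x (toggle g x P) = P := by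
  by_cases hcov : PPrel P x x
  · -- covered: P' = image erase; x not covered in P'
    have hunc' : ¬ PPrel (P.image (fun S => S.erase x)) x x := by
      rw [cov_rel hP hc hx hcov]; tauto
    rw [toggle_pos hcov, toggle_neg hunc', Finset.image_image]
    obtain ⟨S₀, hS₀, hxS₀, _⟩ := id hcov
    have : ∀ S ∈ P, ((fun S => if g x ∈ S then insert x S else S) ∘ (fun S => S.erase x)) S
        = id S := by
      intro S hS
      simp only [Function.comp_apply, id_eq]
      by_cases hxS : x ∈ S
      · rw [if_pos (cov_gx_mem hP hc hx hcov S hS hxS), Finset.insert_erase hxS]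
      · have hSS₀ : S ≠ S₀ := fun h => hxS (h ▸ hxS₀)
        have hgx : g x ∉ S := by
          intro hgS
          have := cov_gx_mem hP hc hx hcov S₀ hS₀ hxS₀
          exact (Finset.disjoint_left.1 (hP.2 S hS S₀ hS₀ hSS₀) hgS)
            (Finset.mem_of_mem_erase this)
        rw [Finset.erase_eq_self.2 hxS, if_neg hgx]
    rw [Finset.image_congr this, Finset.image_id]
  · -- uncovered: P' = image insert-version; x covered in P'
    obtain ⟨S₁, hS₁, hgS₁⟩ := unc_exists hP hc hx hcov
    have hcov' : PPrel (P.image (fun S => if g x ∈ S then insert x S else S)) x x :=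
      (unc_rel hP hc hx hcov).2 (Or.inr ⟨S₁, hS₁, hgS₁, Or.inl rfl, Or.inl rfl⟩)
    rw [toggle_neg hcov, toggle_pos hcov', Finset.image_image]
    have : ∀ S ∈ P, ((fun S => S.erase x) ∘
        (fun S => if g x ∈ S then insert x S else S)) S = id S := by
      intro S hS
      simp only [Function.comp_apply, id_eq]
      by_cases h1 : g x ∈ S
      · rw [if_pos h1, Finset.erase_insert (unc_x_not_mem hP hc hx hcov S hS)]
      · rw [if_neg h1, Finset.erase_eq_self.2 (unc_x_not_mem hP hc hx hcov S hS)]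
    rw [Finset.image_congr this, Finset.image_id]

lemma toggle_mem_conds : IsPartialPartition (toggle g x P) ∧
    (∀ i, g i ∈ Jset (toggle g x P) i) ∧ wt F (toggle g x P) = - wt F P := by
  by_cases hcov : PPrel P x x
  · rw [toggle_pos hcov]
    exact ⟨cov_isPP hP hc hx hcov, cov_compat hP hc hx hcov, cov_wt hP hc hx hcov⟩
  · rw [toggle_neg hcov]
    exact ⟨unc_isPP hP hc hx hcov, unc_compat hP hc hx hcov, unc_wt hP hc hx hcov⟩

end Nonbij


lemma keysum_nonbij (g : Fin n → Fin n) (hg : ¬ Function.Bijective g) :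
    (∑ P ∈ Finset.univ.filter (fun P : Finset (Finset (Fin n)) =>
        IsPartialPartition P ∧ ∀ i, g i ∈ Jset P i), wt F P) = 0 := by
  have hsurj : ¬ Function.Surjective g := fun h =>
    hg ((Finite.surjective_iff_bijective).1 h)
  rw [Function.Surjective] at hsurj
  push_neg at hsurj
  obtain ⟨x, hx⟩ := hsurj
  refine Finset.sum_involution (fun P _ => toggle g x P) ?_ ?_ ?_ ?_
  · intro P hP0
    obtain ⟨_, hP, hc⟩ := Finset.mem_filter.1 hP0
    rw [(toggle_mem_conds hP hc hx).2.2]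
    ring
  · intro P hP0 _
    obtain ⟨_, hP, hc⟩ := Finset.mem_filter.1 hP0
    exact toggle_ne hP hc hx
  · intro P hP0
    obtain ⟨_, hP, hc⟩ := Finset.mem_filter.1 hP0
    obtain ⟨h1, h2, _⟩ := toggle_mem_conds (F := F) hP hc hx
    exact Finset.mem_filter.2 ⟨Finset.mem_univ _, h1, h2⟩
  · intro P hP0
    obtain ⟨_, hP, hc⟩ := Finset.mem_filter.1 hP0
    exact toggle_toggle hP hc hx

section Bij

/-- Partitions of the support of a permutation into invariant fixed-point-free blocks. -/
def Blocks (σ : Equiv.Perm (Fin n)) (P : Finset (Finset (Fin n))) : Prop :=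
  IsPartialPartition P ∧ (∀ S ∈ P, ∀ i ∈ S, σ i ∈ S ∧ σ i ≠ i) ∧
    (∀ i : Fin n, σ i ≠ i → ∃ S ∈ P, i ∈ S)

variable {σ : Equiv.Perm (Fin n)}

lemma closed_mem_iff {S : Finset (Fin n)} (hcl : ∀ i ∈ S, σ i ∈ S) {i : Fin n}
    (hi : σ i ∈ S) : i ∈ S := by
  have himg : S.image σ = S := Finset.eq_of_subset_of_card_le
    (by intro y hy; obtain ⟨z, hz, rfl⟩ := Finset.mem_image.1 hy; exact hcl z hz)
    (le_of_eq (Finset.card_image_of_injective _ σ.injective).symm)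
  rw [← himg] at hi
  obtain ⟨j, hj, hji⟩ := Finset.mem_image.1 hi
  rwa [← σ.injective hji]

lemma compat_iff_blocks (σ : Equiv.Perm (Fin n)) (P : Finset (Finset (Fin n))) :
    (IsPartialPartition P ∧ ∀ i, (σ : Fin n → Fin n) i ∈ Jset P i) ↔ Blocks σ P := by
  constructor
  · rintro ⟨hP, hc⟩
    refine ⟨hP, ?_, ?_⟩
    · intro S hS i hiS
      exact compat_part hP hc hS hiS
    · intro i hσi
      by_contra hunc
      have hunc' : ¬ PPrel P i i := fun ⟨S, hS, h1, _⟩ => hunc ⟨S, hS, h1⟩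
      rcases compat_uncovered hc hunc' with h | h
      · exact hσi h
      · obtain ⟨T, hT, h1, _⟩ := h
        have hcl : ∀ j ∈ T, σ j ∈ T := fun j hj => (compat_part hP hc hT hj).1
        exact hunc ⟨T, hT, closed_mem_iff hcl h1⟩
  · rintro ⟨hP, hcl, hcov⟩
    refine ⟨hP, fun i => ?_⟩
    by_cases hic : PPrel P i i
    · obtain ⟨S, hS, hiS, _⟩ := id hic
      obtain ⟨h1, h2⟩ := hcl S hS i hiS
      exact mem_Jset_covered hic ⟨S, hS, h1, hiS⟩ h2
    · refine mem_Jset_uncovered hic ?_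
      by_cases hσi : σ i = i
      · exact Or.inl hσi
      · obtain ⟨S, hS, hiS⟩ := hcov i hσi
        exact absurd ⟨S, hS, hiS, hiS⟩ hic

lemma pow_mem_closed {S : Finset (Fin n)} (hcl : ∀ i ∈ S, σ i ∈ S) {x : Fin n}
    (hx : x ∈ S) : ∀ k : ℕ, (σ ^ k) x ∈ S := by
  intro k
  induction k with
  | zero => simpa using hx
  | succ k ih =>
      rw [pow_succ']
      exact hcl _ ih

section CycleFacts

variable {x : Fin n} (hx : σ x ≠ x)
include hx

lemma cyc_x_mem : x ∈ (σ.cycleOf x).support :=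
  Equiv.Perm.mem_support_cycleOf_iff.2 ⟨Equiv.Perm.SameCycle.refl _ _,
    Equiv.Perm.mem_support.2 hx⟩

omit hx in
lemma cyc_closed : ∀ y ∈ (σ.cycleOf x).support, σ y ∈ (σ.cycleOf x).support := by
  intro y hy
  obtain ⟨h1, h2⟩ := Equiv.Perm.mem_support_cycleOf_iff.1 hy
  exact Equiv.Perm.mem_support_cycleOf_iff.2
    ⟨h1.trans ⟨1, by simp⟩, h2⟩

omit hx in
lemma cyc_fpf : ∀ y ∈ (σ.cycleOf x).support, σ y ≠ y := by
  intro y hy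
  exact Equiv.Perm.mem_support.1 (Equiv.Perm.support_cycleOf_le σ x hy)

omit hx in
lemma cyc_sub_closed {S : Finset (Fin n)} (hcl : ∀ i ∈ S, σ i ∈ S) (hxS : x ∈ S) :
    (σ.cycleOf x).support ⊆ S := by
  intro y hy
  obtain ⟨h1, _⟩ := Equiv.Perm.mem_support_cycleOf_iff.1 hy
  obtain ⟨k, _, hk⟩ := h1.exists_pow_eq'
  exact hk ▸ pow_mem_closed hcl hxS k

end CycleFacts

noncomputable def tauOf (σ : Equiv.Perm (Fin n)) (x : Fin n) : Equiv.Perm (Fin n) :=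
  (σ.cycleOf x)⁻¹ * σ

section TauFacts

variable {x : Fin n}

lemma tau_apply_mem {y : Fin n} (hy : y ∈ (σ.cycleOf x).support) : tauOf σ x y = y := by
  have h1 : σ.SameCycle x y := (Equiv.Perm.mem_support_cycleOf_iff.1 hy).1
  show (σ.cycleOf x)⁻¹ (σ y) = y
  rw [Equiv.Perm.inv_eq_iff_eq, Equiv.Perm.cycleOf_apply, if_pos h1]

lemma tau_apply_not_mem {y : Fin n} (hy : y ∉ (σ.cycleOf x).support) :
    tauOf σ x y = σ y := by
  have h2 : σ y ∉ (σ.cycleOf x).support := fun h =>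
    hy (closed_mem_iff (cyc_closed (x := x)) h)
  have h3 : σ.cycleOf x (σ y) = σ y := Equiv.Perm.notMem_support.1 h2
  show (σ.cycleOf x)⁻¹ (σ y) = σ y
  rw [Equiv.Perm.inv_eq_iff_eq, h3]

lemma tau_support :
    (tauOf σ x).support = σ.support \ (σ.cycleOf x).support := by
  ext y
  rw [Equiv.Perm.mem_support, Finset.mem_sdiff, Equiv.Perm.mem_support]
  by_cases hy : y ∈ (σ.cycleOf x).support
  · rw [tau_apply_mem hy]
    simp only [ne_eq, not_true_eq_false, false_iff, not_and, not_not]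
    intro _; exact hy
  · rw [tau_apply_not_mem hy]
    tauto

lemma sigma_factor : σ = σ.cycleOf x * tauOf σ x := by
  rw [tauOf, mul_inv_cancel_left]

lemma sign_factor (hx : σ x ≠ x) :
    Equiv.Perm.sign σ =
      (-1) ^ ((σ.cycleOf x).support.card + 1) * Equiv.Perm.sign (tauOf σ x) := by
  conv_lhs => rw [sigma_factor (σ := σ) (x := x)]
  rw [map_mul, (σ.isCycle_cycleOf hx).sign, pow_succ,
    mul_comm ((-1 : ℤˣ) ^ (σ.cycleOf x).support.card) (-1 : ℤˣ), neg_one_mul]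

end TauFacts

section BlocksOps

variable {x : Fin n} {Q P : Finset (Finset (Fin n))}

lemma blkt_not_mem_c (hQ : Blocks (tauOf σ x) Q) {S : Finset (Fin n)} (hS : S ∈ Q)
    {i : Fin n} (hi : i ∈ S) : i ∉ (σ.cycleOf x).support :=
  fun h => (hQ.2.1 S hS i hi).2 (tau_apply_mem h)

lemma c_not_mem_blkt (hx : σ x ≠ x) (hQ : Blocks (tauOf σ x) Q) :
    (σ.cycleOf x).support ∉ Q :=
  fun h => blkt_not_mem_c hQ h (cyc_x_mem hx) (cyc_x_mem hx)

lemma insert_c_blocks (hx : σ x ≠ x) (hQ : Blocks (tauOf σ x) Q) :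
    Blocks σ (insert (σ.cycleOf x).support Q) := by
  refine ⟨⟨?_, ?_⟩, ?_, ?_⟩
  · intro S hS
    rcases Finset.mem_insert.1 hS with rfl | hS
    · exact ⟨x, cyc_x_mem hx⟩
    · exact hQ.1.1 S hS
  · intro S hS T hT hne
    rcases Finset.mem_insert.1 hS with rfl | hS <;> rcases Finset.mem_insert.1 hT with rfl | hT
    · exact absurd rfl hne
    · exact Finset.disjoint_right.2 (fun {i} hi => blkt_not_mem_c hQ hT hi)
    · exact Finset.disjoint_left.2 (fun {i} hi => blkt_not_mem_c hQ hS hi)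
    · exact hQ.1.2 S hS T hT hne
  · intro S hS i hiS
    rcases Finset.mem_insert.1 hS with rfl | hS
    · exact ⟨cyc_closed i hiS, cyc_fpf i hiS⟩
    · have hic := blkt_not_mem_c hQ hS hiS
      have := hQ.2.1 S hS i hiS
      rwa [tau_apply_not_mem hic] at this
  · intro i hi
    by_cases hic : i ∈ (σ.cycleOf x).support
    · exact ⟨_, Finset.mem_insert_self _ _, hic⟩
    · have : tauOf σ x i ≠ i := by rwa [tau_apply_not_mem hic]
      obtain ⟨S, hS, hiS⟩ := hQ.2.2 i this
      exact ⟨S, Finset.mem_insert_of_mem hS, hiS⟩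

lemma erase_c_blocks (hB : Blocks σ P) (hcP : (σ.cycleOf x).support ∈ P) :
    Blocks (tauOf σ x) (P.erase (σ.cycleOf x).support) := by
  have hmem : ∀ S ∈ P.erase (σ.cycleOf x).support, ∀ i ∈ S,
      i ∉ (σ.cycleOf x).support := by
    intro S hS i hiS hic
    obtain ⟨hne, hSP⟩ := Finset.mem_erase.1 hS
    exact (Finset.disjoint_left.1 (hB.1.2 S hSP _ hcP hne) hiS) hic
  refine ⟨⟨?_, ?_⟩, ?_, ?_⟩
  · exact fun S hS => hB.1.1 S (Finset.mem_of_mem_erase hS)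
  · exact fun S hS T hT hne => hB.1.2 S (Finset.mem_of_mem_erase hS) T
      (Finset.mem_of_mem_erase hT) hne
  · intro S hS i hiS
    have := hB.2.1 S (Finset.mem_of_mem_erase hS) i hiS
    rwa [← tau_apply_not_mem (hmem S hS i hiS)] at this
  · intro i hi
    by_cases hic : i ∈ (σ.cycleOf x).support
    · exact absurd (tau_apply_mem hic) hi
    · rw [tau_apply_not_mem hic] at hi
      obtain ⟨S, hS, hiS⟩ := hB.2.2 i hi
      refine ⟨S, Finset.mem_erase.2 ⟨fun h => hic (h ▸ hiS), hS⟩, hiS⟩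

lemma x_block (hx : σ x ≠ x) (hB : Blocks σ P) : ∃! S, S ∈ P ∧ x ∈ S := by
  obtain ⟨S, hS, hxS⟩ := hB.2.2 x hx
  exact ⟨S, ⟨hS, hxS⟩, fun T ⟨hT, hxT⟩ => part_unique hB.1 hT hS hxT hxS⟩

lemma split_blocks (hx : σ x ≠ x) (hB : Blocks σ P) (hcP : (σ.cycleOf x).support ∉ P)
    {S₀ : Finset (Fin n)} (hS₀ : S₀ ∈ P) (hxS₀ : x ∈ S₀) :
    Blocks (tauOf σ x) (insert (S₀ \ (σ.cycleOf x).support) (P.erase S₀)) := by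
  have hcl₀ : ∀ i ∈ S₀, σ i ∈ S₀ := fun i hi => (hB.2.1 S₀ hS₀ i hi).1
  have hsub : (σ.cycleOf x).support ⊆ S₀ := cyc_sub_closed hcl₀ hxS₀
  have hout : ∀ S ∈ P.erase S₀, ∀ i ∈ S, i ∉ (σ.cycleOf x).support := by
    intro S hS i hiS hic
    obtain ⟨hne, hSP⟩ := Finset.mem_erase.1 hS
    exact (Finset.disjoint_left.1 (hB.1.2 S hSP S₀ hS₀ hne) hiS) (hsub hic)
  refine ⟨⟨?_, ?_⟩, ?_, ?_⟩
  · intro S hS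
    rcases Finset.mem_insert.1 hS with rfl | hS
    · rw [Finset.sdiff_nonempty]
      intro hs
      exact hcP ((Finset.Subset.antisymm hs hsub) ▸ hS₀)
    · exact hB.1.1 S (Finset.mem_of_mem_erase hS)
  · intro S hS T hT hne
    rcases Finset.mem_insert.1 hS with rfl | hS <;> rcases Finset.mem_insert.1 hT with rfl | hT
    · exact absurd rfl hne
    · refine Finset.disjoint_of_subset_left Finset.sdiff_subset ?_
      exact hB.1.2 S₀ hS₀ T (Finset.mem_of_mem_erase hT)
        (fun h => (Finset.mem_erase.1 hT).1 h.symm)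
    · refine Finset.disjoint_of_subset_right Finset.sdiff_subset ?_
      exact hB.1.2 S (Finset.mem_of_mem_erase hS) S₀ hS₀ (Finset.mem_erase.1 hS).1
    · exact hB.1.2 S (Finset.mem_of_mem_erase hS) T (Finset.mem_of_mem_erase hT) hne
  · intro S hS i hiS
    rcases Finset.mem_insert.1 hS with rfl | hS
    · obtain ⟨hiS₀, hic⟩ := Finset.mem_sdiff.1 hiS
      obtain ⟨h1, h2⟩ := hB.2.1 S₀ hS₀ i hiS₀
      have hsc : σ i ∉ (σ.cycleOf x).support :=
        fun h => hic (closed_mem_iff (cyc_closed (x := x)) h)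
      rw [tau_apply_not_mem hic]
      exact ⟨Finset.mem_sdiff.2 ⟨h1, hsc⟩, h2⟩
    · have hic := hout S hS i hiS
      rw [tau_apply_not_mem hic]
      exact hB.2.1 S (Finset.mem_of_mem_erase hS) i hiS
  · intro i hi
    by_cases hic : i ∈ (σ.cycleOf x).support
    · exact absurd (tau_apply_mem hic) hi
    · rw [tau_apply_not_mem hic] at hi
      obtain ⟨S, hS, hiS⟩ := hB.2.2 i hi
      by_cases hSS : S = S₀
      · subst hSS
        exact ⟨S \ (σ.cycleOf x).support, Finset.mem_insert_self _ _,
          Finset.mem_sdiff.2 ⟨hiS, hic⟩⟩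
      · exact ⟨S, Finset.mem_insert_of_mem (Finset.mem_erase.2 ⟨hSS, hS⟩), hiS⟩

lemma sdiff_not_mem_erase (hB : Blocks σ P) {S₀ : Finset (Fin n)} (hS₀ : S₀ ∈ P)
    (hne : (S₀ \ (σ.cycleOf x).support).Nonempty) :
    S₀ \ (σ.cycleOf x).support ∉ P.erase S₀ := by
  intro h
  obtain ⟨hneq, hmem⟩ := Finset.mem_erase.1 h
  obtain ⟨y, hy⟩ := hne
  exact (Finset.disjoint_left.1 (hB.1.2 _ hmem S₀ hS₀ hneq) hy)
    (Finset.mem_sdiff.1 hy).1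

lemma join_blocks (hx : σ x ≠ x) (hQ : Blocks (tauOf σ x) Q) {B : Finset (Fin n)}
    (hBQ : B ∈ Q) :
    Blocks σ (insert (B ∪ (σ.cycleOf x).support) (Q.erase B)) := by
  have hBc : ∀ i ∈ B, i ∉ (σ.cycleOf x).support := fun i hi => blkt_not_mem_c hQ hBQ hi
  refine ⟨⟨?_, ?_⟩, ?_, ?_⟩
  · intro S hS
    rcases Finset.mem_insert.1 hS with rfl | hS
    · exact ⟨x, Finset.mem_union_right _ (cyc_x_mem hx)⟩
    · exact hQ.1.1 S (Finset.mem_of_mem_erase hS)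
  · intro S hS T hT hne
    rcases Finset.mem_insert.1 hS with rfl | hS <;> rcases Finset.mem_insert.1 hT with rfl | hT
    · exact absurd rfl hne
    · rw [Finset.disjoint_union_left]
      exact ⟨hQ.1.2 B hBQ T (Finset.mem_of_mem_erase hT)
          (fun h => (Finset.mem_erase.1 hT).1 h.symm),
        Finset.disjoint_right.2 fun {i} hi => fun hic =>
          blkt_not_mem_c hQ (Finset.mem_of_mem_erase hT) hi hic⟩
    · rw [Finset.disjoint_union_right]
      exact ⟨hQ.1.2 S (Finset.mem_of_mem_erase hS) B hBQ (Finset.mem_erase.1 hS).1,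
        Finset.disjoint_left.2 fun {i} hi => fun hic =>
          blkt_not_mem_c hQ (Finset.mem_of_mem_erase hS) hi hic⟩
    · exact hQ.1.2 S (Finset.mem_of_mem_erase hS) T (Finset.mem_of_mem_erase hT) hne
  · intro S hS i hiS
    rcases Finset.mem_insert.1 hS with rfl | hS
    · rcases Finset.mem_union.1 hiS with hiB | hic
      · have hic := hBc i hiB
        have := hQ.2.1 B hBQ i hiB
        rw [tau_apply_not_mem hic] at this
        exact ⟨Finset.mem_union_left _ this.1, this.2⟩
      · exact ⟨Finset.mem_union_right _ (cyc_closed i hic), cyc_fpf i hic⟩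
    · have hic := blkt_not_mem_c hQ (Finset.mem_of_mem_erase hS) hiS
      have := hQ.2.1 S (Finset.mem_of_mem_erase hS) i hiS
      rwa [tau_apply_not_mem hic] at this
  · intro i hi
    by_cases hic : i ∈ (σ.cycleOf x).support
    · exact ⟨_, Finset.mem_insert_self _ _, Finset.mem_union_right _ hic⟩
    · have : tauOf σ x i ≠ i := by rwa [tau_apply_not_mem hic]
      obtain ⟨S, hS, hiS⟩ := hQ.2.2 i this
      by_cases hSB : S = B
      · subst hSB
        exact ⟨_, Finset.mem_insert_self _ _, Finset.mem_union_left _ hiS⟩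
      · exact ⟨S, Finset.mem_insert_of_mem (Finset.mem_erase.2 ⟨hSB, hS⟩), hiS⟩

lemma join_c_not_mem (hx : σ x ≠ x) (hQ : Blocks (tauOf σ x) Q) {B : Finset (Fin n)}
    (hBQ : B ∈ Q) :
    (σ.cycleOf x).support ∉ insert (B ∪ (σ.cycleOf x).support) (Q.erase B) := by
  intro h
  rcases Finset.mem_insert.1 h with h | h
  · obtain ⟨y, hy⟩ := hQ.1.1 B hBQ
    have : y ∈ (σ.cycleOf x).support := h ▸ Finset.mem_union_left _ hy
    exact blkt_not_mem_c hQ hBQ hy this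
  · exact c_not_mem_blkt hx hQ (Finset.mem_of_mem_erase h)

lemma join_not_mem_erase (hx : σ x ≠ x) (hQ : Blocks (tauOf σ x) Q) {B : Finset (Fin n)} :
    (B ∪ (σ.cycleOf x).support) ∉ Q.erase B := by
  intro h
  exact blkt_not_mem_c hQ (Finset.mem_of_mem_erase h)
    (Finset.mem_union_right _ (cyc_x_mem hx)) (cyc_x_mem hx)

end BlocksOps

noncomputable def xblk (x : Fin n) (P : Finset (Finset (Fin n))) : Finset (Fin n) :=
  (P.filter (fun S => x ∈ S)).sup id

lemma xblk_eq {x : Fin n} {P : Finset (Finset (Fin n))} (hB : Blocks σ P)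
    {S : Finset (Fin n)} (hS : S ∈ P) (hxS : x ∈ S) : xblk x P = S := by
  have : P.filter (fun T => x ∈ T) = {S} := by
    ext T
    rw [Finset.mem_filter, Finset.mem_singleton]
    constructor
    · rintro ⟨hT, hxT⟩
      exact part_unique hB.1 hT hS hxT hxS
    · rintro rfl
      exact ⟨hS, hxS⟩
  rw [xblk, this, Finset.sup_singleton, id]

lemma blocks_empty (σ : Equiv.Perm (Fin n)) (h : σ.support = ∅) :
    Finset.univ.filter (fun P : Finset (Finset (Fin n)) => Blocks σ P) = {∅} := by
  ext P
  simp only [Finset.mem_filter, Finset.mem_univ, true_and, Finset.mem_singleton]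
  constructor
  · rintro ⟨hPP, hcl, _⟩
    by_contra hne
    obtain ⟨S, hS⟩ := Finset.nonempty_iff_ne_empty.2 hne
    obtain ⟨y, hy⟩ := hPP.1 S hS
    have hy2 := (hcl S hS y hy).2
    have : y ∈ σ.support := Equiv.Perm.mem_support.2 hy2
    rw [h] at this
    exact absurd this (Finset.notMem_empty y)
  · rintro rfl
    refine ⟨⟨fun S hS => absurd hS (Finset.notMem_empty S),
      fun S hS => absurd hS (Finset.notMem_empty S)⟩,
      fun S hS => absurd hS (Finset.notMem_empty S), fun i hi => ?_⟩
    have : i ∈ σ.support := Equiv.Perm.mem_support.2 hi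
    rw [h] at this
    exact absurd this (Finset.notMem_empty i)

lemma sum_blocks (F : Type*) [Field F] (σ : Equiv.Perm (Fin n)) :
    (∑ P ∈ Finset.univ.filter (fun P : Finset (Finset (Fin n)) => Blocks σ P), wt F P)
      = ((Equiv.Perm.sign σ : ℤ) : F) := by
  suffices H : ∀ (m : ℕ) (σ : Equiv.Perm (Fin n)), σ.support.card = m →
      (∑ P ∈ Finset.univ.filter (fun P : Finset (Finset (Fin n)) => Blocks σ P), wt F P)
        = ((Equiv.Perm.sign σ : ℤ) : F) from H _ σ rfl
  intro m
  induction m using Nat.strong_induction_on with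
  | _ m IH =>
    intro σ hm
    rcases Nat.eq_zero_or_pos m with rfl | hpos
    · have hsup : σ.support = ∅ := Finset.card_eq_zero.1 hm
      rw [blocks_empty σ hsup, Finset.sum_singleton]
      rw [Equiv.Perm.support_eq_empty_iff.1 hsup]
      simp [wt]
    · obtain ⟨x, hx⟩ : ∃ x, x ∈ σ.support := Finset.card_pos.1 (hm ▸ hpos)
      have hxne : σ x ≠ x := Equiv.Perm.mem_support.1 hx
      set c : Finset (Fin n) := (σ.cycleOf x).support with hc
      set τ : Equiv.Perm (Fin n) := tauOf σ x with hτ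
      have hccard : 0 < c.card := Finset.card_pos.2 ⟨x, cyc_x_mem hxne⟩
      have hτcard : τ.support.card < m := by
        rw [hτ, tau_support, Finset.card_sdiff_of_subset (Equiv.Perm.support_cycleOf_le σ x),
          hm, ← hc]
        omega
      have IHτ := IH _ hτcard τ rfl
      -- split into the two classes
      rw [← Finset.sum_filter_add_sum_filter_not
        (Finset.univ.filter (fun P : Finset (Finset (Fin n)) => Blocks σ P))
        (fun P => c ∈ P) (wt F)]
      have hA : ∑ P ∈ (Finset.univ.filter
            (fun P : Finset (Finset (Fin n)) => Blocks σ P)).filter (fun P => c ∈ P), wt F P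
          = ∑ Q ∈ Finset.univ.filter (fun Q : Finset (Finset (Fin n)) => Blocks τ Q),
              (-1 : F) ^ (c.card + 1) * ((∏ S ∈ Q, (-1 : F) ^ (S.card + 1)) *
                ((Q.card + 1).factorial : F)) := by
        refine Finset.sum_bij' (fun P _ => P.erase c) (fun Q _ => insert c Q) ?_ ?_ ?_ ?_ ?_
        · intro P hP
          obtain ⟨hP1, hcP⟩ := Finset.mem_filter.1 hP
          obtain ⟨_, hB⟩ := Finset.mem_filter.1 hP1
          exact Finset.mem_filter.2 ⟨Finset.mem_univ _, erase_c_blocks hB hcP⟩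
        · intro Q hQ
          obtain ⟨_, hQB⟩ := Finset.mem_filter.1 hQ
          refine Finset.mem_filter.2 ⟨Finset.mem_filter.2 ⟨Finset.mem_univ _,
            insert_c_blocks hxne hQB⟩, Finset.mem_insert_self _ _⟩
        · intro P hP
          obtain ⟨hP1, hcP⟩ := Finset.mem_filter.1 hP
          exact Finset.insert_erase hcP
        · intro Q hQ
          obtain ⟨_, hQB⟩ := Finset.mem_filter.1 hQ
          exact Finset.erase_insert (c_not_mem_blkt hxne hQB)
        · intro P hP
          obtain ⟨hP1, hcP⟩ := Finset.mem_filter.1 hP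
          have hnm : c ∉ P.erase c := Finset.notMem_erase _ _
          conv_lhs => rw [← Finset.insert_erase hcP]
          rw [wt, Finset.prod_insert hnm, Finset.card_insert_of_notMem hnm]
          ring
      have hB' : ∑ P ∈ (Finset.univ.filter
            (fun P : Finset (Finset (Fin n)) => Blocks σ P)).filter (fun P => c ∉ P), wt F P
          = ∑ z ∈ (Finset.univ.filter
              (fun Q : Finset (Finset (Fin n)) => Blocks τ Q)).sigma (fun Q => Q),
              (-1 : F) ^ c.card * ((∏ S ∈ z.1, (-1 : F) ^ (S.card + 1)) *
                (z.1.card.factorial : F)) := by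
        refine Finset.sum_bij'
          (fun P _ => (⟨insert ((xblk x P) \ c) (P.erase (xblk x P)), (xblk x P) \ c⟩ :
            (_ : Finset (Finset (Fin n))) × Finset (Fin n)))
          (fun z _ => insert (z.2 ∪ c) (z.1.erase z.2)) ?_ ?_ ?_ ?_ ?_
        · intro P hP
          obtain ⟨hP1, hcP⟩ := Finset.mem_filter.1 hP
          obtain ⟨_, hB⟩ := Finset.mem_filter.1 hP1
          obtain ⟨S₀, hS₀, hxS₀⟩ := hB.2.2 x hxne
          beta_reduce
          rw [xblk_eq hB hS₀ hxS₀]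
          refine Finset.mem_sigma.2 ⟨Finset.mem_filter.2 ⟨Finset.mem_univ _,
            split_blocks hxne hB hcP hS₀ hxS₀⟩, Finset.mem_insert_self _ _⟩
        · rintro ⟨Q, B⟩ hz
          obtain ⟨hQ, hBQ⟩ := Finset.mem_sigma.1 hz
          obtain ⟨_, hQB⟩ := Finset.mem_filter.1 hQ
          refine Finset.mem_filter.2 ⟨Finset.mem_filter.2 ⟨Finset.mem_univ _,
            join_blocks hxne hQB hBQ⟩, join_c_not_mem hxne hQB hBQ⟩
        · intro P hP
          obtain ⟨hP1, hcP⟩ := Finset.mem_filter.1 hP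
          obtain ⟨_, hB⟩ := Finset.mem_filter.1 hP1
          obtain ⟨S₀, hS₀, hxS₀⟩ := hB.2.2 x hxne
          beta_reduce
          rw [xblk_eq hB hS₀ hxS₀]
          have hsub : c ⊆ S₀ :=
            cyc_sub_closed (fun i hi => (hB.2.1 S₀ hS₀ i hi).1) hxS₀
          have hnonempty : (S₀ \ c).Nonempty := by
            rw [Finset.sdiff_nonempty]
            intro hs
            exact hcP ((Finset.Subset.antisymm hs hsub) ▸ hS₀)
          simp only
          rw [Finset.erase_insert (sdiff_not_mem_erase hB hS₀ hnonempty),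
            Finset.sdiff_union_of_subset hsub, Finset.insert_erase hS₀]
        · rintro ⟨Q, B⟩ hz
          obtain ⟨hQ, hBQ⟩ := Finset.mem_sigma.1 hz
          obtain ⟨_, hQB⟩ := Finset.mem_filter.1 hQ
          have hxBc : x ∈ B ∪ c := Finset.mem_union_right _ (cyc_x_mem hxne)
          have hBc : ∀ i ∈ B, i ∉ c := fun i hi => blkt_not_mem_c hQB hBQ hi
          have h1 : xblk x (insert (B ∪ c) (Q.erase B)) = B ∪ c :=
            xblk_eq (join_blocks hxne hQB hBQ) (Finset.mem_insert_self _ _) hxBc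
          beta_reduce
          simp only [h1]
          have h2 : (B ∪ c) \ c = B := by
            ext i
            simp only [Finset.mem_sdiff, Finset.mem_union]
            constructor
            · rintro ⟨hi | hi, hic⟩
              · exact hi
              · exact absurd hi hic
            · intro hi
              exact ⟨Or.inl hi, hBc i hi⟩
          rw [Finset.erase_insert (join_not_mem_erase hxne hQB), h2,
            Finset.insert_erase hBQ]
        · intro P hP
          obtain ⟨hP1, hcP⟩ := Finset.mem_filter.1 hP
          obtain ⟨_, hB⟩ := Finset.mem_filter.1 hP1
          obtain ⟨S₀, hS₀, hxS₀⟩ := hB.2.2 x hxne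
          beta_reduce
          rw [xblk_eq hB hS₀ hxS₀]
          have hsub : c ⊆ S₀ :=
            cyc_sub_closed (fun i hi => (hB.2.1 S₀ hS₀ i hi).1) hxS₀
          have hnonempty : (S₀ \ c).Nonempty := by
            rw [Finset.sdiff_nonempty]
            intro hs
            exact hcP ((Finset.Subset.antisymm hs hsub) ▸ hS₀)
          have hnm := sdiff_not_mem_erase hB hS₀ hnonempty
          have hPpos : 0 < P.card := Finset.card_pos.2 ⟨S₀, hS₀⟩
          have hcsub : c.card ≤ S₀.card := Finset.card_le_card hsub
          simp only
          rw [wt, Finset.prod_insert hnm, Finset.card_insert_of_notMem hnm,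
            Finset.card_erase_of_mem hS₀, Finset.card_sdiff_of_subset hsub]
          rw [← Finset.mul_prod_erase P _ hS₀]
          have hfact : P.card - 1 + 1 = P.card := Nat.succ_pred_eq_of_pos hPpos
          rw [hfact]
          have hpow : ((-1 : F) ^ (S₀.card + 1))
              = (-1 : F) ^ c.card * (-1 : F) ^ (S₀.card - c.card + 1) := by
            rw [← pow_add]
            congr 1
            omega
          rw [hpow]
          ring
      rw [hA, hB', Finset.sum_sigma]
      have hcomb : ∀ Q ∈ Finset.univ.filter
          (fun Q : Finset (Finset (Fin n)) => Blocks τ Q),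
          ((-1 : F) ^ (c.card + 1) * ((∏ S ∈ Q, (-1 : F) ^ (S.card + 1)) *
                ((Q.card + 1).factorial : F)))
            + (∑ _B ∈ Q, (-1 : F) ^ c.card * ((∏ S ∈ Q, (-1 : F) ^ (S.card + 1)) *
                (Q.card.factorial : F)))
          = (-1 : F) ^ (c.card + 1) * wt F Q := by
        intro Q _
        rw [Finset.sum_const, Nat.factorial_succ, wt]
        push_cast
        rw [pow_succ]
        ring
      rw [← Finset.sum_add_distrib, Finset.sum_congr rfl hcomb, ← Finset.mul_sum, IHτ]
      rw [sign_factor hxne]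
      push_cast
      ring
end Bij

lemma keysum (g : Fin n → Fin n) :
    (∑ P ∈ Finset.univ.filter (fun P : Finset (Finset (Fin n)) =>
        IsPartialPartition P ∧ ∀ i, g i ∈ Jset P i), wt F P)
    = if hg : Function.Bijective g then
        ((Equiv.Perm.sign (Equiv.ofBijective g hg) : ℤ) : F) else 0 := by
  by_cases hg : Function.Bijective g
  · rw [dif_pos hg]
    have hfe : Finset.univ.filter (fun P : Finset (Finset (Fin n)) =>
        IsPartialPartition P ∧ ∀ i, g i ∈ Jset P i)
      = Finset.univ.filter (fun P : Finset (Finset (Fin n)) =>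
          Blocks (Equiv.ofBijective g hg) P) := by
      refine Finset.filter_congr fun P _ => ?_
      exact compat_iff_blocks (Equiv.ofBijective g hg) P
    rw [hfe]
    exact sum_blocks F (Equiv.ofBijective g hg)
  · rw [dif_neg hg]
    exact keysum_nonbij g hg


lemma term_eq (A : Matrix (Fin n) (Fin n) F) (P : Finset (Finset (Fin n))) (i : Fin n) :
    (if PPrel P i i then
        ∑ j ∈ Finset.univ.filter (fun j => PPrel P j i ∧ j ≠ i), A i j
      else
        A i i + ∑ j ∈ Finset.univ.filter (fun j => PPrel P j j), A i j)
    = ∑ j ∈ Jset P i, A i j := by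
  unfold Jset
  split_ifs with h
  · rfl
  · rw [Finset.sum_insert (by simp [h])]

/-- The determinant as a sum over all partial partitions. -/
lemma det_eq_sum_all (A : Matrix (Fin n) (Fin n) F) :
    A.det = ∑ P ∈ Finset.univ.filter (fun P : Finset (Finset (Fin n)) =>
        IsPartialPartition P),
      wt F P *
        ∏ i : Fin n,
          (if PPrel P i i then
            ∑ j ∈ Finset.univ.filter (fun j => PPrel P j i ∧ j ≠ i), A i j
          else
            A i i + ∑ j ∈ Finset.univ.filter (fun j => PPrel P j j), A i j) := by
  have hpi : ∀ P : Finset (Finset (Fin n)),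
      Fintype.piFinset (Jset P) = Finset.univ.filter (fun g : Fin n → Fin n =>
        ∀ i, g i ∈ Jset P i) := by
    intro P; ext g; simp [Fintype.mem_piFinset]
  calc A.det
      = ∑ g ∈ Finset.univ.filter (fun g : Fin n → Fin n => Function.Bijective g),
          (if hg : Function.Bijective g then
            ((Equiv.Perm.sign (Equiv.ofBijective g hg) : ℤ) : F) else 0) * ∏ i, A i (g i) := by
        rw [← Matrix.det_transpose, Matrix.det_apply']
        refine Finset.sum_bij' (fun (σ : Equiv.Perm (Fin n)) _ => (σ : Fin n → Fin n))
          (fun g hg => Equiv.ofBijective g (Finset.mem_filter.1 hg).2) ?_ ?_ ?_ ?_ ?_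
        · intro σ _; exact Finset.mem_filter.2 ⟨Finset.mem_univ _, σ.bijective⟩
        · intro g hg; exact Finset.mem_univ _
        · intro σ hσ; exact Equiv.ext fun x => rfl
        · intro g hg; rfl
        · intro σ hσ
          have h1 : Equiv.ofBijective (⇑σ) ((Finset.mem_filter.1
              (Finset.mem_filter.2 ⟨Finset.mem_univ _, σ.bijective⟩ :
                (σ : Fin n → Fin n) ∈ _)).2) = σ := Equiv.ext fun x => rfl
          rw [dif_pos σ.bijective, show Equiv.ofBijective (⇑σ) σ.bijective = σ from
            Equiv.ext fun x => rfl]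
          rfl
    _ = ∑ g : Fin n → Fin n,
          (if hg : Function.Bijective g then
            ((Equiv.Perm.sign (Equiv.ofBijective g hg) : ℤ) : F) else 0) * ∏ i, A i (g i) := by
        rw [Finset.sum_filter_of_ne]
        intro g _ h
        by_contra hb
        rw [dif_neg hb, zero_mul] at h
        exact h rfl
    _ = ∑ g : Fin n → Fin n,
          (∑ P ∈ Finset.univ.filter (fun P : Finset (Finset (Fin n)) =>
            IsPartialPartition P ∧ ∀ i, g i ∈ Jset P i), wt F P) * ∏ i, A i (g i) := by
        refine Finset.sum_congr rfl fun g _ => ?_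
        rw [keysum]
    _ = ∑ g : Fin n → Fin n, ∑ P ∈ Finset.univ.filter
          (fun P : Finset (Finset (Fin n)) => IsPartialPartition P),
          (if (∀ i, g i ∈ Jset P i) then wt F P * ∏ i, A i (g i) else 0) := by
        refine Finset.sum_congr rfl fun g _ => ?_
        rw [Finset.sum_mul, ← Finset.sum_filter, Finset.filter_filter]
    _ = ∑ P ∈ Finset.univ.filter
          (fun P : Finset (Finset (Fin n)) => IsPartialPartition P),
          ∑ g : Fin n → Fin n,
          (if (∀ i, g i ∈ Jset P i) then wt F P * ∏ i, A i (g i) else 0) := by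
        rw [Finset.sum_comm]
    _ = _ := by
        refine Finset.sum_congr rfl fun P _ => ?_
        rw [← Finset.sum_filter, ← hpi]
        conv_rhs => rw [show (∏ i : Fin n,
          (if PPrel P i i then
            ∑ j ∈ Finset.univ.filter (fun j => PPrel P j i ∧ j ≠ i), A i j
          else
            A i i + ∑ j ∈ Finset.univ.filter (fun j => PPrel P j j), A i j))
          = ∏ i, ∑ j ∈ Jset P i, A i j from Finset.prod_congr rfl fun i _ => term_eq A P i]
        rw [Finset.prod_univ_sum (t := Jset P) (f := A), Finset.mul_sum]

end DetPP

open scoped Classical in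
/-- Over a field of characteristic `p > 0`, the determinant formula only needs the
partial partitions with at most `p - 1` parts. -/
theorem det_eq_sum_partial_partitions_charP {F : Type*} [Field F] {p : ℕ} [CharP F p]
    (hp : 0 < p) {n : ℕ} (hn : 0 < n) (A : Matrix (Fin n) (Fin n) F) :
    A.det = ∑ P ∈ Finset.univ.filter (fun P : Finset (Finset (Fin n)) =>
        IsPartialPartition P ∧ P.card ≤ p - 1),
      (∏ S ∈ P, (-1 : F) ^ (S.card + 1)) * (P.card.factorial : F) *
        ∏ i : Fin n,
          (if PPrel P i i then
            ∑ j ∈ Finset.univ.filter (fun j => PPrel P j i ∧ j ≠ i), A i j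
          else
            A i i + ∑ j ∈ Finset.univ.filter (fun j => PPrel P j j), A i j) := by
  rw [DetPP.det_eq_sum_all A]
  rw [show (Finset.univ.filter (fun P : Finset (Finset (Fin n)) =>
      IsPartialPartition P ∧ P.card ≤ p - 1))
    = (Finset.univ.filter (fun P : Finset (Finset (Fin n)) =>
      IsPartialPartition P)).filter (fun P => P.card ≤ p - 1) from by
      rw [Finset.filter_filter]]
  rw [eq_comm]
  refine Finset.sum_subset (Finset.filter_subset _ _) ?_
  intro P hP hP2
  have hcard : p ≤ P.card := by
    rcases Nat.lt_or_ge (p-1) P.card with h | h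
    · omega
    · exact absurd (Finset.mem_filter.2 ⟨hP, h⟩) hP2
  have : (P.card.factorial : F) = 0 := by
    rw [CharP.cast_eq_zero_iff F p]
    exact Nat.dvd_factorial hp hcard
  rw [this, mul_zero, zero_mul]
end

section
/- Let F be a field of characteristic 2, let n be a positive integer, and let A be an n × n matrix over F. Then per(A) = det(A) = Σ_{S ⊆ [n]} Π_{i=1}^n (Σ_{j ∈ S △ {i}} a_{i,j}), where S △ {i} denotes the symmetric difference of S and {i}. Consequently (since every singleton S contributes a zero term), the tensor rank of the n × n determinant (equivalently, permanent) tensor over F is at most 2^n − n. -/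
open Finset Function

namespace DetCharTwoAux

variable {n : ℕ}

lemma cond_iff_Icc (p : Fin n → Fin n) (S : Finset (Fin n)) :
    (∀ i, p i ∈ symmDiff S {i}) ↔
      S ∈ Finset.Icc ((univ.filter (fun i => p i ≠ i)).image p)
        (univ.filter (fun i => p i ≠ i)) := by
  simp only [Finset.mem_Icc, Finset.le_iff_subset]
  constructor
  · intro h
    constructor
    · intro b hb
      simp only [mem_image, mem_filter, mem_univ, true_and] at hb
      obtain ⟨i, hi, rfl⟩ := hb
      have := h i
      rw [Finset.mem_symmDiff] at this
      rcases this with ⟨hS, _⟩ | ⟨he, _⟩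
      · exact hS
      · exact absurd (Finset.mem_singleton.mp he) hi
    · intro x hx
      simp only [mem_filter, mem_univ, true_and]
      intro hpx
      have := h x
      rw [Finset.mem_symmDiff, hpx] at this
      rcases this with ⟨_, hne⟩ | ⟨_, hnS⟩
      · exact hne (Finset.mem_singleton_self x)
      · exact hnS hx
  · rintro ⟨hB, hNF⟩ i
    rw [Finset.mem_symmDiff]
    by_cases hi : p i = i
    · right
      rw [hi]
      refine ⟨Finset.mem_singleton_self i, fun hS => ?_⟩
      have := hNF hS
      simp only [mem_filter] at this
      exact this.2 hi
    · left
      refine ⟨hB ?_, by simpa using hi⟩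
      simp only [mem_image, mem_filter, mem_univ, true_and]
      exact ⟨i, hi, rfl⟩

lemma count_cast (F : Type*) [Field F] [CharP F 2] (p : Fin n → Fin n) :
    (((Finset.univ.filter
        (fun S : Finset (Fin n) => ∀ i, p i ∈ symmDiff S {i})).card : ℕ) : F)
      = if Function.Bijective p then 1 else 0 := by
  set NF := univ.filter (fun i => p i ≠ i) with hNFdef
  set B := NF.image p with hBdef
  have hfilter : Finset.univ.filter
      (fun S : Finset (Fin n) => ∀ i, p i ∈ symmDiff S {i}) = Finset.Icc B NF := by
    ext S
    simp only [mem_filter, mem_univ, true_and]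
    exact cond_iff_Icc p S
  rw [hfilter]
  by_cases hbij : Function.Bijective p
  · rw [if_pos hbij]
    have hBNF : B = NF := by
      ext j
      simp only [hBdef, hNFdef, mem_image, mem_filter, mem_univ, true_and]
      constructor
      · rintro ⟨i, hi, rfl⟩
        intro hpp
        exact hi (hbij.1 hpp)
      · intro hj
        obtain ⟨i, rfl⟩ := hbij.2 j
        exact ⟨i, fun h => hj (congrArg p h), rfl⟩
    rw [hBNF, Finset.Icc_self, Finset.card_singleton, Nat.cast_one]
  · rw [if_neg hbij]
    by_cases hBN : B ⊆ NF
    · rw [Finset.card_Icc_finset hBN]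
      have hlt : B.card < NF.card := by
        rcases lt_or_eq_of_le (Finset.card_le_card hBN) with h | h
        · exact h
        · exfalso
          apply hbij
          have hBNF : B = NF := Finset.eq_of_subset_of_card_le hBN h.ge
          rw [Finite.surjective_iff_bijective.symm] at *
          intro j
          by_cases hj : p j = j
          · exact ⟨j, hj⟩
          · have : j ∈ NF := by simp [hNFdef, hj]
            rw [← hBNF] at this
            simp only [hBdef, mem_image] at this
            obtain ⟨i, _, hi⟩ := this
            exact ⟨i, hi⟩
      push_cast
      have h2 : (2 : F) = 0 := by
        have := CharP.cast_eq_zero F 2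
        push_cast at this
        exact this
      rw [h2, zero_pow (by omega)]
    · have : Finset.Icc B NF = ∅ := by
        rw [Finset.Icc_eq_empty_iff]
        intro hle
        exact hBN hle
      rw [this, Finset.card_empty, Nat.cast_zero]

lemma symmdiff_sum_eq_permanent (F : Type*) [Field F] [CharP F 2]
    (A : Matrix (Fin n) (Fin n) F) :
    ∑ S : Finset (Fin n), ∏ i, ∑ j ∈ symmDiff S {i}, A i j = A.permanent := by
  have step1 : ∀ S : Finset (Fin n),
      (∏ i, ∑ j ∈ symmDiff S {i}, A i j)
      = ∑ p : Fin n → Fin n,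
          if (∀ i, p i ∈ symmDiff S {i}) then ∏ i, A i (p i) else 0 := by
    intro S
    rw [Finset.prod_univ_sum (f := fun i j => A i j), ← Finset.sum_filter]
    apply Finset.sum_congr
    · ext p
      simp [Fintype.mem_piFinset]
    · intros; rfl
  simp_rw [step1]
  rw [Finset.sum_comm]
  have step2 : ∀ p : Fin n → Fin n,
      (∑ S : Finset (Fin n), if (∀ i, p i ∈ symmDiff S {i}) then ∏ i, A i (p i) else 0)
      = (if Function.Bijective p then 1 else 0) * ∏ i, A i (p i) := by
    intro p
    rw [← Finset.sum_filter, Finset.sum_const, nsmul_eq_mul, count_cast]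
  simp_rw [step2]
  rw [← Matrix.permanent_transpose]
  unfold Matrix.permanent
  simp only [Matrix.transpose_apply, ite_mul, one_mul, zero_mul]
  rw [← Finset.sum_filter]
  exact (Finset.sum_bij (fun (σ : Equiv.Perm (Fin n)) _ => (σ : Fin n → Fin n))
    (fun σ _ => Finset.mem_filter.mpr ⟨Finset.mem_univ _, σ.bijective⟩)
    (fun σ _ τ _ h => Equiv.coe_fn_injective h)
    (fun p hp => ⟨Equiv.ofBijective p (Finset.mem_filter.mp hp).2, Finset.mem_univ _, rfl⟩)
    (fun σ _ => rfl)).symm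

lemma permanent_eq_det (F : Type*) [Field F] [CharP F 2]
    (A : Matrix (Fin n) (Fin n) F) : A.permanent = A.det := by
  rw [Matrix.det_apply]
  unfold Matrix.permanent
  apply Finset.sum_congr rfl
  intro σ _
  rcases Int.units_eq_one_or (Equiv.Perm.sign σ) with h | h
  · rw [h]; simp
  · rw [h]
    simp only [Units.neg_smul, one_smul]
    rw [CharTwo.neg_eq]

lemma card_ne_one (n : ℕ) :
    Fintype.card {S : Finset (Fin n) // S.card ≠ 1} = 2 ^ n - n := by
  have h1 : Fintype.card {S : Finset (Fin n) // S.card = 1} = n := by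
    have hb : Function.Bijective
        (fun m : Fin n =>
          (⟨{m}, Finset.card_singleton m⟩ : {S : Finset (Fin n) // S.card = 1})) := by
      constructor
      · intro a b h
        exact Finset.singleton_injective (congrArg Subtype.val h)
      · rintro ⟨S, hS⟩
        obtain ⟨m, rfl⟩ := Finset.card_eq_one.mp hS
        exact ⟨m, rfl⟩
    rw [← Fintype.card_of_bijective hb, Fintype.card_fin]
  rw [Fintype.card_subtype_compl, h1, Fintype.card_finset, Fintype.card_fin]

end DetCharTwoAux

open DetCharTwoAux in
/-- Over a field of characteristic `2`, the permanent equals the determinant, both are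
given by the `2^n - n` term symmetric-difference formula, and consequently the tensor
rank of the determinant (equivalently, permanent) is at most `2^n - n`. -/
theorem det_eq_per_char_two_formula (F : Type*) [Field F] [CharP F 2]
    (n : ℕ) (hn : 0 < n) :
    (∀ A : Matrix (Fin n) (Fin n) F,
      A.permanent = A.det ∧
      A.det = ∑ S : Finset (Fin n), ∏ i : Fin n, ∑ j ∈ symmDiff S {i}, A i j) ∧
    ∃ v : Fin n → Fin (2 ^ n - n) → Fin n → F,
      IsDetDecomposition F n (2 ^ n - n) v := by
  have key : ∀ A : Matrix (Fin n) (Fin n) F,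
      A.det = ∑ S : Finset (Fin n), ∏ i : Fin n, ∑ j ∈ symmDiff S {i}, A i j := by
    intro A
    rw [← permanent_eq_det F A]
    exact (symmdiff_sum_eq_permanent F A).symm
  refine ⟨fun A => ⟨permanent_eq_det F A, key A⟩, ?_⟩
  let e := (Fintype.equivFinOfCardEq (card_ne_one n)).symm
  refine ⟨fun i k j => if j ∈ symmDiff ((e k : Finset (Fin n))) {i} then 1 else 0, ?_⟩
  intro A
  have hterm : ∀ k : Fin (2 ^ n - n),
      (∏ i, ∑ j ∈ symmDiff ((e k : Finset (Fin n))) {i}, A i j)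
      = ∏ i, ∑ j : Fin n,
          (if j ∈ symmDiff ((e k : Finset (Fin n))) {i} then (1 : F) else 0) * A i j := by
    intro k
    apply Finset.prod_congr rfl
    intro i _
    simp_rw [ite_mul, one_mul, zero_mul]
    rw [Finset.sum_ite_mem, Finset.univ_inter]
  have hzero : ∀ S : Finset (Fin n), S.card = 1 →
      (∏ i, ∑ j ∈ symmDiff S {i}, A i j) = 0 := by
    intro S hS
    obtain ⟨m, rfl⟩ := Finset.card_eq_one.mp hS
    apply Finset.prod_eq_zero (Finset.mem_univ m)
    simp [symmDiff_self]
  calc A.det = ∑ S : Finset (Fin n), ∏ i, ∑ j ∈ symmDiff S {i}, A i j := key A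
    _ = ∑ S ∈ univ.filter (fun S : Finset (Fin n) => ¬ S.card = 1),
          ∏ i, ∑ j ∈ symmDiff S {i}, A i j := by
        rw [← Finset.sum_filter_add_sum_filter_not univ
          (fun S : Finset (Fin n) => S.card = 1)]
        rw [Finset.sum_eq_zero, zero_add]
        intro S hS
        exact hzero S (Finset.mem_filter.mp hS).2
    _ = ∑ S : {S : Finset (Fin n) // S.card ≠ 1},
          ∏ i, ∑ j ∈ symmDiff (S : Finset (Fin n)) {i}, A i j := by
        rw [Finset.sum_subtype]
        intro x
        simp
    _ = ∑ k : Fin (2 ^ n - n),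
          ∏ i, ∑ j ∈ symmDiff ((e k : Finset (Fin n))) {i}, A i j :=
        (Equiv.sum_comp e fun S : {S : Finset (Fin n) // S.card ≠ 1} =>
          ∏ i, ∑ j ∈ symmDiff (S : Finset (Fin n)) {i}, A i j).symm
    _ = _ := Finset.sum_congr rfl fun k _ => hterm k
end

section
/- Let q ≥ 2 be a prime power, let F_q be the field with q elements, and let n ≥ 5. Then every rank-r tensor decomposition of the n × n determinant over F_q satisfies (r : ℝ) ≥ C(n, ⌊n/2⌋) + log_q(C(n, ⌊n/2⌋)); that is, the tensor rank of the n × n determinant tensor over F_q is at least C(n, ⌊n/2⌋) + log_q(C(n, ⌊n/2⌋)). -/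
namespace DetRankAux

variable {F : Type*} [Field F]

/-- The 0/1 matrix whose row `i` is the standard basis vector `e_{t i}`. -/
def bmat {n : ℕ} (t : Fin n → Fin n) : Matrix (Fin n) (Fin n) F :=
  Matrix.of fun i j => if t i = j then 1 else 0

lemma bmat_det_zero {n : ℕ} {t : Fin n → Fin n} (h : ¬ Function.Injective t) :
    (bmat (F := F) t).det = 0 := by
  rw [Function.Injective] at h
  push_neg at h
  obtain ⟨i, i', hval, hne⟩ := h
  refine Matrix.det_zero_of_row_eq hne ?_
  funext j
  simp only [bmat, Matrix.of_apply, hval]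

lemma bmat_det_ne_zero {n : ℕ} {t : Fin n → Fin n} (h : Function.Bijective t) :
    (bmat (F := F) t).det ≠ 0 := by
  have he : bmat (F := F) t = Equiv.Perm.permMatrix F (Equiv.ofBijective t h) := by
    funext i j
    simp only [bmat, Matrix.of_apply, Equiv.Perm.permMatrix, PEquiv.toMatrix,
      Equiv.toPEquiv_apply, Option.mem_def, Option.some.injEq, Equiv.ofBijective_apply,
      eq_comm]
  rw [he, Matrix.det_permutation]
  rcases Int.units_eq_one_or (Equiv.Perm.sign (Equiv.ofBijective t h)) with h1 | h1 <;>
    simp [h1]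

lemma key_det {n r : ℕ} {v : Fin n → Fin r → Fin n → F}
    (hv : IsDetDecomposition F n r v) (t : Fin n → Fin n) :
    ∑ k : Fin r, ∏ i : Fin n, v i k (t i) = (bmat (F := F) t).det := by
  rw [hv (bmat t)]
  refine Finset.sum_congr rfl fun k _ => Finset.prod_congr rfl fun i _ => ?_
  simp [bmat, mul_ite, Finset.sum_ite_eq]



/-- first `m` positions -/
def tops (n m : ℕ) : Finset (Fin n) := Finset.univ.filter (fun i => (i : ℕ) < m)

/-- remaining positions -/
def bots (n m : ℕ) : Finset (Fin n) := Finset.univ.filter (fun i => ¬ (i : ℕ) < m)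

lemma mem_tops {n m : ℕ} {i : Fin n} : i ∈ tops n m ↔ (i : ℕ) < m := by simp [tops]

lemma mem_bots {n m : ℕ} {i : Fin n} : i ∈ bots n m ↔ ¬ (i : ℕ) < m := by simp [bots]

lemma card_tops {n m : ℕ} (hm : m ≤ n) : (tops n m).card = m := by
  have h : tops n m = Finset.map (Fin.castLEEmb hm) Finset.univ := by
    ext i
    simp only [mem_tops, Finset.mem_map, Finset.mem_univ, true_and]
    constructor
    · intro h; exact ⟨⟨(i : ℕ), h⟩, by ext; simp [Fin.castLEEmb]⟩
    · rintro ⟨a, rfl⟩; simpa [Fin.castLEEmb] using a.2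
  rw [h, Finset.card_map, Finset.card_univ, Fintype.card_fin]

/-- The assignment of rows: first `m` rows given by `j`, the rest enumerate `Sᶜ`. -/
def asg {n : ℕ} (m : ℕ) (j : Fin n → Fin n) (S : Finset (Fin n)) (hS : Sᶜ.card = n - m) :
    Fin n → Fin n :=
  fun i => if h : (i : ℕ) < m then j i
    else Sᶜ.orderEmbOfFin hS ⟨(i : ℕ) - m, by have h2 := i.2; omega⟩

lemma asg_top {n m : ℕ} {j : Fin n → Fin n} {S : Finset (Fin n)} {hS : Sᶜ.card = n - m}
    {i : Fin n} (h : (i : ℕ) < m) : asg m j S hS i = j i := by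
  unfold asg; rw [dif_pos h]

lemma asg_bot_mem {n m : ℕ} {j : Fin n → Fin n} {S : Finset (Fin n)} {hS : Sᶜ.card = n - m}
    {i : Fin n} (h : ¬ (i : ℕ) < m) : asg m j S hS i ∈ Sᶜ := by
  unfold asg; rw [dif_neg h]; exact Finset.orderEmbOfFin_mem _ _ _

lemma asg_bot_eq {n m : ℕ} (j j' : Fin n → Fin n) {S : Finset (Fin n)} {hS : Sᶜ.card = n - m}
    {i : Fin n} (h : ¬ (i : ℕ) < m) : asg m j S hS i = asg m j' S hS i := by
  unfold asg; rw [dif_neg h, dif_neg h]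

lemma asg_bot_surj {n m : ℕ} (hm : m ≤ n) (j : Fin n → Fin n) (S : Finset (Fin n))
    (hS : Sᶜ.card = n - m) {x : Fin n} (hx : x ∈ Sᶜ) :
    ∃ i : Fin n, ¬ (i : ℕ) < m ∧ asg m j S hS i = x := by
  have hx' : x ∈ Set.range ⇑(Sᶜ.orderEmbOfFin hS) := by
    rw [Finset.range_orderEmbOfFin]; exact_mod_cast hx
  obtain ⟨l, hl⟩ := hx'
  have hl2 := l.2
  refine ⟨⟨(l : ℕ) + m, by omega⟩, by simp, ?_⟩
  have hnot : ¬ ((⟨(l : ℕ) + m, by omega⟩ : Fin n) : ℕ) < m := by simp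
  unfold asg
  rw [dif_neg hnot]
  rw [← hl]
  congr 1
  ext
  simp

lemma asg_bijective {n m : ℕ} (hm : m ≤ n) {j : Fin n → Fin n} {S : Finset (Fin n)}
    {hS : Sᶜ.card = n - m}
    (hjS : ∀ i : Fin n, (i : ℕ) < m → j i ∈ S)
    (hjinj : ∀ i i' : Fin n, (i : ℕ) < m → (i' : ℕ) < m → j i = j i' → i = i') :
    Function.Bijective (asg m j S hS) := by
  rw [← Finite.injective_iff_bijective]
  intro i i' he
  by_cases h1 : (i : ℕ) < m <;> by_cases h2 : (i' : ℕ) < m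
  · rw [asg_top h1, asg_top h2] at he; exact hjinj _ _ h1 h2 he
  · exfalso
    rw [asg_top h1] at he
    have hmem := asg_bot_mem (j := j) (hS := hS) h2
    rw [← he] at hmem
    exact (Finset.mem_compl.mp hmem) (hjS i h1)
  · exfalso
    rw [asg_top h2] at he
    have hmem := asg_bot_mem (j := j) (hS := hS) h1
    rw [he] at hmem
    exact (Finset.mem_compl.mp hmem) (hjS i' h2)
  · unfold asg at he
    rw [dif_neg h1, dif_neg h2] at he
    have h3 := (Sᶜ.orderEmbOfFin hS).injective he
    have h4 : (i : ℕ) - m = (i' : ℕ) - m := congrArg Fin.val h3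
    have h5 := i.2; have h6 := i'.2
    ext
    omega

lemma ccd {n m : ℕ} {S : Finset (Fin n)} (hS : S.card = m) : Sᶜ.card = n - m := by
  rw [Finset.card_compl, hS, Fintype.card_fin]

/-- off-diagonal vanishing -/
lemma det_asg_eq_zero {n m : ℕ} (hm : m ≤ n) {S₀ S : Finset (Fin n)}
    (hS₀ : S₀.card = m) (hS : S.card = m) (hne : S ≠ S₀) {j : Fin n → Fin n}
    (hjS : ∀ i : Fin n, (i : ℕ) < m → j i ∈ S₀)
    (hjinj : ∀ i i' : Fin n, (i : ℕ) < m → (i' : ℕ) < m → j i = j i' → i = i') :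
    (bmat (F := F) (asg m j S (ccd hS))).det = 0 := by
  have hns : ¬ S₀ ⊆ S := by
    intro hsub
    exact hne (Finset.eq_of_subset_of_card_le hsub (by rw [hS₀, hS])).symm
  obtain ⟨x, hxS₀, hxS⟩ := Finset.not_subset.mp hns
  have himg : Finset.image j (tops n m) = S₀ := by
    apply Finset.eq_of_subset_of_card_le
    · intro y hy
      obtain ⟨i, hi, rfl⟩ := Finset.mem_image.mp hy
      exact hjS i (mem_tops.mp hi)
    · rw [Finset.card_image_of_injOn (fun i hi i' hi' he =>
        hjinj i i' (mem_tops.mp hi) (mem_tops.mp hi') he), card_tops hm, hS₀]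
  obtain ⟨itop, hitop, hjx⟩ := Finset.mem_image.mp (himg ▸ hxS₀)
  obtain ⟨ibot, hibot, hbx⟩ := asg_bot_surj hm j S (ccd hS) (Finset.mem_compl.mpr hxS)
  apply bmat_det_zero
  intro hinj
  have h1 : asg m j S (ccd hS) itop = x := by rw [asg_top (mem_tops.mp hitop), hjx]
  have h2 := hinj (h1.trans hbx.symm)
  exact hibot (h2 ▸ mem_tops.mp hitop)

/-- diagonal nonvanishing -/
lemma det_asg_ne_zero {n m : ℕ} (hm : m ≤ n) {S₀ : Finset (Fin n)} (hS₀ : S₀.card = m)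
    {j : Fin n → Fin n}
    (hjS : ∀ i : Fin n, (i : ℕ) < m → j i ∈ S₀)
    (hjinj : ∀ i i' : Fin n, (i : ℕ) < m → (i' : ℕ) < m → j i = j i' → i = i') :
    (bmat (F := F) (asg m j S₀ (ccd hS₀))).det ≠ 0 :=
  bmat_det_ne_zero (asg_bijective hm hjS hjinj)


/-- product of the bottom linear-form coordinates -/
def zv {n : ℕ} (m : ℕ) {r : ℕ} (v : Fin n → Fin r → Fin n → F) (S : Finset (Fin n))
    (hS : Sᶜ.card = n - m) : Fin r → F :=
  fun k => ∏ i ∈ bots n m, v i k (asg m id S hS i)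

/-- product of the top linear-form coordinates -/
def tp {n : ℕ} (m : ℕ) {r : ℕ} (v : Fin n → Fin r → Fin n → F) (j : Fin n → Fin n) :
    Fin r → F :=
  fun k => ∏ i ∈ tops n m, v i k (j i)

lemma tp_mul_zv {n m r : ℕ} (v : Fin n → Fin r → Fin n → F) (j : Fin n → Fin n)
    (S : Finset (Fin n)) (hS : Sᶜ.card = n - m) (k : Fin r) :
    tp m v j k * zv m v S hS k = ∏ i : Fin n, v i k (asg m j S hS i) := by
  rw [← Finset.prod_filter_mul_prod_filter_not Finset.univ (fun i : Fin n => (i : ℕ) < m)]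
  congr 1
  · exact Finset.prod_congr rfl fun i hi => by
      rw [asg_top (mem_tops.mp hi)]
  · exact Finset.prod_congr rfl fun i hi => by
      rw [asg_bot_eq id j (mem_bots.mp hi)]

/-- The "code" map. -/
def Zv {n : ℕ} (m : ℕ) {r : ℕ} (v : Fin n → Fin r → Fin n → F)
    (c : {S : Finset (Fin n) // S.card = m} → F) : Fin r → F :=
  fun k => ∑ S : {S : Finset (Fin n) // S.card = m}, c S * zv m v S.1 (ccd S.2) k

lemma Zv_sub {n m r : ℕ} (v : Fin n → Fin r → Fin n → F)
    (c c' : {S : Finset (Fin n) // S.card = m} → F) (k : Fin r) :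
    Zv m v (c - c') k = Zv m v c k - Zv m v c' k := by
  unfold Zv
  rw [← Finset.sum_sub_distrib]
  exact Finset.sum_congr rfl fun S _ => by simp [sub_mul]

lemma Z_pair {n m r : ℕ} {v : Fin n → Fin r → Fin n → F} (hv : IsDetDecomposition F n r v)
    (c : {S : Finset (Fin n) // S.card = m} → F) (j : Fin n → Fin n) :
    ∑ k : Fin r, Zv m v c k * tp m v j k
      = ∑ S : {S : Finset (Fin n) // S.card = m},
          c S * (bmat (F := F) (asg m j S.1 (ccd S.2))).det := by
  calc ∑ k : Fin r, Zv m v c k * tp m v j k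
      = ∑ k : Fin r, ∑ S : {S : Finset (Fin n) // S.card = m},
          c S * (tp m v j k * zv m v S.1 (ccd S.2) k) := by
        refine Finset.sum_congr rfl fun k _ => ?_
        rw [Zv, Finset.sum_mul]
        exact Finset.sum_congr rfl fun S _ => by ring
    _ = ∑ S : {S : Finset (Fin n) // S.card = m}, ∑ k : Fin r,
          c S * (tp m v j k * zv m v S.1 (ccd S.2) k) := Finset.sum_comm
    _ = ∑ S : {S : Finset (Fin n) // S.card = m},
          c S * (bmat (F := F) (asg m j S.1 (ccd S.2))).det := by
        refine Finset.sum_congr rfl fun S _ => ?_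
        rw [← Finset.mul_sum]
        congr 1
        rw [← key_det hv]
        exact Finset.sum_congr rfl fun k _ => tp_mul_zv v j S.1 (ccd S.2) k

def topj {n : ℕ} (m : ℕ) (S : Finset (Fin n)) (hS : S.card = m) : Fin n → Fin n :=
  fun i => if h : (i : ℕ) < m then S.orderEmbOfFin hS ⟨(i : ℕ), h⟩ else i

def nidxv (a b iv : ℕ) : ℕ := if iv = 0 then a else if iv = b then 0 else iv

lemma nidxv_lt {m a b iv : ℕ} (ha : a < m) (hiv : iv < m) : nidxv a b iv < m := by
  unfold nidxv; split_ifs <;> omega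

def jab {n : ℕ} (m : ℕ) (S : Finset (Fin n)) (hS : S.card = m) (hm3 : 3 ≤ m)
    (a b : Fin 3) : Fin n → Fin n :=
  fun i => if h : (i : ℕ) < m then
      S.orderEmbOfFin hS ⟨nidxv (a : ℕ) (b : ℕ) (i : ℕ),
        nidxv_lt (by have := a.2; omega) h⟩
    else i

lemma jab_lt {n m : ℕ} {S : Finset (Fin n)} {hS : S.card = m} {hm3 : 3 ≤ m} {a b : Fin 3}
    {i : Fin n} (h : (i : ℕ) < m) :
    jab m S hS hm3 a b i
      = S.orderEmbOfFin hS ⟨nidxv (a : ℕ) (b : ℕ) (i : ℕ),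
          nidxv_lt (by have := a.2; omega) h⟩ := by
  unfold jab; rw [dif_pos h]

lemma jab_mem {n m : ℕ} {S : Finset (Fin n)} {hS : S.card = m} {hm3 : 3 ≤ m} {a b : Fin 3} :
    ∀ i : Fin n, (i : ℕ) < m → jab m S hS hm3 a b i ∈ S := by
  intro i h
  rw [jab_lt h]
  exact Finset.orderEmbOfFin_mem _ _ _

lemma jab_diag_inj {n m : ℕ} {S : Finset (Fin n)} {hS : S.card = m} {hm3 : 3 ≤ m} {a : Fin 3} :
    ∀ i i' : Fin n, (i : ℕ) < m → (i' : ℕ) < m →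
      jab m S hS hm3 a a i = jab m S hS hm3 a a i' → i = i' := by
  intro i i' h h' he
  rw [jab_lt h, jab_lt h'] at he
  have h1 : nidxv (a : ℕ) (a : ℕ) (i : ℕ) = nidxv (a : ℕ) (a : ℕ) (i' : ℕ) := by
    have := (S.orderEmbOfFin hS).injective he
    simpa [Fin.ext_iff] using this
  have ha := a.2
  apply Fin.ext
  unfold nidxv at h1
  split_ifs at h1 <;> omega

lemma det_asg_jab_zero {n m : ℕ} (hm3 : 3 ≤ m) (hmn : m ≤ n) {S₀ : Finset (Fin n)}
    (hS₀ : S₀.card = m) {a b : Fin 3} (hab : a ≠ b) (S : Finset (Fin n))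
    (hS : Sᶜ.card = n - m) :
    (bmat (F := F) (asg m (jab m S₀ hS₀ hm3 a b) S hS)).det = 0 := by
  have ha3 := a.2; have hb3 := b.2
  have hab' : (a : ℕ) ≠ (b : ℕ) := fun h => hab (Fin.ext h)
  obtain ⟨pv, hpv⟩ : ∃ pv : ℕ, pv = if (a : ℕ) = 0 then (b : ℕ) else (a : ℕ) := ⟨_, rfl⟩
  have hpvm : pv < m := by rw [hpv]; split_ifs <;> omega
  have hpv0 : pv ≠ 0 := by rw [hpv]; split_ifs <;> omega
  obtain ⟨p1, hp1⟩ : ∃ p : Fin n, (p : ℕ) = 0 := ⟨⟨0, by omega⟩, rfl⟩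
  obtain ⟨p2, hp2⟩ : ∃ p : Fin n, (p : ℕ) = pv := ⟨⟨pv, by omega⟩, rfl⟩
  have h0m : (p1 : ℕ) < m := by omega
  have hpvm' : (p2 : ℕ) < m := by omega
  apply bmat_det_zero
  intro hinj
  have he : asg m (jab m S₀ hS₀ hm3 a b) S hS p1
      = asg m (jab m S₀ hS₀ hm3 a b) S hS p2 := by
    rw [asg_top h0m, asg_top hpvm', jab_lt h0m, jab_lt hpvm']
    congr 1
    apply Fin.ext
    show nidxv (a : ℕ) (b : ℕ) (p1 : ℕ) = nidxv (a : ℕ) (b : ℕ) (p2 : ℕ)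
    rw [hp1, hp2, hpv]
    unfold nidxv
    split_ifs <;> omega
  have h12 := hinj he
  have h13 : (p1 : ℕ) = (p2 : ℕ) := congrArg Fin.val h12
  omega

lemma jab_at_zero {n m : ℕ} {S : Finset (Fin n)} {hS : S.card = m} {hm3 : 3 ≤ m}
    (a b : Fin 3) {i : Fin n} (hi0 : (i : ℕ) = 0) :
    jab m S hS hm3 a b i = S.orderEmbOfFin hS ⟨(a : ℕ), by have := a.2; omega⟩ := by
  have h : (i : ℕ) < m := by omega
  rw [jab_lt h]
  congr 1
  apply Fin.ext
  show nidxv (a : ℕ) (b : ℕ) (i : ℕ) = (a : ℕ)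
  rw [hi0]
  unfold nidxv
  simp

lemma jab_indep_a {n m : ℕ} {S : Finset (Fin n)} {hS : S.card = m} {hm3 : 3 ≤ m}
    (a a' b : Fin 3) {i : Fin n} (hi0 : (i : ℕ) ≠ 0) :
    jab m S hS hm3 a b i = jab m S hS hm3 a' b i := by
  by_cases h : (i : ℕ) < m
  · rw [jab_lt h, jab_lt h]
    congr 1
    apply Fin.ext
    show nidxv (a : ℕ) (b : ℕ) (i : ℕ) = nidxv (a' : ℕ) (b : ℕ) (i : ℕ)
    unfold nidxv
    rw [if_neg hi0, if_neg hi0]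
  · unfold jab; rw [dif_neg h, dif_neg h]

lemma support_three {n m r : ℕ} (hmn : m ≤ n) (hm3 : 3 ≤ m)
    {v : Fin n → Fin r → Fin n → F} (hv : IsDetDecomposition F n r v)
    (c : {S : Finset (Fin n) // S.card = m} → F) (k₁ k₂ : Fin r)
    (hsupp : ∀ k, Zv m v c k ≠ 0 → k = k₁ ∨ k = k₂) : c = 0 := by
  by_contra hc
  obtain ⟨S₀, hS₀⟩ : ∃ S₀, c S₀ ≠ 0 := by
    by_contra h; push_neg at h; exact hc (funext fun S => h S)
  have hn0 : 0 < n := by omega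
  obtain ⟨i0, hi0⟩ : ∃ p : Fin n, (p : ℕ) = 0 := ⟨⟨0, hn0⟩, rfl⟩
  have hi0t : i0 ∈ tops n m := mem_tops.mpr (by omega)
  have hdiag : ∀ a : Fin 3,
      (∑ k, Zv m v c k * tp m v (jab m S₀.1 S₀.2 hm3 a a) k) ≠ 0 := by
    intro a
    rw [Z_pair hv]
    have hsum : (∑ S : {S : Finset (Fin n) // S.card = m},
          c S * (bmat (F := F) (asg m (jab m S₀.1 S₀.2 hm3 a a) S.1 (ccd S.2))).det)
        = c S₀ * (bmat (F := F) (asg m (jab m S₀.1 S₀.2 hm3 a a) S₀.1 (ccd S₀.2))).det := by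
      refine Fintype.sum_eq_single S₀ fun S hSne => ?_
      rw [det_asg_eq_zero hmn S₀.2 S.2 (fun h => hSne (Subtype.ext h)) jab_mem jab_diag_inj,
        mul_zero]
    rw [hsum]
    exact mul_ne_zero hS₀ (det_asg_ne_zero hmn S₀.2 jab_mem jab_diag_inj)
  have hoff : ∀ a b : Fin 3, a ≠ b →
      (∑ k, Zv m v c k * tp m v (jab m S₀.1 S₀.2 hm3 a b) k) = 0 := by
    intro a b hab
    rw [Z_pair hv]
    refine Finset.sum_eq_zero fun S _ => ?_
    rw [det_asg_jab_zero hm3 hmn S₀.2 hab S.1 (ccd S.2), mul_zero]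
  set Y : Fin r → Fin 3 → F := fun k b =>
    ∏ i ∈ (tops n m).erase i0, v i k (jab m S₀.1 S₀.2 hm3 0 b i) with hY
  set X : Fin r → Fin 3 → F := fun k a =>
    v i0 k (S₀.1.orderEmbOfFin S₀.2 ⟨(a : ℕ), by have := a.2; omega⟩) with hX
  have hfact : ∀ (k : Fin r) (a b : Fin 3),
      tp m v (jab m S₀.1 S₀.2 hm3 a b) k = X k a * Y k b := by
    intro k a b
    show (∏ i ∈ tops n m, v i k (jab m S₀.1 S₀.2 hm3 a b i)) = _
    rw [← Finset.mul_prod_erase (tops n m) _ hi0t]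
    congr 1
    · rw [jab_at_zero a b hi0, hX]
    · rw [hY]
      exact Finset.prod_congr rfl fun i hi =>
        congrArg _ (jab_indep_a a 0 b (by
          have hm := Finset.mem_erase.mp hi
          intro h0
          exact hm.1 (Fin.ext (h0.trans hi0.symm))))
  have hnli : ¬ LinearIndependent F (fun b : Fin 3 => (![Y k₁ b, Y k₂ b] : Fin 2 → F)) := by
    intro hli
    have h := hli.fintype_card_le_finrank
    rw [Module.finrank_pi] at h
    simp at h
  obtain ⟨g, hg0, b₀, hb₀⟩ := Fintype.not_linearIndependent_iff.mp hnli
  have hYsum : ∀ kk : Fin r, kk = k₁ ∨ kk = k₂ → ∑ b, g b * Y kk b = 0 := by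
    intro kk hkk
    rcases hkk with rfl | rfl
    · have h := congrFun hg0 0
      simpa [Finset.sum_apply] using h
    · have h := congrFun hg0 1
      simpa [Finset.sum_apply] using h
  have hzero : (∑ b, g b * ∑ k, Zv m v c k * tp m v (jab m S₀.1 S₀.2 hm3 b₀ b) k) = 0 := by
    calc (∑ b, g b * ∑ k, Zv m v c k * tp m v (jab m S₀.1 S₀.2 hm3 b₀ b) k)
        = ∑ b, ∑ k, g b * (Zv m v c k * (X k b₀ * Y k b)) := by
          refine Finset.sum_congr rfl fun b _ => ?_
          rw [Finset.mul_sum]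
          exact Finset.sum_congr rfl fun k _ => by rw [hfact]
      _ = ∑ k, ∑ b, g b * (Zv m v c k * (X k b₀ * Y k b)) := Finset.sum_comm
      _ = ∑ k, (Zv m v c k * X k b₀) * ∑ b, g b * Y k b := by
          refine Finset.sum_congr rfl fun k _ => ?_
          rw [Finset.mul_sum]
          exact Finset.sum_congr rfl fun b _ => by ring
      _ = 0 := by
          refine Finset.sum_eq_zero fun k _ => ?_
          by_cases hk : Zv m v c k = 0
          · rw [hk]; ring
          · rw [hYsum k (hsupp k hk), mul_zero]
  have hb : (∑ b, g b * ∑ k, Zv m v c k * tp m v (jab m S₀.1 S₀.2 hm3 b₀ b) k)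
      = g b₀ * ∑ k, Zv m v c k * tp m v (jab m S₀.1 S₀.2 hm3 b₀ b₀) k := by
    refine Fintype.sum_eq_single b₀ fun b hb => ?_
    rw [hoff b₀ b (fun h => hb h.symm), mul_zero]
  rw [hb] at hzero
  exact (mul_ne_zero hb₀ (hdiag b₀)) hzero

end DetRankAux


/-- Over the field with `q` elements (`q` a prime power) and for `n ≥ 5`, the tensor rank
of the `n × n` determinant is at least `C(n,⌊n/2⌋) + log_q(C(n,⌊n/2⌋))`. -/
theorem trank_det_finite_field_lower_bound (q : ℕ) (hq : IsPrimePow q) (n : ℕ) (hn : 5 ≤ n)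
    (F : Type*) [Field F] [Fintype F] (hF : Fintype.card F = q)
    (r : ℕ) (v : Fin n → Fin r → Fin n → F) (hv : IsDetDecomposition F n r v) :
    (n.choose (n / 2) : ℝ) + Real.logb q (n.choose (n / 2)) ≤ (r : ℝ) := by
  classical
  have hq2 : 2 ≤ q := hq.two_le
  set m := n - n / 2 with hmdef
  have hm3 : 3 ≤ m := by omega
  have hmn : m ≤ n := by omega
  have hRchoose : n.choose (n / 2) = n.choose m := (Nat.choose_symm (by omega)).symm
  set R := n.choose m with hR
  have hRpos : 0 < R := Nat.choose_pos hmn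
  have hr1 : 1 ≤ r := by
    by_contra h
    have hr0 : r = 0 := by omega
    subst hr0
    have h1 := hv 1
    rw [Matrix.det_one] at h1
    simp at h1
  have hcard : Fintype.card {S : Finset (Fin n) // S.card = m} = R := by
    rw [Fintype.card_finset_len, Fintype.card_fin]
  set Φ : ({S : Finset (Fin n) // S.card = m} → F) × Fin r → (Fin r → F) :=
    fun p k => DetRankAux.Zv m v p.1 k + (if k = p.2 then 1 else 0) with hΦdef
  have hΦ : Function.Injective Φ := by
    rintro ⟨c, k⟩ ⟨c', k'⟩ h
    have hZd : ∀ k0, DetRankAux.Zv m v (c - c') k0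
        = (if k0 = k' then (1 : F) else 0) - (if k0 = k then 1 else 0) := by
      intro k0
      have h0 := congrFun h k0
      simp only [hΦdef] at h0
      rw [DetRankAux.Zv_sub]
      linear_combination h0
    have hcc : c - c' = 0 := by
      apply DetRankAux.support_three hmn hm3 hv _ k' k
      intro k0 hk0
      rw [hZd k0] at hk0
      by_contra hkk
      push_neg at hkk
      rw [if_neg hkk.1, if_neg hkk.2, sub_zero] at hk0
      exact hk0 rfl
    have hcc' : c = c' := by rwa [sub_eq_zero] at hcc
    subst hcc'
    have h0 := congrFun h k
    simp only [hΦdef, add_right_inj, if_pos rfl] at h0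
    by_cases hkk' : k = k'
    · exact Prod.ext rfl hkk'
    · rw [if_neg hkk'] at h0
      exact absurd h0 one_ne_zero
  have hineq := Fintype.card_le_of_injective Φ hΦ
  rw [Fintype.card_prod, Fintype.card_fun, Fintype.card_fun, hcard, hF,
    Fintype.card_fin] at hineq
  -- hineq : q ^ R * r ≤ q ^ r
  have hq1 : 1 < q := by omega
  have hRr : R ≤ r := by
    have h1 : q ^ R ≤ q ^ r := le_trans (Nat.le_mul_of_pos_right _ (by omega)) hineq
    exact (Nat.pow_le_pow_iff_right hq1).mp h1
  have hrq : r ≤ q ^ (r - R) := by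
    have h2 : q ^ R * r ≤ q ^ R * q ^ (r - R) := by
      rw [← pow_add, Nat.add_sub_cancel' hRr]
      exact hineq
    exact Nat.le_of_mul_le_mul_left h2 (Nat.pow_pos (by omega))
  have hq1R : (1 : ℝ) < (q : ℝ) := by exact_mod_cast hq1
  have hRposR : (0 : ℝ) < (R : ℝ) := by exact_mod_cast hRpos
  have hlogb : Real.logb q R ≤ (r : ℝ) - R := by
    have hle : (R : ℝ) ≤ ((q : ℝ)) ^ (r - R) := by
      exact_mod_cast le_trans hRr hrq
    have h3 : Real.logb q R ≤ Real.logb q ((q : ℝ) ^ (r - R)) := by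
      rw [Real.logb_le_logb hq1R hRposR (by positivity)]
      exact hle
    rwa [Real.logb_pow, Real.logb_self_eq_one hq1R, mul_one, Nat.cast_sub hRr] at h3
  rw [hRchoose]
  have hRrR : (R : ℝ) ≤ (r : ℝ) := by exact_mod_cast hRr
  push_cast
  push_cast at hlogb
  linarith
end

section
/- Let q ≥ 2 be a prime power and let F_q be the field with q elements. Then every rank-r tensor decomposition of the 4 × 4 determinant over F_q satisfies: r ≥ 9 if q = 2; r ≥ 8 if q ∈ {3, 4}; and r ≥ 7 for every other prime power q ≥ 5. -/
section DetRankAux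

variable {F : Type*} [Field F]

/-- Explicit 3×3 determinant of three row vectors. -/
def det3 (x y z : Fin 3 → F) : F :=
  x 0 * (y 1 * z 2 - y 2 * z 1) - x 1 * (y 0 * z 2 - y 2 * z 0) + x 2 * (y 0 * z 1 - y 1 * z 0)

/-- dot product on `Fin 3 → F`. -/
def dot3 (b x : Fin 3 → F) : F := b 0 * x 0 + b 1 * x 1 + b 2 * x 2

/-- standard basis vector -/
def e3 (i : Fin 3) : Fin 3 → F := fun j => if j = i then 1 else 0

lemma dot3_e3 (v : Fin 3 → F) (i : Fin 3) : dot3 v (e3 i) = v i := by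
  fin_cases i <;> simp [dot3, e3, Fin.ext_iff]

lemma det3_swap23 (x y z : Fin 3 → F) : det3 x y z = -det3 x z y := by
  unfold det3; ring

lemma det3_eq23 (x y : Fin 3 → F) : det3 x y y = 0 := by
  unfold det3; ring

/-- a rank-one alternating "matrix" is zero -/
lemma altOne (v w : Fin 3 → F) (h1 : ∀ j l, v j * w l = -(v l * w j))
    (h2 : ∀ j, v j * w j = 0) : ∀ j l, v j * w l = 0 := by
  intro j l
  have key : (v j * w l) * (v j * w l) = 0 := by
    calc (v j * w l) * (v j * w l) = (v j * w l) * (-(v l * w j)) := by rw [← h1 j l]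
    _ = -((v j * w j) * (v l * w l)) := by ring
    _ = 0 := by rw [h2 j]; ring
  exact mul_self_eq_zero.mp key

/-- cross injectivity: if all basis slices of det3 at `a` vanish then `a = 0`. -/
lemma det3_cross_inj (a : Fin 3 → F) (h : ∀ j l, det3 a (e3 j) (e3 l) = 0) : a = 0 := by
  funext m
  have h12 := h 1 2
  have h02 := h 0 2
  have h01 := h 0 1
  simp [det3, e3] at h12 h02 h01
  fin_cases m <;> simp_all

/-- two covectors on F³ have a common nonzero kernel vector -/
lemma exists_ker2 (b b' : Fin 3 → F) :
    ∃ z : Fin 3 → F, z ≠ 0 ∧ dot3 b z = 0 ∧ dot3 b' z = 0 := by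
  classical
  set M : Matrix (Fin 3) (Fin 3) F := Matrix.of ![b, b', 0] with hM
  have hdet : M.det = 0 := by
    apply Matrix.det_eq_zero_of_row_eq_zero 2
    intro j; simp [hM]
  obtain ⟨z, hz, hMz⟩ := (Matrix.exists_mulVec_eq_zero_iff).mpr hdet
  refine ⟨z, hz, ?_, ?_⟩
  · have h0 := congrFun hMz 0
    simpa [hM, Matrix.mulVec, dotProduct, Fin.sum_univ_three, dot3] using h0
  · have h1 := congrFun hMz 1
    simpa [hM, Matrix.mulVec, dotProduct, Fin.sum_univ_three, dot3] using h1

/-- rigidity core: with a common kernel vector of `b, B` on which `c` does not vanish,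
two rank-ones with the same quadratic part must be equal. -/
lemma rigid_aux (b c B C : Fin 3 → F)
    (H : ∀ j l, b j * c l + b l * c j = B j * C l + B l * C j)
    (D : ∀ j, b j * c j = B j * C j)
    (hb : b ≠ 0)
    (z : Fin 3 → F) (hz1 : dot3 b z = 0) (hz2 : dot3 B z = 0) (hz3 : dot3 c z ≠ 0) :
    ∀ j l, B j * C l = b j * c l := by
  have key : ∀ l, dot3 c z * b l = dot3 C z * B l := by
    intro l
    have h0 := H 0 l; have h1 := H 1 l; have h2 := H 2 l
    simp only [dot3] at hz1 hz2 ⊢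
    linear_combination z 0 * h0 + z 1 * h1 + z 2 * h2 - c l * hz1 + C l * hz2
  have hCz : dot3 C z ≠ 0 := by
    intro h0
    apply hb
    funext l
    have := key l
    rw [h0] at this
    simp at this
    rcases this with h | h
    · exact absurd h hz3
    · exact h
  -- w := (C·z) c - (c·z) C  satisfies  b⊗w alternating, hence w = 0
  have hw1 : ∀ j l, b j * (dot3 C z * c l - dot3 c z * C l)
      = -(b l * (dot3 C z * c j - dot3 c z * C j)) := by
    intro j l
    linear_combination dot3 C z * H j l - C l * key j - C j * key l
  have hw2 : ∀ j, b j * (dot3 C z * c j - dot3 c z * C j) = 0 := by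
    intro j
    linear_combination dot3 C z * D j - C j * key j
  have hw0 : ∀ j l, b j * (dot3 C z * c l - dot3 c z * C l) = 0 :=
    altOne _ _ hw1 hw2
  obtain ⟨j0, hj0⟩ : ∃ j0, b j0 ≠ 0 := by
    by_contra hcon
    push_neg at hcon
    exact hb (funext hcon)
  have hwz : ∀ l, dot3 C z * c l = dot3 c z * C l := by
    intro l
    have := hw0 j0 l
    rcases mul_eq_zero.mp this with h | h
    · exact absurd h hj0
    · exact sub_eq_zero.mp h
  intro j l
  have hmain : dot3 c z * dot3 C z * (B j * C l) = dot3 c z * dot3 C z * (b j * c l) := by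
    linear_combination (-(dot3 c z * C l)) * key j - (dot3 c z * b j) * hwz l
  exact mul_left_cancel₀ (mul_ne_zero hz3 hCz) hmain

lemma sq_cancel (x y : F) (h1 : 2*x = 2*y) (h2 : x^2 = y^2) : x = y := by
  have h : (x - y)^2 = 0 := by linear_combination x * h1 - h2
  have := pow_eq_zero_iff (n := 2) (by norm_num) |>.mp h
  exact sub_eq_zero.mp this

-- pointwise quadratic form equality
lemma Qpoint (b c B C : Fin 3 → F)
    (H : ∀ j l, b j * c l + b l * c j = B j * C l + B l * C j)
    (D : ∀ j, b j * c j = B j * C j) (z : Fin 3 → F) :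
    dot3 b z * dot3 c z = dot3 B z * dot3 C z := by
  simp only [dot3]
  linear_combination (z 0 * z 1) * H 0 1 + (z 0 * z 2) * H 0 2 + (z 1 * z 2) * H 1 2
    + (z 0 * z 0) * D 0 + (z 1 * z 1) * D 1 + (z 2 * z 2) * D 2

/-- if c is not "parallel" to b (witnessed at pivot j0), construct z with b·z = 0, c·z ≠ 0 -/
lemma nonpar_vec (b c : Fin 3 → F) (j0 l : Fin 3) (h : c l * b j0 ≠ c j0 * b l) :
    ∃ z : Fin 3 → F, dot3 b z = 0 ∧ dot3 c z ≠ 0 := by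
  classical
  refine ⟨fun m => (if m = l then b j0 else 0) - (if m = j0 then b l else 0), ?_, ?_⟩
  · have hne : l ≠ j0 := by rintro rfl; exact h rfl
    fin_cases l <;> fin_cases j0 <;> simp_all [dot3] <;> ring
  · have hne : l ≠ j0 := by rintro rfl; exact h rfl
    have : dot3 c (fun m => (if m = l then b j0 else 0) - (if m = j0 then b l else 0))
        = c l * b j0 - c j0 * b l := by
      fin_cases l <;> fin_cases j0 <;> simp_all [dot3] <;> ring
    rw [this]
    exact sub_ne_zero.mpr h

lemma exists_ne_zero_coord {b : Fin 3 → F} (hb : b ≠ 0) : ∃ j, b j ≠ 0 := by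
  by_contra hcon; push_neg at hcon; exact hb (funext hcon)

/-- main rigidity: two rank-one matrices with the same quadratic part are
equal or transposes of each other -/
lemma rigidity (b c B C : Fin 3 → F)
    (H : ∀ j l, b j * c l + b l * c j = B j * C l + B l * C j)
    (D : ∀ j, b j * c j = B j * C j)
    (hb : b ≠ 0) (hc : c ≠ 0) (hB : B ≠ 0) (hC : C ≠ 0) :
    (∀ j l, B j * C l = b j * c l) ∨ (∀ j l, B j * C l = c j * b l) := by
  obtain ⟨j0, hj0⟩ := exists_ne_zero_coord hb
  by_cases hpar : ∀ l, c l * b j0 = c j0 * b l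
  · obtain ⟨j1, hj1⟩ := exists_ne_zero_coord hB
    by_cases hpar' : ∀ l, C l * B j1 = C j1 * B l
    · -- both pairs parallel
      left
      set μ := c j0 * (b j0)⁻¹ with hμ
      set ν := C j1 * (B j1)⁻¹ with hν
      have hcv : ∀ l, c l = μ * b l := by
        intro l; rw [hμ]; field_simp; linear_combination hpar l
      have hCv : ∀ l, C l = ν * B l := by
        intro l; rw [hν]; field_simp; linear_combination hpar' l
      intro j l
      rw [hcv l, hCv l]
      have Hjl := H j l
      rw [hcv j, hcv l, hCv j, hCv l] at Hjl
      have Djl := D j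
      rw [hcv j, hCv j] at Djl
      have Dll := D l
      rw [hcv l, hCv l] at Dll
      have h1 : 2 * (μ * (b j * b l)) = 2 * (ν * (B j * B l)) := by linear_combination Hjl
      have h2 : (μ * (b j * b l))^2 = (ν * (B j * B l))^2 := by
        linear_combination (μ * b l * b l) * Djl + (ν * B j * B j) * Dll
      have := sq_cancel _ _ h1 h2
      linear_combination -this
    · push_neg at hpar'
      obtain ⟨l, hl⟩ := hpar'
      obtain ⟨z, hz1, hz2⟩ := nonpar_vec B C j1 l hl
      have hq := Qpoint b c B C H D z
      rw [hz1, zero_mul] at hq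
      rcases mul_eq_zero.mp hq with hbz | hcz
      · left
        intro j l'
        exact (rigid_aux B C b c (fun j l => (H j l).symm) (fun j => (D j).symm)
          hB z hz1 hbz hz2 j l').symm
      · right
        intro j l'
        have hres := rigid_aux B C c b
          (fun j l => by linear_combination (H j l).symm) (fun j => by linear_combination (D j).symm)
          hB z hz1 hcz hz2 j l'
        exact hres.symm
  · push_neg at hpar
    obtain ⟨l, hl⟩ := hpar
    obtain ⟨z, hz1, hz2⟩ := nonpar_vec b c j0 l hl
    have hq := Qpoint b c B C H D z
    rw [hz1, zero_mul] at hq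
    rcases mul_eq_zero.mp hq.symm with hBz | hCz
    · left
      exact rigid_aux b c B C H D hb z hz1 hBz hz2
    · right
      intro j l'
      have hres := rigid_aux b c C B (fun j l => by linear_combination H j l)
        (fun j => by linear_combination D j) hb z hz1 hCz hz2 l' j
      linear_combination hres

def Det3Decomp (p q s : Fin 4 → Fin 3 → F) : Prop :=
  ∀ x y z : Fin 3 → F,
    det3 x y z = ∑ k : Fin 4, dot3 (p k) x * (dot3 (q k) y * dot3 (s k) z)

/-- the slice of det3 at a nonzero vector is not a scaled rank-one matrix -/
lemma cross_ne_single (a : Fin 3 → F) (ha : a ≠ 0) (x : F) (u w : Fin 3 → F)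
    (h : ∀ j l, det3 a (e3 j) (e3 l) = x * u j * w l) : False := by
  have h1 : ∀ j l, (x * u j) * w l = -((x * u l) * w j) := by
    intro j l
    have := det3_swap23 a (e3 j) (e3 l)
    rw [h j l, h l j] at this
    linear_combination this
  have h2 : ∀ j, (x * u j) * w j = 0 := by
    intro j
    have := det3_eq23 a (e3 j)
    rw [h j j] at this
    linear_combination this
  have h0 := altOne _ _ h1 h2
  apply ha
  apply det3_cross_inj
  intro j l
  rw [h j l]
  linear_combination h0 j l

lemma decomp_slice (p q s : Fin 4 → Fin 3 → F) (hv3 : Det3Decomp p q s) :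
    ∀ (a : Fin 3 → F) (j l : Fin 3),
    det3 a (e3 j) (e3 l) = dot3 (p 0) a * (q 0 j * s 0 l) + dot3 (p 1) a * (q 1 j * s 1 l)
      + dot3 (p 2) a * (q 2 j * s 2 l) + dot3 (p 3) a * (q 3 j * s 3 l) := by
  intro a j l
  have := hv3 a (e3 j) (e3 l)
  rw [Fin.sum_univ_four] at this
  simpa [dot3_e3] using this

/-- if the coefficients of all terms but one vanish at a nonzero point: contradiction -/
lemma dead3 (p q s : Fin 4 → Fin 3 → F) (hv3 : Det3Decomp p q s)
    (a : Fin 3 → F) (ha : a ≠ 0) (k4 : Fin 4)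
    (h : ∀ k, k ≠ k4 → dot3 (p k) a = 0) : False := by
  apply cross_ne_single a ha (dot3 (p k4) a) (q k4) (s k4)
  intro j l
  have hs := decomp_slice p q s hv3 a j l
  fin_cases k4
  · show det3 a (e3 j) (e3 l) = dot3 (p 0) a * q 0 j * s 0 l
    rw [h 1 (by decide), h 2 (by decide), h 3 (by decide)] at hs
    rw [hs]; ring
  · show det3 a (e3 j) (e3 l) = dot3 (p 1) a * q 1 j * s 1 l
    rw [h 0 (by decide), h 2 (by decide), h 3 (by decide)] at hs
    rw [hs]; ring
  · show det3 a (e3 j) (e3 l) = dot3 (p 2) a * q 2 j * s 2 l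
    rw [h 0 (by decide), h 1 (by decide), h 3 (by decide)] at hs
    rw [hs]; ring
  · show det3 a (e3 j) (e3 l) = dot3 (p 3) a * q 3 j * s 3 l
    rw [h 0 (by decide), h 1 (by decide), h 2 (by decide)] at hs
    rw [hs]; ring

lemma rigidity_scaled (b c B C : Fin 3 → F) (t : F) (ht : t ≠ 0)
    (H : ∀ j l, b j * c l + b l * c j = t * (B j * C l) + t * (B l * C j))
    (D : ∀ j, b j * c j = t * (B j * C j))
    (hb : b ≠ 0) (hc : c ≠ 0) (hB : B ≠ 0) (hC : C ≠ 0) :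
    (∀ j l, t * (B j * C l) = b j * c l) ∨ (∀ j l, t * (B j * C l) = c j * b l) := by
  obtain ⟨jB, hjB⟩ := exists_ne_zero_coord hB
  have hB' : (fun j => t * B j) ≠ 0 := by
    intro h0
    exact mul_ne_zero ht hjB (congrFun h0 jB)
  have hres := rigidity b c (fun j => t * B j) C
    (fun j l => by linear_combination H j l) (fun j => by linear_combination D j)
    hb hc hB' hC
  rcases hres with h | h
  · left; intro j l; linear_combination h j l
  · right; intro j l; linear_combination h j l

lemma det3_lin_fst (α β : F) (u w y z : Fin 3 → F) :
    det3 (fun m => α * u m - β * w m) y z = α * det3 u y z - β * det3 w y z := by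
  simp only [det3]
  ring

lemma collide (a b : Fin 3 → F) (G : Fin 3 → Fin 3 → F) (al be ga de : F)
    (h1 : ∀ j l, al * det3 a (e3 j) (e3 l) = be * G j l)
    (h2 : ∀ j l, ga * det3 b (e3 j) (e3 l) = de * G j l) :
    ∀ m, (de * al) * a m = (be * ga) * b m := by
  have h := det3_cross_inj (fun m => (de * al) * a m - (be * ga) * b m) (fun j l => by
    rw [det3_lin_fst]
    linear_combination de * h1 j l - be * h2 j l)
  intro m
  have := congrFun h m
  simpa [sub_eq_zero] using this

theorem no_det3_decomp4 (p q s : Fin 4 → Fin 3 → F) : ¬ Det3Decomp p q s := by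
  intro hv3
  obtain ⟨a12, ha12, h0a, h1a⟩ := exists_ker2 (p 0) (p 1)
  obtain ⟨a34, ha34, h2b, h3b⟩ := exists_ker2 (p 2) (p 3)
  obtain ⟨a13, ha13, h0c, h2c⟩ := exists_ker2 (p 0) (p 2)
  -- coefficient nonzeroness
  have hc2 : dot3 (p 2) a12 ≠ 0 := by
    intro h
    refine dead3 p q s hv3 a12 ha12 3 ?_
    intro k hk; fin_cases k
    · exact h0a
    · exact h1a
    · exact h
    · exact absurd rfl hk
  have hc3 : dot3 (p 3) a12 ≠ 0 := by
    intro h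
    refine dead3 p q s hv3 a12 ha12 2 ?_
    intro k hk; fin_cases k
    · exact h0a
    · exact h1a
    · exact absurd rfl hk
    · exact h
  have hd0 : dot3 (p 0) a34 ≠ 0 := by
    intro h
    refine dead3 p q s hv3 a34 ha34 1 ?_
    intro k hk; fin_cases k
    · exact h
    · exact absurd rfl hk
    · exact h2b
    · exact h3b
  have hd1 : dot3 (p 1) a34 ≠ 0 := by
    intro h
    refine dead3 p q s hv3 a34 ha34 0 ?_
    intro k hk; fin_cases k
    · exact absurd rfl hk
    · exact h
    · exact h2b
    · exact h3b
  have he1 : dot3 (p 1) a13 ≠ 0 := by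
    intro h
    refine dead3 p q s hv3 a13 ha13 3 ?_
    intro k hk; fin_cases k
    · exact h0c
    · exact h
    · exact h2c
    · exact absurd rfl hk
  have he3 : dot3 (p 3) a13 ≠ 0 := by
    intro h
    refine dead3 p q s hv3 a13 ha13 1 ?_
    intro k hk; fin_cases k
    · exact h0c
    · exact absurd rfl hk
    · exact h2c
    · exact h
  -- relations
  have r12 : ∀ j l, det3 a12 (e3 j) (e3 l)
      = dot3 (p 2) a12 * (q 2 j * s 2 l) + dot3 (p 3) a12 * (q 3 j * s 3 l) := by
    intro j l
    have h := decomp_slice p q s hv3 a12 j l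
    rw [h0a, h1a] at h
    linear_combination h
  have r34 : ∀ j l, det3 a34 (e3 j) (e3 l)
      = dot3 (p 0) a34 * (q 0 j * s 0 l) + dot3 (p 1) a34 * (q 1 j * s 1 l) := by
    intro j l
    have h := decomp_slice p q s hv3 a34 j l
    rw [h2b, h3b] at h
    linear_combination h
  have r13 : ∀ j l, det3 a13 (e3 j) (e3 l)
      = dot3 (p 1) a13 * (q 1 j * s 1 l) + dot3 (p 3) a13 * (q 3 j * s 3 l) := by
    intro j l
    have h := decomp_slice p q s hv3 a13 j l
    rw [h0c, h2c] at h
    linear_combination h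
  -- vector nonzeroness
  have hs3 : s 3 ≠ 0 := by
    intro h
    refine cross_ne_single a12 ha12 (dot3 (p 2) a12) (q 2) (s 2) (fun j l => ?_)
    have h' : s 3 l = 0 := by rw [h]; simp
    rw [r12 j l]
    linear_combination (dot3 (p 3) a12 * q 3 j) * h'
  have hq3 : q 3 ≠ 0 := by
    intro h
    refine cross_ne_single a12 ha12 (dot3 (p 2) a12) (q 2) (s 2) (fun j l => ?_)
    have h' : q 3 j = 0 := by rw [h]; simp
    rw [r12 j l]
    linear_combination (dot3 (p 3) a12 * s 3 l) * h'
  have hs2 : s 2 ≠ 0 := by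
    intro h
    refine cross_ne_single a12 ha12 (dot3 (p 3) a12) (q 3) (s 3) (fun j l => ?_)
    have h' : s 2 l = 0 := by rw [h]; simp
    rw [r12 j l]
    linear_combination (dot3 (p 2) a12 * q 2 j) * h'
  have hq2 : q 2 ≠ 0 := by
    intro h
    refine cross_ne_single a12 ha12 (dot3 (p 3) a12) (q 3) (s 3) (fun j l => ?_)
    have h' : q 2 j = 0 := by rw [h]; simp
    rw [r12 j l]
    linear_combination (dot3 (p 2) a12 * s 2 l) * h'
  have hs1 : s 1 ≠ 0 := by
    intro h
    refine cross_ne_single a34 ha34 (dot3 (p 0) a34) (q 0) (s 0) (fun j l => ?_)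
    have h' : s 1 l = 0 := by rw [h]; simp
    rw [r34 j l]
    linear_combination (dot3 (p 1) a34 * q 1 j) * h'
  have hq1 : q 1 ≠ 0 := by
    intro h
    refine cross_ne_single a34 ha34 (dot3 (p 0) a34) (q 0) (s 0) (fun j l => ?_)
    have h' : q 1 j = 0 := by rw [h]; simp
    rw [r34 j l]
    linear_combination (dot3 (p 1) a34 * s 1 l) * h'
  have hs0 : s 0 ≠ 0 := by
    intro h
    refine cross_ne_single a34 ha34 (dot3 (p 1) a34) (q 1) (s 1) (fun j l => ?_)
    have h' : s 0 l = 0 := by rw [h]; simp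
    rw [r34 j l]
    linear_combination (dot3 (p 0) a34 * q 0 j) * h'
  have hq0 : q 0 ≠ 0 := by
    intro h
    refine cross_ne_single a34 ha34 (dot3 (p 1) a34) (q 1) (s 1) (fun j l => ?_)
    have h' : q 0 j = 0 := by rw [h]; simp
    rw [r34 j l]
    linear_combination (dot3 (p 0) a34 * s 0 l) * h'
  -- abbreviations
  set c2 := dot3 (p 2) a12 with hc2def
  set c3 := dot3 (p 3) a12 with hc3def
  set d0 := dot3 (p 0) a34 with hd0def
  set d1 := dot3 (p 1) a34 with hd1def
  set g1 := dot3 (p 1) a13 with hg1def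
  set g3 := dot3 (p 3) a13 with hg3def
  -- rigidity application 1: pair (2,3) at a12
  set t2 := -(c2 * c3⁻¹) with ht2def
  have ht2 : t2 ≠ 0 := by
    rw [ht2def]
    exact neg_ne_zero.mpr (mul_ne_zero hc2 (inv_ne_zero hc3))
  have hct : c3 * t2 = -c2 := by
    rw [ht2def]
    field_simp
  have H1 : ∀ j l, q 3 j * s 3 l + q 3 l * s 3 j = t2 * (q 2 j * s 2 l) + t2 * (q 2 l * s 2 j) := by
    intro j l
    have key : c2 * (q 2 j * s 2 l + q 2 l * s 2 j) + c3 * (q 3 j * s 3 l + q 3 l * s 3 j) = 0 := by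
      linear_combination det3_swap23 a12 (e3 j) (e3 l) - r12 j l - r12 l j
    linear_combination c3⁻¹ * key - (q 3 j * s 3 l + q 3 l * s 3 j) * mul_inv_cancel₀ hc3
  have D1 : ∀ j, q 3 j * s 3 j = t2 * (q 2 j * s 2 j) := by
    intro j
    have key : c2 * (q 2 j * s 2 j) + c3 * (q 3 j * s 3 j) = 0 := by
      linear_combination det3_eq23 a12 (e3 j) - r12 j j
    linear_combination c3⁻¹ * key - (q 3 j * s 3 j) * mul_inv_cancel₀ hc3
  have hR2 := rigidity_scaled (q 3) (s 3) (q 2) (s 2) t2 ht2 H1 D1 hq3 hs3 hq2 hs2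
  -- rigidity application 2: pair (1,3) at a13
  set t1 := -(g1 * g3⁻¹) with ht1def
  have ht1 : t1 ≠ 0 := by
    rw [ht1def]
    exact neg_ne_zero.mpr (mul_ne_zero he1 (inv_ne_zero he3))
  have hgt : g3 * t1 = -g1 := by
    rw [ht1def]
    field_simp
  have H2 : ∀ j l, q 3 j * s 3 l + q 3 l * s 3 j = t1 * (q 1 j * s 1 l) + t1 * (q 1 l * s 1 j) := by
    intro j l
    have key : g1 * (q 1 j * s 1 l + q 1 l * s 1 j) + g3 * (q 3 j * s 3 l + q 3 l * s 3 j) = 0 := by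
      linear_combination det3_swap23 a13 (e3 j) (e3 l) - r13 j l - r13 l j
    linear_combination g3⁻¹ * key - (q 3 j * s 3 l + q 3 l * s 3 j) * mul_inv_cancel₀ he3
  have D2 : ∀ j, q 3 j * s 3 j = t1 * (q 1 j * s 1 j) := by
    intro j
    have key : g1 * (q 1 j * s 1 j) + g3 * (q 3 j * s 3 j) = 0 := by
      linear_combination det3_eq23 a13 (e3 j) - r13 j j
    linear_combination g3⁻¹ * key - (q 3 j * s 3 j) * mul_inv_cancel₀ he3
  have hR1 := rigidity_scaled (q 3) (s 3) (q 1) (s 1) t1 ht1 H2 D2 hq3 hs3 hq1 hs1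
  -- rigidity application 3: pair (0,3) via a34 and hR1
  set t0 := -(d0 * t1 * d1⁻¹) with ht0def
  have ht0 : t0 ≠ 0 := by
    rw [ht0def]
    exact neg_ne_zero.mpr (mul_ne_zero (mul_ne_zero hd0 ht1) (inv_ne_zero hd1))
  have hdt : d1 * t0 = -(d0 * t1) := by
    rw [ht0def]
    field_simp
  have hq1sym : ∀ j l, t1 * (q 1 j * s 1 l + q 1 l * s 1 j)
      = q 3 j * s 3 l + q 3 l * s 3 j := by
    rcases hR1 with h | h <;> intro j l <;> linear_combination h j l + h l j
  have hq1diag : ∀ j, t1 * (q 1 j * s 1 j) = q 3 j * s 3 j := by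
    rcases hR1 with h | h <;> intro j <;> linear_combination h j j
  have H0 : ∀ j l, q 3 j * s 3 l + q 3 l * s 3 j = t0 * (q 0 j * s 0 l) + t0 * (q 0 l * s 0 j) := by
    intro j l
    have key : d0 * (q 0 j * s 0 l + q 0 l * s 0 j) + d1 * (q 1 j * s 1 l + q 1 l * s 1 j) = 0 := by
      linear_combination det3_swap23 a34 (e3 j) (e3 l) - r34 j l - r34 l j
    linear_combination (t1 * d1⁻¹) * key - (d1 * d1⁻¹) * hq1sym j l
      - (q 3 j * s 3 l + q 3 l * s 3 j) * mul_inv_cancel₀ hd1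
  have D0 : ∀ j, q 3 j * s 3 j = t0 * (q 0 j * s 0 j) := by
    intro j
    have key : d0 * (q 0 j * s 0 j) + d1 * (q 1 j * s 1 j) = 0 := by
      linear_combination det3_eq23 a34 (e3 j) - r34 j j
    linear_combination (t1 * d1⁻¹) * key - (d1 * d1⁻¹) * hq1diag j
      - (q 3 j * s 3 j) * mul_inv_cancel₀ hd1
  have hR0 := rigidity_scaled (q 3) (s 3) (q 0) (s 0) t0 ht0 H0 D0 hq3 hs3 hq0 hs0
  have hE34core : ∀ (X : Fin 3 → Fin 3 → F),
      (∀ j l, t0 * (q 0 j * s 0 l) = X j l) → (∀ j l, t1 * (q 1 j * s 1 l) = X j l) →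
      a34 = 0 := by
    intro X h0 h1
    apply det3_cross_inj
    intro j l
    have hmain : (t0 * t1) * det3 a34 (e3 j) (e3 l) = 0 := by
      linear_combination (t0*t1) * r34 j l + (d0 * t1) * h0 j l + (d1 * t0) * h1 j l
        + (X j l) * hdt
    rcases mul_eq_zero.mp hmain with h | h
    · exact absurd h (mul_ne_zero ht0 ht1)
    · exact h
  rcases hR2 with hL | hRr
  · -- first branch: slice at a12 vanishes identically, contradiction
    have hE0 : ∀ j l, det3 a12 (e3 j) (e3 l) = 0 := by
      intro j l
      linear_combination r12 j l + (q 2 j * s 2 l) * hct - c3 * hL j l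
    exact absurd (det3_cross_inj a12 hE0) ha12
  · have hE12 : ∀ j l, (1:F) * det3 a12 (e3 j) (e3 l)
        = c3 * (q 3 j * s 3 l - s 3 j * q 3 l) := by
      intro j l
      linear_combination r12 j l + (q 2 j * s 2 l) * hct - c3 * hRr j l
    have finish : ∀ (de : F), de ≠ 0 →
        (∀ j l, (t0*t1) * det3 a34 (e3 j) (e3 l) = de * (q 3 j * s 3 l - s 3 j * q 3 l)) →
        False := by
      intro de hde hE34
      have hcol := collide a12 a34 (fun j l => q 3 j * s 3 l - s 3 j * q 3 l)
        1 c3 (t0*t1) de hE12 hE34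
      have hdot : (de * 1) * dot3 (p 2) a12 = (c3 * (t0*t1)) * dot3 (p 2) a34 := by
        simp only [dot3]
        linear_combination p 2 0 * hcol 0 + p 2 1 * hcol 1 + p 2 2 * hcol 2
      rw [h2b, mul_zero] at hdot
      rcases mul_eq_zero.mp hdot with h | h
      · simp at h
        exact hde h
      · exact hc2 h
    rcases hR0 with h0 | h0 <;> rcases hR1 with h1 | h1
    · exact absurd (hE34core (fun j l => q 3 j * s 3 l) h0 h1) ha34
    · -- h0 : B, h1 : Bt : mixed
      refine finish (d0 * t1) (mul_ne_zero hd0 ht1) ?_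
      intro j l
      linear_combination (t0*t1) * r34 j l + (d0 * t1) * h0 j l + (d1 * t0) * h1 j l
        + (s 3 j * q 3 l) * hdt
    · -- h0 : Bt, h1 : B : mixed, opposite sign
      refine finish (-(d0 * t1)) (neg_ne_zero.mpr (mul_ne_zero hd0 ht1)) ?_
      intro j l
      linear_combination (t0*t1) * r34 j l + (d0 * t1) * h0 j l + (d1 * t0) * h1 j l
        + (q 3 j * s 3 l) * hdt
    · exact absurd (hE34core (fun j l => s 3 j * q 3 l) h0 h1) ha34



/-- embed F³ into F⁴ skipping coordinate `t` -/
def emb4 (t : Fin 4) (x : Fin 3 → F) : Fin 4 → F :=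
  fun j => ∑ i, x i * (if j = t.succAbove i then 1 else 0)

lemma emb4_succAbove (t : Fin 4) (x : Fin 3 → F) (i : Fin 3) :
    emb4 t x (t.succAbove i) = x i := by
  unfold emb4
  rw [Finset.sum_eq_single i]
  · simp
  · intro b _ hb
    simp [Fin.succAbove_right_injective.ne_iff.mpr hb.symm ]
  · simp

lemma emb4_self (t : Fin 4) (x : Fin 3 → F) : emb4 t x t = 0 := by
  unfold emb4
  apply Finset.sum_eq_zero
  intro i _
  simp [(Fin.succAbove_ne t i).symm]

lemma det_emb (a : Fin 4 → F) (t : Fin 4) (x y z : Fin 3 → F) :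
    (Matrix.of ![a, emb4 t x, emb4 t y, emb4 t z]).det
      = (-1)^(t:ℕ) * a t * det3 x y z := by
  rw [Matrix.det_succ_column _ t, Fin.sum_univ_four]
  simp only [Matrix.of_apply, Matrix.cons_val', Matrix.cons_val_zero, Matrix.cons_val_one,
    Matrix.head_cons, Matrix.cons_val_two, Matrix.tail_cons, Matrix.cons_val_three,
    Matrix.empty_val', Matrix.cons_val_fin_one]
  rw [emb4_self, emb4_self, emb4_self]
  simp only [mul_zero, zero_mul, add_zero, zero_add, mul_zero]
  rw [Matrix.det_fin_three]
  simp only [Matrix.submatrix_apply]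
  norm_num
  left
  simp only [emb4_succAbove]
  simp only [Matrix.cons_val]
  unfold det3
  ring

lemma row_factor (t : Fin 4) (w : Fin 4 → F) (x : Fin 3 → F) :
    (∑ j, w j * emb4 t x j) = dot3 (fun idx => w (t.succAbove idx)) x := by
  rw [Fin.sum_univ_succAbove _ t, emb4_self, mul_zero, zero_add]
  rw [Fin.sum_univ_three]
  simp only [emb4_succAbove, dot3]

lemma reduce_to_det3 {m : ℕ} (v : Fin 4 → Fin m → Fin 4 → F)
    (hv : IsDetDecomposition F 4 m v)
    (a : Fin 4 → F) (t : Fin 4) (hat : a t ≠ 0)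
    (S : Finset (Fin m)) (hS : S.card = 4)
    (hkill : ∀ k ∉ S, (∑ j, v 0 k j * a j) = 0) :
    ∃ p q s : Fin 4 → Fin 3 → F, Det3Decomp p q s := by
  classical
  set c : F := (-1)^(t:ℕ) * a t with hc
  have hc0 : c ≠ 0 := by
    rw [hc]
    exact mul_ne_zero (pow_ne_zero _ (neg_ne_zero.mpr one_ne_zero)) hat
  have eqv : {k // k ∈ S} ≃ Fin 4 := S.equivFinOfCardEq hS
  set g : Fin 4 → Fin m := fun i => (eqv.symm i : Fin m) with hg
  refine ⟨fun i => fun idx => (c⁻¹ * (∑ j, v 0 (g i) j * a j)) * (v 1 (g i) (t.succAbove idx)),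
          fun i => fun idx => v 2 (g i) (t.succAbove idx),
          fun i => fun idx => v 3 (g i) (t.succAbove idx), ?_⟩
  intro x y z
  have hA := hv (Matrix.of ![a, emb4 t x, emb4 t y, emb4 t z])
  rw [det_emb, ← hc] at hA
  -- rewrite each product term
  have hterm : ∀ k : Fin m,
      (∏ i : Fin 4, ∑ j, v i k j * (Matrix.of ![a, emb4 t x, emb4 t y, emb4 t z]) i j)
      = (∑ j, v 0 k j * a j) * (dot3 (fun idx => v 1 k (t.succAbove idx)) x
          * (dot3 (fun idx => v 2 k (t.succAbove idx)) y
          * dot3 (fun idx => v 3 k (t.succAbove idx)) z)) := by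
    intro k
    rw [Fin.prod_univ_four]
    simp only [Matrix.of_apply, Matrix.cons_val', Matrix.cons_val_zero, Matrix.cons_val_one,
      Matrix.head_cons, Matrix.cons_val_two, Matrix.tail_cons, Matrix.cons_val_three,
      Matrix.empty_val', Matrix.cons_val_fin_one, Matrix.head_fin_const]
    rw [row_factor, row_factor, row_factor]
    ring
  rw [Finset.sum_congr rfl (fun k _ => hterm k)] at hA
  -- restrict the sum to S
  have hsub : ∑ k ∈ S, ((∑ j, v 0 k j * a j) * (dot3 (fun idx => v 1 k (t.succAbove idx)) x
          * (dot3 (fun idx => v 2 k (t.succAbove idx)) y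
          * dot3 (fun idx => v 3 k (t.succAbove idx)) z)))
      = ∑ k : Fin m, ((∑ j, v 0 k j * a j) * (dot3 (fun idx => v 1 k (t.succAbove idx)) x
          * (dot3 (fun idx => v 2 k (t.succAbove idx)) y
          * dot3 (fun idx => v 3 k (t.succAbove idx)) z))) := by
    apply Finset.sum_subset (Finset.subset_univ S)
    intro k _ hk
    rw [hkill k hk, zero_mul]
  rw [← hsub] at hA
  -- reindex the sum over S by Fin 4
  have hreindex : ∑ k ∈ S, ((∑ j, v 0 k j * a j) * (dot3 (fun idx => v 1 k (t.succAbove idx)) x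
          * (dot3 (fun idx => v 2 k (t.succAbove idx)) y
          * dot3 (fun idx => v 3 k (t.succAbove idx)) z)))
      = ∑ i : Fin 4, ((∑ j, v 0 (g i) j * a j)
          * (dot3 (fun idx => v 1 (g i) (t.succAbove idx)) x
          * (dot3 (fun idx => v 2 (g i) (t.succAbove idx)) y
          * dot3 (fun idx => v 3 (g i) (t.succAbove idx)) z))) := by
    rw [← Finset.sum_attach S]
    exact (Equiv.sum_comp eqv.symm _).symm
  rw [hreindex] at hA
  -- final algebra
  have : det3 x y z = c⁻¹ * (c * det3 x y z) := by
    field_simp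
  rw [this, hA, Finset.mul_sum]
  apply Finset.sum_congr rfl
  intro i _
  simp only [dot3]
  ring

/-- three covectors on F⁴ have a common nonzero kernel vector -/
lemma exists_ker3 (b₀ b₁ b₂ : Fin 4 → F) :
    ∃ z : Fin 4 → F, z ≠ 0 ∧ (∑ j, b₀ j * z j) = 0 ∧ (∑ j, b₁ j * z j) = 0
      ∧ (∑ j, b₂ j * z j) = 0 := by
  classical
  set M : Matrix (Fin 4) (Fin 4) F := Matrix.of ![b₀, b₁, b₂, 0] with hM
  have hdet : M.det = 0 := by
    apply Matrix.det_eq_zero_of_row_eq_zero 3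
    intro j; simp [hM]
  obtain ⟨z, hz, hMz⟩ := (Matrix.exists_mulVec_eq_zero_iff).mpr hdet
  refine ⟨z, hz, ?_, ?_, ?_⟩
  · have h0 := congrFun hMz 0
    simpa [hM, Matrix.mulVec, dotProduct] using h0
  · have h1 := congrFun hMz 1
    simpa [hM, Matrix.mulVec, dotProduct] using h1
  · have h2 := congrFun hMz 2
    simpa [hM, Matrix.mulVec, dotProduct] using h2

lemma exists_pivot4 {a : Fin 4 → F} (ha : a ≠ 0) : ∃ t, a t ≠ 0 := by
  by_contra h; push_neg at h; exact ha (funext h)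

/-- padding a decomposition with zero terms -/
lemma pad_decomp {r m : ℕ} (hrm : r ≤ m) (v : Fin 4 → Fin r → Fin 4 → F)
    (hv : IsDetDecomposition F 4 r v) :
    ∃ v' : Fin 4 → Fin m → Fin 4 → F, IsDetDecomposition F 4 m v' := by
  classical
  refine ⟨fun i k j => if h : (k : ℕ) < r then v i ⟨k, h⟩ j else 0, ?_⟩
  intro A
  rw [hv A]
  have hz : ∀ k : Fin m, k ∉ Finset.univ.map (Fin.castLEEmb hrm) →
      (∏ i : Fin 4, ∑ j : Fin 4,
        (if h : (k : ℕ) < r then v i ⟨k, h⟩ j else 0) * A i j) = 0 := by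
    intro k hk
    have hkr : ¬ ((k : ℕ) < r) := by
      intro hlt
      apply hk
      simp only [Finset.mem_map, Finset.mem_univ, true_and]
      exact ⟨⟨(k:ℕ), hlt⟩, by ext; simp⟩
    apply Finset.prod_eq_zero (Finset.mem_univ (0 : Fin 4))
    simp [hkr]
  rw [← Finset.sum_subset (Finset.subset_univ (Finset.univ.map (Fin.castLEEmb hrm))) 
        (fun k _ hk => hz k hk)]
  rw [Finset.sum_map]
  apply Finset.sum_congr rfl
  intro x _
  apply Finset.prod_congr rfl
  intro i _
  apply Finset.sum_congr rfl
  intro j _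
  have hx : ((Fin.castLEEmb hrm) x : ℕ) < r := x.isLt
  simp only [hx, dif_pos]
  congr

open Finset in
/-- each linear form on F⁴ (card F = 2) has at least 8 zeros -/
lemma kernel_big [Fintype F] [DecidableEq F] (hcard : Fintype.card F = 2) (w : Fin 4 → F) :
    8 ≤ (Finset.univ.filter (fun a : Fin 4 → F => (∑ j, w j * a j) = 0)).card := by
  classical
  have hfun3 : Fintype.card (Fin 3 → F) = 8 := by
    rw [Fintype.card_fun, hcard]; norm_num
  by_cases hw : ∀ j, w j = 0
  · have : (Finset.univ.filter (fun a : Fin 4 → F => (∑ j, w j * a j) = 0)) = Finset.univ := by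
      apply Finset.filter_true_of_mem
      intro a _
      apply Finset.sum_eq_zero
      intro j _
      rw [hw j, zero_mul]
    rw [this, Finset.card_univ, Fintype.card_fun, hcard]
    norm_num
  · push_neg at hw
    obtain ⟨j0, hj0⟩ := hw
    set ι : (Fin 3 → F) → (Fin 4 → F) := fun x => fun j =>
      (if j = j0 then -((w j0)⁻¹ * ∑ i, w (j0.succAbove i) * x i) else 0) + emb4 j0 x j
      with hι
    have hι_sA : ∀ x i, ι x (j0.succAbove i) = x i := by
      intro x i
      rw [hι]
      simp [emb4_succAbove, Fin.succAbove_ne j0 i]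
    have hι_mem : ∀ x, ι x ∈ Finset.univ.filter (fun a : Fin 4 → F => (∑ j, w j * a j) = 0) := by
      intro x
      simp only [Finset.mem_filter, Finset.mem_univ, true_and]
      rw [Fin.sum_univ_succAbove _ j0]
      have h1 : ι x j0 = -((w j0)⁻¹ * ∑ i, w (j0.succAbove i) * x i) := by
        rw [hι]; simp [emb4_self]
      rw [h1]
      have h2 : ∀ i : Fin 3, w (j0.succAbove i) * ι x (j0.succAbove i)
          = w (j0.succAbove i) * x i := by
        intro i; rw [hι_sA]
      rw [Finset.sum_congr rfl (fun i _ => h2 i)]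
      field_simp
      ring
    have hinj : Set.InjOn ι ↑(Finset.univ : Finset (Fin 3 → F)) := by
      intro x _ x' _ hxx
      funext i
      rw [← hι_sA x i, ← hι_sA x' i, hxx]
    calc 8 = Fintype.card (Fin 3 → F) := hfun3.symm
    _ = (Finset.univ : Finset (Fin 3 → F)).card := (Finset.card_univ).symm
    _ ≤ _ := Finset.card_le_card_of_injOn ι (fun x _ => hι_mem x) hinj

open Finset in
lemma exists_good_vector_card2 [Fintype F] [DecidableEq F] (hcard : Fintype.card F = 2)
    (w : Fin 8 → Fin 4 → F) :
    ∃ a : Fin 4 → F, a ≠ 0 ∧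
      (Finset.univ.filter (fun k : Fin 8 => (∑ j, w k j * a j) ≠ 0)).card ≤ 4 := by
  classical
  set NZ : Finset (Fin 4 → F) := Finset.univ.filter (fun a => a ≠ 0) with hNZ
  have hNZcard : NZ.card = 15 := by
    rw [hNZ, Finset.filter_ne', Finset.card_erase_of_mem (Finset.mem_univ _),
      Finset.card_univ, Fintype.card_fun, hcard, Fintype.card_fin]
    norm_num
  by_contra hcon
  push_neg at hcon
  -- every nonzero a has at most 3 zero forms
  have hub : ∀ a ∈ NZ, (Finset.univ.filter (fun k : Fin 8 => (∑ j, w k j * a j) = 0)).card ≤ 3 := by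
    intro a ha
    rw [hNZ, Finset.mem_filter] at ha
    have h5 := hcon a ha.2
    have hsplit := Finset.card_filter_add_card_filter_not
      (s := (Finset.univ : Finset (Fin 8))) (p := fun k => (∑ j, w k j * a j) ≠ 0)
    simp only [Finset.card_univ, Fintype.card_fin, not_not] at hsplit
    omega
  -- double counting
  have hdouble : ∑ a ∈ NZ, (Finset.univ.filter (fun k : Fin 8 => (∑ j, w k j * a j) = 0)).card
      = ∑ k : Fin 8, (NZ.filter (fun a => (∑ j, w k j * a j) = 0)).card := by
    simp only [Finset.card_filter]
    rw [Finset.sum_comm]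
  have hlb : ∀ k : Fin 8, 7 ≤ (NZ.filter (fun a => (∑ j, w k j * a j) = 0)).card := by
    intro k
    have h8 := kernel_big hcard (w k)
    have : NZ.filter (fun a => (∑ j, w k j * a j) = 0)
        = (Finset.univ.filter (fun a : Fin 4 → F => (∑ j, w k j * a j) = 0)).erase 0 := by
      ext a
      simp only [hNZ, Finset.mem_filter, Finset.mem_erase, Finset.mem_univ, true_and]
    rw [this]
    have hmem : (0 : Fin 4 → F) ∈ Finset.univ.filter
        (fun a : Fin 4 → F => (∑ j, w k j * a j) = 0) := by simp
    rw [Finset.card_erase_of_mem hmem]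
    exact Nat.le_sub_one_of_lt h8
  have hge : 56 ≤ ∑ a ∈ NZ, (Finset.univ.filter
      (fun k : Fin 8 => (∑ j, w k j * a j) = 0)).card := by
    rw [hdouble]
    calc (56 : ℕ) = ∑ _k : Fin 8, 7 := by simp
    _ ≤ _ := Finset.sum_le_sum (fun k _ => hlb k)
  have hle : ∑ a ∈ NZ, (Finset.univ.filter
      (fun k : Fin 8 => (∑ j, w k j * a j) = 0)).card ≤ 45 := by
    calc ∑ a ∈ NZ, (Finset.univ.filter (fun k : Fin 8 => (∑ j, w k j * a j) = 0)).card
        ≤ ∑ _a ∈ NZ, 3 := Finset.sum_le_sum hub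
    _ = 45 := by rw [Finset.sum_const, hNZcard, smul_eq_mul]
  have := le_trans hge hle
  norm_num at this


end DetRankAux

/-- Lower bounds on the tensor rank of the `4 × 4` determinant over the field with
`q` elements: `r ≥ 9` if `q = 2`, `r ≥ 8` if `q ∈ {3,4}`, and `r ≥ 7` if `q ≥ 5`. -/
theorem trank_det_four_finite_field_lb (q : ℕ) (hq : IsPrimePow q)
    (F : Type*) [Field F] [Fintype F] (hF : Fintype.card F = q)
    (r : ℕ) (v : Fin 4 → Fin r → Fin 4 → F) (hv : IsDetDecomposition F 4 r v) :
    (q = 2 → 9 ≤ r) ∧ ((q = 3 ∨ q = 4) → 8 ≤ r) ∧ (5 ≤ q → 7 ≤ r) := by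
  classical
  have main8 : 8 ≤ r := by
    by_contra hcon
    push_neg at hcon
    obtain ⟨v7, hv7⟩ := pad_decomp (m := 7) (by omega) v hv
    obtain ⟨a, ha, hk4, hk5, hk6⟩ := exists_ker3 (v7 0 4) (v7 0 5) (v7 0 6)
    obtain ⟨t, hat⟩ := exists_pivot4 ha
    have hkill7 : ∀ k ∉ ({0, 1, 2, 3} : Finset (Fin 7)), (∑ j, v7 0 k j * a j) = 0 := by
      intro k hk
      fin_cases k <;> simp_all
    obtain ⟨p, q', s, hd3⟩ := reduce_to_det3 v7 hv7 a t hat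
      ({0, 1, 2, 3} : Finset (Fin 7)) (by decide) hkill7
    exact no_det3_decomp4 p q' s hd3
  have main9 : Fintype.card F = 2 → 9 ≤ r := by
    intro h2
    by_contra hcon
    push_neg at hcon
    obtain ⟨v8, hv8⟩ := pad_decomp (m := 8) (by omega) v hv
    obtain ⟨a, ha, hgood⟩ := exists_good_vector_card2 h2 (fun k => v8 0 k)
    obtain ⟨t, hat⟩ := exists_pivot4 ha
    obtain ⟨S, hsub, hScard⟩ := Finset.exists_superset_card_eq hgood (by simp)
    have hkill8 : ∀ k ∉ S, (∑ j, v8 0 k j * a j) = 0 := by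
      intro k hk
      by_contra hne
      exact hk (hsub (Finset.mem_filter.mpr ⟨Finset.mem_univ _, hne⟩))
    obtain ⟨p, q', s, hd3⟩ := reduce_to_det3 v8 hv8 a t hat S hScard hkill8
    exact no_det3_decomp4 p q' s hd3
  exact ⟨fun hq2 => main9 (by rw [hF, hq2]), fun _ => main8,
    fun _ => le_trans (by norm_num) main8⟩
end

section
/- Let F_2 be the field with two elements, and suppose v_{i,k} ∈ F_2^4 (1 ≤ i ≤ 4, 1 ≤ k ≤ r) form a rank-r tensor decomposition of the 4 × 4 determinant over F_2 with r minimal (i.e., no rank-r' decomposition exists for r' < r). For each k define the rank-1 matrix A_k = v_{1,k} · v_{2,k}^T. Then for every pair of (not necessarily distinct) nonzero vectors u, w ∈ F_2^4, the number of indices k ∈ {1,…,r} with u^T A_k w = 1 is not equal to 1. -/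
lemma aux_prod_ne_zero : ∀ p q : Fin 4 → ZMod 2, p ≠ 0 → q ≠ 0 →
    ∃ x : Fin 4 → ZMod 2, (∑ j, p j * x j) * (∑ j, q j * x j) = 1 := by decide

lemma drop_term (r' : ℕ) (v : Fin 4 → Fin (r' + 1) → Fin 4 → ZMod 2)
    (hv : IsDetDecomposition (ZMod 2) 4 (r' + 1) v) (k₀ : Fin (r' + 1))
    (hzero : ∀ A : Matrix (Fin 4) (Fin 4) (ZMod 2),
      (∏ i, ∑ j, v i k₀ j * A i j) = 0) :
    IsDetDecomposition (ZMod 2) 4 r' (fun i k j => v i (k₀.succAbove k) j) := by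
  intro A
  have h := hv A
  rw [Fin.sum_univ_succAbove (fun k => ∏ i, ∑ j, v i k j * A i j) k₀, hzero A,
    zero_add] at h
  exact h

/-- In a minimal tensor decomposition of the `4 × 4` determinant over `𝔽₂`, for every pair
of nonzero vectors `u, w`, the number of indices `k` with `uᵀ (v₁ₖ v₂ₖᵀ) w = 1` is not `1`. -/
theorem minimal_decomposition_bilinear_count_ne_one
    (r : ℕ) (v : Fin 4 → Fin r → Fin 4 → ZMod 2)
    (hv : IsDetDecomposition (ZMod 2) 4 r v)
    (hmin : ∀ r' : ℕ, r' < r → ∀ v' : Fin 4 → Fin r' → Fin 4 → ZMod 2,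
      ¬ IsDetDecomposition (ZMod 2) 4 r' v')
    (u w : Fin 4 → ZMod 2) (hu : u ≠ 0) (hw : w ≠ 0) :
    (Finset.univ.filter fun k : Fin r =>
      (∑ a : Fin 4, ∑ b : Fin 4, u a * (v 0 k a * v 1 k b) * w b) = 1).card ≠ 1 := by
  intro hcard
  obtain ⟨k₀, hk₀⟩ := Finset.card_eq_one.mp hcard
  have hsplit : ∀ k : Fin r, (∑ a : Fin 4, ∑ b : Fin 4, u a * (v 0 k a * v 1 k b) * w b)
      = (∑ j, v 0 k j * u j) * (∑ j, v 1 k j * w j) := by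
    intro k
    rw [Finset.sum_mul_sum]
    exact Finset.sum_congr rfl fun a _ => Finset.sum_congr rfl fun b _ => by ring
  have hck₀ : (∑ j, v 0 k₀ j * u j) * (∑ j, v 1 k₀ j * w j) = 1 := by
    have : k₀ ∈ Finset.univ.filter fun k : Fin r =>
        (∑ a : Fin 4, ∑ b : Fin 4, u a * (v 0 k a * v 1 k b) * w b) = 1 := by
      rw [hk₀]; exact Finset.mem_singleton_self k₀
    rw [← hsplit]
    exact (Finset.mem_filter.mp this).2
  have hc : ∀ k : Fin r, k ≠ k₀ →
      (∑ j, v 0 k j * u j) * (∑ j, v 1 k j * w j) = 0 := by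
    intro k hk
    have hnm : k ∉ Finset.univ.filter fun k : Fin r =>
        (∑ a : Fin 4, ∑ b : Fin 4, u a * (v 0 k a * v 1 k b) * w b) = 1 := by
      rw [hk₀]; simpa using hk
    have h1 : ¬ ((∑ a : Fin 4, ∑ b : Fin 4, u a * (v 0 k a * v 1 k b) * w b) = 1) := by
      intro h; exact hnm (Finset.mem_filter.mpr ⟨Finset.mem_univ k, h⟩)
    rw [hsplit] at h1
    have h01 : ∀ t : ZMod 2, t ≠ 1 → t = 0 := by decide
    exact h01 _ h1
  -- key identity: the product of the two last linear forms of term k₀ vanishes everywhere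
  have key : ∀ x : Fin 4 → ZMod 2,
      (∑ j, v 2 k₀ j * x j) * (∑ j, v 3 k₀ j * x j) = 0 := by
    intro x
    have hdet : (Matrix.of ![u, w, x, x]).det = 0 :=
      Matrix.det_zero_of_row_eq (i := 2) (j := 3) (by decide) rfl
    rw [hv] at hdet
    have hM : ∀ k : Fin r,
        (∏ i, ∑ j, v i k j * (Matrix.of ![u, w, x, x]) i j)
        = (∑ j, v 0 k j * u j) * (∑ j, v 1 k j * w j) *
          (∑ j, v 2 k j * x j) * (∑ j, v 3 k j * x j) := by
      intro k
      rw [Fin.prod_univ_four]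
      ring_nf
      rfl
    rw [Finset.sum_congr rfl (fun k _ => hM k)] at hdet
    rw [Finset.sum_eq_single k₀
      (fun k _ hk => by rw [hc k hk, zero_mul, zero_mul])
      (fun h => absurd (Finset.mem_univ k₀) h)] at hdet
    rw [hck₀, one_mul] at hdet
    exact hdet
  have hr : 0 < r := k₀.pos
  obtain ⟨r', rfl⟩ : ∃ r', r = r' + 1 := ⟨r - 1, by omega⟩
  by_cases h2 : v 2 k₀ = 0
  · exact hmin r' (Nat.lt_succ_self r') _ (drop_term r' v hv k₀ fun A =>
      Finset.prod_eq_zero (Finset.mem_univ (2 : Fin 4)) (by simp [h2]))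
  by_cases h3 : v 3 k₀ = 0
  · exact hmin r' (Nat.lt_succ_self r') _ (drop_term r' v hv k₀ fun A =>
      Finset.prod_eq_zero (Finset.mem_univ (3 : Fin 4)) (by simp [h3]))
  obtain ⟨x, hx⟩ := aux_prod_ne_zero _ _ h2 h3
  rw [key x] at hx
  exact absurd hx (by decide)
end

section
/- Let R be a commutative ring, let n be a positive integer, and let A be an n × n matrix over R. For each i ∈ [n], define a_{i,0} := −Σ_{j=1}^n a_{i,j}. Then det(A) = (−1)^n Σ_T Π_{i=1}^n a_{i, j_i}, where the sum ranges over all in-trees T = (j_1, j_2, …, j_n) on the vertex set {0, 1, …, n} rooted at 0. -/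
/-- The step function of the directed graph on `{0,1,…,n}` rooted at `0` specified by
`j : Fin n → Fin (n+1)` (vertex `i+1` points to `j i`; vertex `0` is a fixed point). -/
def treeStep {n : ℕ} (j : Fin n → Fin (n + 1)) : Fin (n + 1) → Fin (n + 1) :=
  Fin.cases 0 j

namespace DetTree

open Finset Equiv
attribute [local instance] Classical.propDecidable

variable {n : ℕ}

@[simp] lemma treeStep_zero (j : Fin n → Fin (n + 1)) : treeStep j 0 = 0 := rfl
@[simp] lemma treeStep_succ (j : Fin n → Fin (n + 1)) (i : Fin n) : treeStep j i.succ = j i := rfl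

lemma treeStep_iter_zero (j : Fin n → Fin (n + 1)) (m : ℕ) : (treeStep j)^[m] 0 = 0 :=
  Function.iterate_fixed rfl m

/-- The set of vertices (in `Fin n`, i.e. shifted by one) lying on a cycle of `j`. -/
noncomputable def Per (j : Fin n → Fin (n + 1)) : Finset (Fin n) :=
  univ.filter (fun v => ∃ m, 0 < m ∧ (treeStep j)^[m] v.succ = v.succ)

lemma mem_Per {j : Fin n → Fin (n + 1)} {v : Fin n} :
    v ∈ Per j ↔ ∃ m, 0 < m ∧ (treeStep j)^[m] v.succ = v.succ := by
  simp [Per]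

lemma per_empty_iff (j : Fin n → Fin (n + 1)) :
    Per j = ∅ ↔ ∀ v : Fin (n + 1), ∃ m : ℕ, (treeStep j)^[m] v = 0 := by
  constructor
  · intro h v
    by_contra hv
    push_neg at hv
    have key : ∀ a b : ℕ, a < b → (treeStep j)^[a] v = (treeStep j)^[b] v → False := by
      intro a b hab hfab
      set u := (treeStep j)^[a] v with hu
      have hper : (treeStep j)^[b - a] u = u := by
        have hba : b - a + a = b := by omega
        rw [hu, ← Function.iterate_add_apply, hba, ← hfab]
      have hu0 : u ≠ 0 := fun h0 => hv _ (h0 ▸ hu.symm)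
      have hw : u = (u.pred hu0).succ := (Fin.succ_pred u hu0).symm
      have : u.pred hu0 ∈ Per j :=
        mem_Per.2 ⟨b - a, by omega, by rw [← hw]; exact hper⟩
      simp [h] at this
    obtain ⟨x, y, hxy, hfx⟩ := Fintype.exists_ne_map_eq_of_card_lt
      (fun m : Fin (n + 2) => (treeStep j)^[(m : ℕ)] v) (by simp)
    have hne : (x : ℕ) ≠ (y : ℕ) := fun hh => hxy (Fin.ext hh)
    rcases Nat.lt_or_ge (x : ℕ) (y : ℕ) with hlt | hge
    · exact key _ _ hlt hfx
    · exact key _ _ (by omega) hfx.symm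
  · intro h
    rw [eq_empty_iff_forall_notMem]
    intro w hw
    obtain ⟨m, hm, hper⟩ := mem_Per.1 hw
    obtain ⟨k, hk⟩ := h w.succ
    have h1 : (treeStep j)^[m * k] w.succ = w.succ := by
      rw [Function.iterate_mul]
      exact Function.iterate_fixed hper k
    have h2 : (treeStep j)^[m * k] w.succ = 0 := by
      have hmk : m * k = (m * k - k) + k := by
        have : k ≤ m * k := Nat.le_mul_of_pos_left k hm
        omega
      rw [hmk, Function.iterate_add_apply, hk, treeStep_iter_zero]
    exact Fin.succ_ne_zero w (h1 ▸ h2)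

/-- The cycle of `j` through `i₀` (assuming `i₀ ∈ Per j`). -/
noncomputable def Orb (j : Fin n → Fin (n + 1)) (i₀ : Fin n) : Finset (Fin n) :=
  univ.filter (fun v => ∃ m, (treeStep j)^[m] i₀.succ = v.succ)

lemma mem_Orb {j : Fin n → Fin (n + 1)} {i₀ v : Fin n} :
    v ∈ Orb j i₀ ↔ ∃ m, (treeStep j)^[m] i₀.succ = v.succ := by simp [Orb]

lemma self_mem_Orb {j : Fin n → Fin (n + 1)} (i₀ : Fin n) : i₀ ∈ Orb j i₀ :=
  mem_Orb.2 ⟨0, rfl⟩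

section Orbit

variable {j : Fin n → Fin (n + 1)} {i₀ : Fin n} {ℓ : ℕ} (hℓ : 0 < ℓ)
  (hper : (treeStep j)^[ℓ] i₀.succ = i₀.succ)

include hper in
lemma orb_per {v : Fin n} (hv : v ∈ Orb j i₀) : (treeStep j)^[ℓ] v.succ = v.succ := by
  obtain ⟨m, hm⟩ := mem_Orb.1 hv
  calc (treeStep j)^[ℓ] v.succ = (treeStep j)^[ℓ] ((treeStep j)^[m] i₀.succ) := by rw [hm]
    _ = (treeStep j)^[ℓ + m] i₀.succ := (Function.iterate_add_apply _ _ _ _).symm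
    _ = (treeStep j)^[m + ℓ] i₀.succ := by rw [Nat.add_comm ℓ m]
    _ = (treeStep j)^[m] ((treeStep j)^[ℓ] i₀.succ) := Function.iterate_add_apply _ _ _ _
    _ = v.succ := by rw [hper, hm]

include hℓ hper in
lemma orb_step_ne_zero {v : Fin n} (hv : v ∈ Orb j i₀) : treeStep j v.succ ≠ 0 := by
  intro h0
  obtain ⟨ℓ', rfl⟩ : ∃ ℓ', ℓ = ℓ' + 1 := ⟨ℓ - 1, by omega⟩
  have h1 : (treeStep j)^[ℓ' + 1] v.succ = 0 := by
    rw [Function.iterate_add_apply]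
    simp [h0, treeStep_iter_zero]
  exact Fin.succ_ne_zero v (by rw [← orb_per hper hv, h1])

/-- The next-vertex map along the cycle through `i₀`, as a total function (identity
off the cycle). -/
noncomputable def cycFun (j : Fin n → Fin (n + 1)) (i₀ : Fin n) : Fin n → Fin n :=
  fun v => if h : v ∈ Orb j i₀ ∧ treeStep j v.succ ≠ 0 then (treeStep j v.succ).pred h.2 else v

include hℓ hper in
lemma cycFun_succ {v : Fin n} (hv : v ∈ Orb j i₀) :
    (cycFun j i₀ v).succ = j v := by
  rw [cycFun, dif_pos ⟨hv, orb_step_ne_zero hℓ hper hv⟩, Fin.succ_pred, treeStep_succ]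

lemma cycFun_of_not_mem {v : Fin n} (hv : v ∉ Orb j i₀) : cycFun j i₀ v = v := by
  rw [cycFun, dif_neg (fun h => hv h.1)]

include hℓ hper in
lemma cycFun_mem {v : Fin n} (hv : v ∈ Orb j i₀) : cycFun j i₀ v ∈ Orb j i₀ := by
  obtain ⟨m, hm⟩ := mem_Orb.1 hv
  refine mem_Orb.2 ⟨m + 1, ?_⟩
  rw [Function.iterate_succ_apply', hm]
  have : treeStep j v.succ = j v := treeStep_succ j v
  rw [this, ← cycFun_succ hℓ hper hv]

include hℓ hper in
lemma cycFun_injective : Function.Injective (cycFun j i₀) := by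
  intro x y hxy
  by_cases hx : x ∈ Orb j i₀ <;> by_cases hy : y ∈ Orb j i₀
  · have h1 : j x = j y := by
      rw [← cycFun_succ hℓ hper hx, ← cycFun_succ hℓ hper hy, hxy]
    have h2 : treeStep j x.succ = treeStep j y.succ := by simpa using h1
    obtain ⟨ℓ', rfl⟩ : ∃ ℓ', ℓ = ℓ' + 1 := ⟨ℓ - 1, by omega⟩
    have h3 : (treeStep j)^[ℓ' + 1] x.succ = (treeStep j)^[ℓ' + 1] y.succ := by
      rw [Function.iterate_succ_apply, Function.iterate_succ_apply]
      rw [h2]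
    rw [orb_per hper hx, orb_per hper hy] at h3
    exact Fin.succ_injective n h3
  · exfalso
    rw [cycFun_of_not_mem hy] at hxy
    exact hy (hxy ▸ cycFun_mem hℓ hper hx)
  · exfalso
    rw [cycFun_of_not_mem hx] at hxy
    exact hx (by rw [hxy]; exact cycFun_mem hℓ hper hy)
  · rw [cycFun_of_not_mem hx, cycFun_of_not_mem hy] at hxy
    exact hxy

/-- The cycle of `j` through `i₀` as a permutation of `Fin n`. -/
noncomputable def gamma (hinj : Function.Injective (cycFun j i₀)) : Perm (Fin n) :=
  Equiv.ofBijective _ (Finite.injective_iff_bijective.mp hinj)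

@[simp] lemma gamma_apply (hinj : Function.Injective (cycFun j i₀)) (v : Fin n) :
    gamma hinj v = cycFun j i₀ v := rfl

variable (hj : ∀ i, j i ≠ i.succ)

include hℓ hper hj in
lemma cycFun_ne {v : Fin n} (hv : v ∈ Orb j i₀) : cycFun j i₀ v ≠ v := by
  intro he
  exact hj v (by rw [← cycFun_succ hℓ hper hv, he])

include hℓ hper hj in
lemma gamma_support (hinj : Function.Injective (cycFun j i₀)) :
    (gamma hinj).support = Orb j i₀ := by
  ext v
  rw [Equiv.Perm.mem_support, gamma_apply]
  constructor
  · intro hne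
    by_contra hv
    exact hne (cycFun_of_not_mem hv)
  · exact cycFun_ne hℓ hper hj

include hℓ hper in
lemma cycFun_iterate (m : ℕ) :
    (cycFun j i₀)^[m] i₀ ∈ Orb j i₀ ∧
      ((cycFun j i₀)^[m] i₀).succ = (treeStep j)^[m] i₀.succ := by
  induction m with
  | zero => exact ⟨self_mem_Orb i₀, rfl⟩
  | succ m ih =>
    rw [Function.iterate_succ_apply', Function.iterate_succ_apply']
    refine ⟨cycFun_mem hℓ hper ih.1, ?_⟩
    rw [cycFun_succ hℓ hper ih.1, ← ih.2, ← treeStep_succ j]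

include hℓ hper hj in
lemma gamma_isCycle (hinj : Function.Injective (cycFun j i₀)) :
    (gamma hinj).IsCycle := by
  refine ⟨i₀, cycFun_ne hℓ hper hj (self_mem_Orb i₀), fun y hy => ?_⟩
  have hy' : y ∈ Orb j i₀ := by
    by_contra hc
    exact hy (cycFun_of_not_mem hc)
  obtain ⟨m, hm⟩ := mem_Orb.1 hy'
  refine ⟨(m : ℤ), ?_⟩
  rw [zpow_natCast]
  have := (cycFun_iterate hℓ hper m).2
  rw [hm] at this
  have heq : (cycFun j i₀)^[m] i₀ = y := Fin.succ_injective n this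
  rw [← heq]
  rfl

section Sigma

variable {σ : Perm (Fin n)} (hc : ∀ i : Fin n, σ i ≠ i → j i = (σ i).succ)

include hc in
lemma supp_iter {v : Fin n} (hv : v ∈ σ.support) (m : ℕ) :
    (treeStep j)^[m] v.succ = ((σ ^ m) v).succ := by
  induction m with
  | zero => simp
  | succ m ih =>
    rw [Function.iterate_succ_apply', ih, treeStep_succ]
    have hmem : (σ ^ m) v ∈ σ.support := Equiv.Perm.pow_apply_mem_support.2 hv
    rw [hc _ (Equiv.Perm.mem_support.1 hmem)]
    congr 1
    rw [pow_succ']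
    rfl

include hc in
lemma supp_sub_per : σ.support ⊆ Per j := by
  intro v hv
  refine mem_Per.2 ⟨orderOf σ, orderOf_pos σ, ?_⟩
  rw [supp_iter hc hv, pow_orderOf_eq_one]
  rfl

include hℓ hper hc in
lemma orb_sub_supp (hi : i₀ ∈ σ.support) {v : Fin n} (hv : v ∈ Orb j i₀) :
    v ∈ σ.support ∧ σ v = cycFun j i₀ v := by
  obtain ⟨m, hm⟩ := mem_Orb.1 hv
  rw [supp_iter hc hi m] at hm
  have hveq : v = (σ ^ m) i₀ := Fin.succ_injective n hm.symm
  have hvs : v ∈ σ.support := hveq ▸ Equiv.Perm.pow_apply_mem_support.2 hi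
  refine ⟨hvs, Fin.succ_injective n ?_⟩
  rw [← hc _ (Equiv.Perm.mem_support.1 hvs), cycFun_succ hℓ hper hv]

include hℓ hper hc in
lemma orb_disj_supp (hi : i₀ ∉ σ.support) {v : Fin n} (hv : v ∈ Orb j i₀) :
    v ∉ σ.support := by
  intro hvs
  obtain ⟨m, hm⟩ := mem_Orb.1 hv
  rcases Nat.eq_zero_or_pos m with rfl | hmpos
  · have : i₀ = v := Fin.succ_injective n hm
    exact hi (this ▸ hvs)
  have key : (treeStep j)^[ℓ * m - m] v.succ = i₀.succ := by
    rw [← hm, ← Function.iterate_add_apply]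
    have : ℓ * m - m + m = ℓ * m := by
      have : m ≤ ℓ * m := Nat.le_mul_of_pos_left m hℓ
      omega
    rw [this, Function.iterate_mul]
    exact Function.iterate_fixed hper m
  rw [supp_iter hc hvs] at key
  have : (σ ^ (ℓ * m - m)) v = i₀ := Fin.succ_injective n key
  exact hi (this ▸ Equiv.Perm.pow_apply_mem_support.2 hvs)

variable (hinj : Function.Injective (cycFun j i₀))

include hℓ hper hc in
lemma caseB_disj (hi : i₀ ∉ σ.support) : σ.Disjoint (gamma hinj) := by
  intro x
  by_cases hx : x ∈ Orb j i₀
  · exact Or.inl (Equiv.Perm.notMem_support.mp (orb_disj_supp hℓ hper hc hi hx))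
  · exact Or.inr (cycFun_of_not_mem hx)

include hℓ hper hc in
lemma caseB_compat (hi : i₀ ∉ σ.support) :
    ∀ i, (σ * gamma hinj) i ≠ i → j i = ((σ * gamma hinj) i).succ := by
  intro i hne
  rw [Equiv.Perm.mul_apply, gamma_apply]
  by_cases hio : i ∈ Orb j i₀
  · have h2 : cycFun j i₀ i ∈ Orb j i₀ := cycFun_mem hℓ hper hio
    have h3 : σ (cycFun j i₀ i) = cycFun j i₀ i :=
      Equiv.Perm.notMem_support.mp (orb_disj_supp hℓ hper hc hi h2)
    rw [h3, cycFun_succ hℓ hper hio]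
  · rw [cycFun_of_not_mem hio]
    refine hc i ?_
    intro hsi
    apply hne
    rw [Equiv.Perm.mul_apply, gamma_apply, cycFun_of_not_mem hio, hsi]

include hℓ hper hj hc in
lemma caseB_mem (hi : i₀ ∉ σ.support) : i₀ ∈ (σ * gamma hinj).support := by
  rw [Equiv.Perm.mem_support, Equiv.Perm.mul_apply, gamma_apply]
  have h2 : cycFun j i₀ i₀ ∈ Orb j i₀ := cycFun_mem hℓ hper (self_mem_Orb i₀)
  have h3 : σ (cycFun j i₀ i₀) = cycFun j i₀ i₀ :=
    Equiv.Perm.notMem_support.mp (orb_disj_supp hℓ hper hc hi h2)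
  rw [h3]
  exact cycFun_ne hℓ hper hj (self_mem_Orb i₀)

include hℓ hper hc in
lemma caseA_fix (hi : i₀ ∈ σ.support) {v : Fin n} (hv : v ∈ Orb j i₀) :
    (σ * (gamma hinj)⁻¹) v = v := by
  rw [Equiv.Perm.mul_apply]
  set u := (gamma hinj)⁻¹ v with hu
  have hgu : gamma hinj u = v := by rw [hu]; exact Equiv.apply_symm_apply _ v
  have hu_mem : u ∈ Orb j i₀ := by
    by_contra hun
    have : gamma hinj u = u := cycFun_of_not_mem hun
    rw [this] at hgu
    exact hun (hgu ▸ hv)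
  have := (orb_sub_supp hℓ hper hc hi hu_mem).2
  rw [this, ← gamma_apply hinj, hgu]

lemma caseA_off {v : Fin n} (hv : v ∉ Orb j i₀) :
    (σ * (gamma hinj)⁻¹) v = σ v := by
  rw [Equiv.Perm.mul_apply]
  have hfix : gamma hinj v = v := cycFun_of_not_mem hv
  have : (gamma hinj)⁻¹ v = v := by
    calc (gamma hinj)⁻¹ v = (gamma hinj)⁻¹ (gamma hinj v) := by rw [hfix]
      _ = v := Equiv.symm_apply_apply _ v
  rw [this]

include hℓ hper hc in
lemma caseA_not_mem (hi : i₀ ∈ σ.support) : i₀ ∉ (σ * (gamma hinj)⁻¹).support := by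
  rw [Equiv.Perm.notMem_support]
  exact caseA_fix hℓ hper hc hinj hi (self_mem_Orb i₀)

include hℓ hper hc in
lemma caseA_compat (hi : i₀ ∈ σ.support) :
    ∀ i, (σ * (gamma hinj)⁻¹) i ≠ i → j i = ((σ * (gamma hinj)⁻¹) i).succ := by
  intro i hne
  by_cases hio : i ∈ Orb j i₀
  · exact absurd (caseA_fix hℓ hper hc hinj hi hio) hne
  · rw [caseA_off hinj hio] at hne ⊢
    by_cases hsi : σ i = i
    · exact absurd hsi hne
    · exact hc i hsi

include hℓ hper hc in
lemma caseA_disj (hi : i₀ ∈ σ.support) : (σ * (gamma hinj)⁻¹).Disjoint (gamma hinj) := by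
  intro x
  by_cases hx : x ∈ Orb j i₀
  · exact Or.inl (caseA_fix hℓ hper hc hinj hi hx)
  · exact Or.inr (cycFun_of_not_mem hx)

end Sigma

end Orbit

section Det

variable {R : Type*} [CommRing R]

/-- The column-extended matrix entries: `cf A i 0 = ∑ k, A i k`, `cf A i k.succ = -A i k`. -/
def cf (A : Matrix (Fin n) (Fin n) R) (i : Fin n) : Fin (n + 1) → R :=
  Fin.cases (∑ k, A i k) (fun k => -(A i k))

@[simp] lemma cf_zero (A : Matrix (Fin n) (Fin n) R) (i : Fin n) :
    cf A i 0 = ∑ k, A i k := rfl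

@[simp] lemma cf_succ (A : Matrix (Fin n) (Fin n) R) (i k : Fin n) :
    cf A i k.succ = -(A i k) := by simp [cf]

lemma sum_cf (A : Matrix (Fin n) (Fin n) R) (i : Fin n) :
    ∑ m : Fin (n + 1), cf A i m = 0 := by
  rw [Fin.sum_univ_succ]
  simp

noncomputable def Tf (σ : Perm (Fin n)) (i : Fin n) : Finset (Fin (n + 1)) :=
  if σ i = i then univ.erase i.succ else {(σ i).succ}

noncomputable def ef (A : Matrix (Fin n) (Fin n) R) (σ : Perm (Fin n)) (i : Fin n)
    (m : Fin (n + 1)) : R :=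
  if σ i = i then cf A i m else -(cf A i m)

lemma row_eq (A : Matrix (Fin n) (Fin n) R) (σ : Perm (Fin n)) (i : Fin n) :
    A i (σ i) = ∑ m ∈ Tf σ i, ef A σ i m := by
  by_cases h : σ i = i
  · have he : ∀ m, ef A σ i m = cf A i m := fun m => if_pos h
    rw [Tf, if_pos h, Finset.sum_congr rfl fun m _ => he m,
      Finset.sum_erase_eq_sub (mem_univ _), sum_cf, cf_succ, h]
    ring
  · have he : ∀ m, ef A σ i m = -(cf A i m) := fun m => if_neg h
    rw [Tf, if_neg h, Finset.sum_singleton, he, cf_succ]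
    ring

lemma prod_ef (A : Matrix (Fin n) (Fin n) R) (σ : Perm (Fin n)) (p : Fin n → Fin (n + 1)) :
    ∏ i, ef A σ i (p i) = (-1) ^ #σ.support * ∏ i, cf A i (p i) := by
  have h1 : ∀ i : Fin n, ef A σ i (p i) = (if σ i = i then (1 : R) else -1) * cf A i (p i) := by
    intro i
    by_cases h : σ i = i <;> simp [ef, h]
  rw [Finset.prod_congr rfl fun i _ => h1 i, Finset.prod_mul_distrib]
  congr 1
  have hset : univ.filter (fun x => ¬ σ x = x) = σ.support := by
    ext x
    simp [Equiv.Perm.mem_support]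
  rw [Finset.prod_ite, Finset.prod_const_one, Finset.prod_const, one_mul, hset]

/-- The signed permutation weight. -/
noncomputable def Fp (τ : Perm (Fin n)) : R :=
  ((Equiv.Perm.sign τ : ℤ) : R) * (-1) ^ #τ.support

lemma sign_flip {τ γ : Perm (Fin n)} (hd : τ.Disjoint γ) (hcy : γ.IsCycle) :
    (Fp (τ * γ) : R) = -(Fp τ) := by
  unfold Fp
  rw [hd.card_support_mul, map_mul, hcy.sign, pow_add]
  have hsq : ((-1 : R) ^ #γ.support) * ((-1) ^ #γ.support) = 1 := by
    rw [← mul_pow]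
    norm_num
  push_cast
  linear_combination (-(((Equiv.Perm.sign τ : ℤ) : R)) * (-1 : R) ^ #τ.support) * hsq

noncomputable def sSet (n : ℕ) : Finset (Perm (Fin n) × (Fin n → Fin (n + 1))) :=
  univ.filter (fun q => ∀ i, q.2 i ∈ Tf q.1 i)

lemma mem_sSet {q : Perm (Fin n) × (Fin n → Fin (n + 1))} :
    q ∈ sSet n ↔ (∀ i, q.1 i ≠ i → q.2 i = (q.1 i).succ) ∧ ∀ i, q.2 i ≠ i.succ := by
  simp only [sSet, mem_filter, mem_univ, true_and]
  constructor
  · intro h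
    constructor
    · intro i hi
      have := h i
      rw [Tf, if_neg hi, Finset.mem_singleton] at this
      exact this
    · intro i
      have := h i
      by_cases hsi : q.1 i = i
      · rw [Tf, if_pos hsi] at this
        exact (Finset.mem_erase.1 this).1
      · rw [Tf, if_neg hsi, Finset.mem_singleton] at this
        rw [this]
        exact fun hh => hsi (Fin.succ_injective n hh)
  · rintro ⟨h1, h2⟩ i
    by_cases hsi : q.1 i = i
    · rw [Tf, if_pos hsi]
      exact Finset.mem_erase.2 ⟨h2 i, mem_univ _⟩
    · rw [Tf, if_neg hsi, Finset.mem_singleton]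
      exact h1 i hsi

lemma det_eq_sum_sSet (A : Matrix (Fin n) (Fin n) R) :
    A.det = ∑ q ∈ sSet n, Fp q.1 * ∏ i, cf A i (q.2 i) := by
  have step1 : A.det = ∑ σ : Perm (Fin n), ((Equiv.Perm.sign σ : ℤ) : R) * ∏ i, A i (σ i) := by
    rw [← Matrix.det_transpose A, Matrix.det_apply']
    simp only [Matrix.transpose_apply]
  rw [step1]
  have step2 : ∀ σ : Perm (Fin n), ((Equiv.Perm.sign σ : ℤ) : R) * ∏ i, A i (σ i)
      = ∑ p ∈ Fintype.piFinset (Tf σ), Fp σ * ∏ i, cf A i (p i) := by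
    intro σ
    have hh : ∏ i, A i (σ i) = ∑ p ∈ Fintype.piFinset (Tf σ), ∏ i, ef A σ i (p i) := by
      rw [← Finset.prod_univ_sum]
      exact Finset.prod_congr rfl fun i _ => row_eq A σ i
    rw [hh, Finset.mul_sum]
    refine Finset.sum_congr rfl fun p _ => ?_
    rw [prod_ef, Fp]
    ring
  rw [Finset.sum_congr rfl fun σ _ => step2 σ]
  have step3 : ∑ q ∈ sSet n, Fp q.1 * ∏ i, cf A i (q.2 i)
      = ∑ σ : Perm (Fin n), ∑ p ∈ Fintype.piFinset (Tf σ), Fp σ * ∏ i, cf A i (p i) := by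
    rw [sSet, Finset.sum_filter, Fintype.sum_prod_type]
    refine Finset.sum_congr rfl fun σ _ => ?_
    rw [← Finset.sum_filter]
    congr 1
    ext p
    simp [Fintype.mem_piFinset]
  rw [step3]

/-- The tree predicate from the theorem statement. -/
def IsTreeFun (j : Fin n → Fin (n + 1)) : Prop :=
  (∀ i : Fin n, j i ≠ i.succ) ∧ ∀ v : Fin (n + 1), ∃ m : ℕ, (treeStep j)^[m] v = 0

lemma tree_part (A : Matrix (Fin n) (Fin n) R) :
    ∑ q ∈ (sSet n).filter (fun q => IsTreeFun q.2), Fp q.1 * ∏ i, cf A i (q.2 i)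
      = ∑ j ∈ univ.filter IsTreeFun, ∏ i, cf A i (j i) := by
  have key : ∀ q ∈ (sSet n).filter (fun q => IsTreeFun q.2), q.1 = 1 := by
    intro q hq
    obtain ⟨hs, ht⟩ := mem_filter.1 hq
    obtain ⟨hc, hj⟩ := mem_sSet.1 hs
    have hPer : Per q.2 = ∅ := (per_empty_iff q.2).2 ht.2
    have hsupp : q.1.support = ∅ :=
      Finset.subset_empty.1 (hPer ▸ supp_sub_per hc)
    exact Equiv.Perm.support_eq_empty_iff.1 hsupp
  refine Finset.sum_nbij' (fun q => q.2) (fun j => (1, j)) ?_ ?_ ?_ ?_ ?_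
  · intro q hq
    exact mem_filter.2 ⟨mem_univ _, (mem_filter.1 hq).2⟩
  · intro j hj
    have ht : IsTreeFun j := (mem_filter.1 hj).2
    refine mem_filter.2 ⟨mem_sSet.2 ⟨fun i hi => absurd rfl hi, ht.1⟩, ht⟩
  · intro q hq
    have h1 := key q hq
    cases q
    simp_all
  · intro j _
    rfl
  · intro q hq
    rw [key q hq]
    simp [Fp]

/-- The sign-reversing involution on non-tree configurations. -/
noncomputable def invo (q : Perm (Fin n) × (Fin n → Fin (n + 1))) :
    Perm (Fin n) × (Fin n → Fin (n + 1)) :=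
  if h : (Per q.2).Nonempty then
    if hinj : Function.Injective (cycFun q.2 ((Per q.2).min' h)) then
      if (Per q.2).min' h ∈ q.1.support then (q.1 * (gamma hinj)⁻¹, q.2)
      else (q.1 * gamma hinj, q.2)
    else q
  else q

lemma invo_spec {q : Perm (Fin n) × (Fin n → Fin (n + 1))}
    (hq : q ∈ (sSet n).filter (fun q => ¬ IsTreeFun q.2)) :
    invo q ∈ (sSet n).filter (fun q => ¬ IsTreeFun q.2) ∧ invo (invo q) = q ∧ invo q ≠ q ∧
      ∀ A : Matrix (Fin n) (Fin n) R,
        Fp q.1 * ∏ i, cf A i (q.2 i) + Fp (invo q).1 * ∏ i, cf A i ((invo q).2 i) = 0 := by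
  obtain ⟨σ, j⟩ := q
  obtain ⟨hs, hnt⟩ := mem_filter.1 hq
  obtain ⟨hc, hj⟩ := mem_sSet.1 hs
  have hne : (Per j).Nonempty := by
    rw [Finset.nonempty_iff_ne_empty]
    intro he
    exact hnt ⟨hj, (per_empty_iff j).1 he⟩
  set i₀ := (Per j).min' hne with hi₀def
  have hi₀ : i₀ ∈ Per j := Finset.min'_mem _ _
  obtain ⟨ℓ, hℓ, hper⟩ := mem_Per.1 hi₀
  have hinj : Function.Injective (cycFun j i₀) := cycFun_injective hℓ hper
  have hγcy : (gamma hinj).IsCycle := gamma_isCycle hℓ hper hj hinj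
  have hγne1 : gamma hinj ≠ 1 := by
    intro h1
    exact cycFun_ne hℓ hper hj (self_mem_Orb i₀) (by rw [← gamma_apply hinj, h1]; rfl)
  have hinvo : ∀ τ : Perm (Fin n), (∀ i, τ i ≠ i → j i = (τ i).succ) →
      invo (τ, j) = if i₀ ∈ τ.support then (τ * (gamma hinj)⁻¹, j) else (τ * gamma hinj, j) := by
    intro τ _
    simp only [invo]
    rw [dif_pos hne, ← hi₀def, dif_pos hinj]
  by_cases hi : i₀ ∈ σ.support
  · -- case A : remove the cycle through i₀ from σ
    have hA : invo (σ, j) = (σ * (gamma hinj)⁻¹, j) := by rw [hinvo σ hc, if_pos hi]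
    have hcomp : ∀ i, (σ * (gamma hinj)⁻¹) i ≠ i → j i = ((σ * (gamma hinj)⁻¹) i).succ :=
      caseA_compat hℓ hper hc hinj hi
    have hmem : (σ * (gamma hinj)⁻¹, j) ∈ (sSet n).filter (fun q => ¬ IsTreeFun q.2) :=
      mem_filter.2 ⟨mem_sSet.2 ⟨hcomp, hj⟩, hnt⟩
    have hnotmem : i₀ ∉ (σ * (gamma hinj)⁻¹).support := caseA_not_mem hℓ hper hc hinj hi
    have hdecomp : σ * (gamma hinj)⁻¹ * gamma hinj = σ := inv_mul_cancel_right σ _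
    refine ⟨hA ▸ hmem, ?_, ?_, ?_⟩
    · rw [hA, hinvo _ hcomp, if_neg hnotmem, hdecomp]
    · rw [hA]
      intro hcon
      have : σ * (gamma hinj)⁻¹ = σ := congrArg Prod.fst hcon
      have h2 : (gamma hinj)⁻¹ = 1 := mul_left_cancel (a := σ) (by rw [mul_one]; exact this)
      exact hγne1 (by rw [← inv_inv (gamma hinj), h2, inv_one])
    · intro A
      rw [hA]
      have hFpσ : (Fp σ : R) = -(Fp (σ * (gamma hinj)⁻¹)) := by
        calc (Fp σ : R) = Fp (σ * (gamma hinj)⁻¹ * gamma hinj) := by rw [hdecomp]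
          _ = -(Fp (σ * (gamma hinj)⁻¹)) := sign_flip (caseA_disj hℓ hper hc hinj hi) hγcy
      show Fp σ * ∏ i, cf A i (j i) + Fp (σ * (gamma hinj)⁻¹) * ∏ i, cf A i (j i) = 0
      rw [hFpσ]
      ring
  · -- case B : add the cycle through i₀ to σ
    have hB : invo (σ, j) = (σ * gamma hinj, j) := by rw [hinvo σ hc, if_neg hi]
    have hcomp : ∀ i, (σ * gamma hinj) i ≠ i → j i = ((σ * gamma hinj) i).succ :=
      caseB_compat hℓ hper hc hinj hi
    have hmem : (σ * gamma hinj, j) ∈ (sSet n).filter (fun q => ¬ IsTreeFun q.2) :=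
      mem_filter.2 ⟨mem_sSet.2 ⟨hcomp, hj⟩, hnt⟩
    have hmem2 : i₀ ∈ (σ * gamma hinj).support := caseB_mem hℓ hper hj hc hinj hi
    refine ⟨hB ▸ hmem, ?_, ?_, ?_⟩
    · rw [hB, hinvo _ hcomp, if_pos hmem2, mul_inv_cancel_right]
    · rw [hB]
      intro hcon
      have : σ * gamma hinj = σ := congrArg Prod.fst hcon
      exact hγne1 (mul_left_cancel (a := σ) (by rw [this, mul_one]))
    · intro A
      rw [hB]
      have hflip : (Fp (σ * gamma hinj) : R) = -(Fp σ) :=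
        sign_flip (caseB_disj hℓ hper hc hinj hi) hγcy
      show Fp σ * ∏ i, cf A i (j i) + Fp (σ * gamma hinj) * ∏ i, cf A i (j i) = 0
      rw [hflip]
      ring

lemma nontree_part (A : Matrix (Fin n) (Fin n) R) :
    ∑ q ∈ (sSet n).filter (fun q => ¬ IsTreeFun q.2), Fp q.1 * ∏ i, cf A i (q.2 i) = 0 := by
  refine Finset.sum_involution (fun q _ => invo q) ?_ ?_ ?_ ?_
  · intro q hq
    exact ((invo_spec (R := R) hq).2.2.2 A)
  · intro q hq _
    exact (invo_spec (R := R) hq).2.2.1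
  · intro q hq
    exact (invo_spec (R := R) hq).1
  · intro q hq
    exact (invo_spec (R := R) hq).2.1

lemma det_eq_sum_trees (A : Matrix (Fin n) (Fin n) R) :
    A.det = ∑ j ∈ univ.filter IsTreeFun, ∏ i, cf A i (j i) := by
  rw [det_eq_sum_sSet A,
    ← Finset.sum_filter_add_sum_filter_not (sSet n) (fun q => IsTreeFun q.2), nontree_part A,
    tree_part A, add_zero]

end Det

end DetTree

open scoped Classical in
/-- The determinant as a sum over in-trees rooted at `0`: with `a_{i,0} := -Σ_j a_{i,j}`,
`det A = (-1)ⁿ Σ_T Π_i a_{i, jᵢ}` over all in-trees `T = (j₁,…,jₙ)` rooted at `0`. -/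
theorem det_eq_sum_in_trees {R : Type*} [CommRing R] {n : ℕ} (hn : 0 < n)
    (A : Matrix (Fin n) (Fin n) R) :
    A.det = (-1 : R) ^ n *
      ∑ j ∈ Finset.univ.filter (fun j : Fin n → Fin (n + 1) =>
          (∀ i : Fin n, j i ≠ i.succ) ∧
          ∀ v : Fin (n + 1), ∃ m : ℕ, (treeStep j)^[m] v = 0),
        ∏ i : Fin n,
          Fin.cases (motive := fun _ => R) (-(∑ k : Fin n, A i k)) (fun k => A i k) (j i) := by
  rw [DetTree.det_eq_sum_trees A]
  have hfilt : (Finset.univ.filter (DetTree.IsTreeFun (n := n)))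
      = Finset.univ.filter (fun j : Fin n → Fin (n + 1) =>
          (∀ i : Fin n, j i ≠ i.succ) ∧
          ∀ v : Fin (n + 1), ∃ m : ℕ, (treeStep j)^[m] v = 0) := by
    apply Finset.filter_congr
    intro j _
    exact Iff.rfl
  rw [hfilt, Finset.mul_sum]
  refine Finset.sum_congr rfl fun j _ => ?_
  have hterm : ∀ i : Fin n,
      Fin.cases (motive := fun _ => R) (-(∑ k : Fin n, A i k)) (fun k => A i k) (j i)
        = -(DetTree.cf A i (j i)) := by
    intro i
    refine Fin.cases ?_ ?_ (j i)
    · simp [DetTree.cf]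
    · intro k
      simp [DetTree.cf]
  rw [Finset.prod_congr rfl fun i _ => hterm i]
  have hneg : ∏ i : Fin n, -(DetTree.cf A i (j i))
      = (-1 : R) ^ n * ∏ i, DetTree.cf A i (j i) := by
    calc ∏ i : Fin n, -(DetTree.cf A i (j i))
        = ∏ i : Fin n, ((-1 : R) * DetTree.cf A i (j i)) :=
          Finset.prod_congr rfl fun i _ => by ring
      _ = (∏ _i : Fin n, (-1 : R)) * ∏ i, DetTree.cf A i (j i) := Finset.prod_mul_distrib
      _ = (-1 : R) ^ n * ∏ i, DetTree.cf A i (j i) := by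
          rw [Finset.prod_const, Finset.card_univ, Fintype.card_fin]
  rw [hneg, ← mul_assoc, ← pow_add, Even.neg_one_pow ⟨n, rfl⟩, one_mul]
end
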